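/- arXiv:2110.08884 — 16 statements merged into one kernel-verified Lean document; each statement's English description precedes it below -/
import Mathlib

section
/- Let E be a finite-dimensional real inner product space, (Ω, 𝓕, μ) a probability space, and ε > 0. Let G : E → Ω → E be such that ω ↦ G(a,ω) is measurable for each a ∈ E, and for all ω ∈ Ω and all a, b ∈ E one has ⟪G(a,ω) − G(b,ω), a − b⟫ ≤ −ε‖a − b‖² and ‖G(a,ω) − G(b,ω)‖ ≤ ε⁻¹‖a − b‖. Suppose there is a measurable map a⋆ : Ω → E with G(a⋆(ω), ω) = 0 for all ω and ∫ ‖a⋆(ω)‖² dμ(ω) < ∞. Then for every a ∈ E the map ω ↦ G(a,ω) is μ-integrable, there exists a unique a ∈ E such that ∫ G(a,ω) dμ(ω) = 0, and this a satisfies ‖a‖ ≤ (1 + ε⁻²) (∫ ‖a⋆(ω)‖² dμ(ω))^{1/2}. -/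
open MeasureTheory
open scoped RealInnerProductSpace

/-- For a parametrized family `G : E → Ω → E` that is, uniformly in the
state `ω`, strongly monotone (with constant `ε`) and Lipschitz (with constant `ε⁻¹`) in the
action, admitting a square-integrable measurable selection `astar` of zeros, the averaged map
`a ↦ ∫ G a ω ∂μ` is well defined (each `G a ·` is integrable), has a unique zero `a`, and this
zero satisfies `‖a‖ ≤ (1 + ε⁻²) (∫ ‖astar ω‖² ∂μ)^(1/2)`. -/
theorem stmt0
    {E : Type*} [NormedAddCommGroup E] [InnerProductSpace ℝ E] [FiniteDimensional ℝ E]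
    [MeasurableSpace E] [BorelSpace E]
    {Ω : Type*} [MeasurableSpace Ω] (μ : Measure Ω) [IsProbabilityMeasure μ]
    (ε : ℝ) (hε : 0 < ε)
    (G : E → Ω → E)
    (hGmeas : ∀ a : E, Measurable (G a))
    (hmono : ∀ ω : Ω, ∀ a b : E, ⟪G a ω - G b ω, a - b⟫ ≤ -ε * ‖a - b‖ ^ 2)
    (hlip : ∀ ω : Ω, ∀ a b : E, ‖G a ω - G b ω‖ ≤ ε⁻¹ * ‖a - b‖)
    (astar : Ω → E) (hastar : Measurable astar)
    (hzero : ∀ ω : Ω, G (astar ω) ω = 0)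
    (hint : Integrable (fun ω => ‖astar ω‖ ^ 2) μ) :
    (∀ a : E, Integrable (fun ω => G a ω) μ) ∧
    (∃! a : E, ∫ ω, G a ω ∂μ = 0) ∧
    (∀ a : E, (∫ ω, G a ω ∂μ = 0) →
      ‖a‖ ≤ (1 + ε⁻¹ ^ 2) * (∫ ω, ‖astar ω‖ ^ 2 ∂μ) ^ (1/2 : ℝ)) := by
  have hεinv : (0:ℝ) < ε⁻¹ := inv_pos.2 hε
  have hεε : ε * ε⁻¹ = 1 := mul_inv_cancel₀ hε.ne'
  -- integrability of ‖astar‖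
  have hastar1 : Integrable (fun ω => ‖astar ω‖) μ := by
    refine ((integrable_const (1:ℝ)).add hint).mono' hastar.norm.aestronglyMeasurable ?_
    filter_upwards with ω
    have h := sq_nonneg (‖astar ω‖ - 1)
    have h0 := norm_nonneg (astar ω)
    simp only [norm_norm, Pi.add_apply]
    nlinarith
  -- each G a · is integrable
  have hGint : ∀ a : E, Integrable (fun ω => G a ω) μ := by
    intro a
    refine ((integrable_const (ε⁻¹ * ‖a‖)).add (hastar1.const_mul ε⁻¹)).mono'
      (hGmeas a).aestronglyMeasurable ?_
    filter_upwards with ω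
    have h1 : ‖G a ω‖ = ‖G a ω - G (astar ω) ω‖ := by rw [hzero ω, sub_zero]
    have h2 := hlip ω a (astar ω)
    have h3 : ‖a - astar ω‖ ≤ ‖a‖ + ‖astar ω‖ := norm_sub_le _ _
    calc ‖G a ω‖ ≤ ε⁻¹ * ‖a - astar ω‖ := by rw [h1]; exact h2
      _ ≤ ε⁻¹ * (‖a‖ + ‖astar ω‖) := by nlinarith
      _ = ε⁻¹ * ‖a‖ + ε⁻¹ * ‖astar ω‖ := by ring
  set F : E → E := fun a => ∫ ω, G a ω ∂μ with hF
  -- monotonicity of F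
  have hFmono : ∀ a b : E, ⟪F a - F b, a - b⟫ ≤ -ε * ‖a - b‖ ^ 2 := by
    intro a b
    have hint' : Integrable (fun ω => G a ω - G b ω) μ := (hGint a).sub (hGint b)
    have hsub : F a - F b = ∫ ω, (G a ω - G b ω) ∂μ := (integral_sub (hGint a) (hGint b)).symm
    have h1 : ⟪F a - F b, a - b⟫ = ∫ ω, ⟪G a ω - G b ω, a - b⟫ ∂μ := by
      rw [hsub, real_inner_comm, ← integral_inner hint']
      simp_rw [real_inner_comm]
    rw [h1]
    have hii : Integrable (fun ω => ⟪G a ω - G b ω, a - b⟫) μ := by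
      simp_rw [real_inner_comm]
      exact (innerSL ℝ (a - b)).integrable_comp hint'
    calc ∫ ω, ⟪G a ω - G b ω, a - b⟫ ∂μ ≤ ∫ _, (-ε * ‖a - b‖ ^ 2) ∂μ :=
          integral_mono hii (integrable_const _) (fun ω => hmono ω a b)
      _ = -ε * ‖a - b‖ ^ 2 := by simp
  -- Lipschitz of F
  have hFlip : ∀ a b : E, ‖F a - F b‖ ≤ ε⁻¹ * ‖a - b‖ := by
    intro a b
    have hint' : Integrable (fun ω => G a ω - G b ω) μ := (hGint a).sub (hGint b)
    have hsub : F a - F b = ∫ ω, (G a ω - G b ω) ∂μ := (integral_sub (hGint a) (hGint b)).symm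
    rw [hsub]
    calc ‖∫ ω, (G a ω - G b ω) ∂μ‖ ≤ ∫ ω, ‖G a ω - G b ω‖ ∂μ :=
          norm_integral_le_integral_norm _
      _ ≤ ∫ _, (ε⁻¹ * ‖a - b‖) ∂μ :=
          integral_mono hint'.norm (integrable_const _) (fun ω => hlip ω a b)
      _ = ε⁻¹ * ‖a - b‖ := by simp
  -- uniqueness of zeros of F
  have huniq : ∀ a b : E, F a = 0 → F b = 0 → a = b := by
    intro a b ha hb
    have h := hFmono a b
    rw [ha, hb, sub_zero, inner_zero_left] at h
    have hab : ‖a - b‖ = 0 := by nlinarith [norm_nonneg (a - b), sq_nonneg ‖a - b‖]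
    rwa [norm_sub_eq_zero_iff] at hab
  -- existence of a zero of F
  have hex : ∃ a : E, F a = 0 := by
    rcases subsingleton_or_nontrivial E with hE | hE
    · exact ⟨0, Subsingleton.elim _ _⟩
    · -- ε ≤ 1
      have hΩ : Nonempty Ω := by
        by_contra h
        rw [not_nonempty_iff] at h
        have h1 : μ Set.univ = 1 := measure_univ
        rw [Set.univ_eq_empty_iff.2 h, measure_empty] at h1
        exact zero_ne_one h1
      obtain ⟨ω₀⟩ := hΩ
      obtain ⟨x, y, hxy⟩ := exists_pair_ne E
      have hε1 : ε ≤ 1 := by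
        have h1 := hmono ω₀ x y
        have h2 := hlip ω₀ x y
        have h3 : 0 < ‖x - y‖ := by
          rw [norm_pos_iff]; exact sub_ne_zero.2 hxy
        have h4 : -⟪G x ω₀ - G y ω₀, x - y⟫ ≤ ‖G x ω₀ - G y ω₀‖ * ‖x - y‖ := by
          have := real_inner_le_norm (G y ω₀ - G x ω₀) (x - y)
          rw [show G y ω₀ - G x ω₀ = -(G x ω₀ - G y ω₀) by abel, inner_neg_left] at this
          calc -⟪G x ω₀ - G y ω₀, x - y⟫ ≤ ‖-(G x ω₀ - G y ω₀)‖ * ‖x - y‖ := by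
                rw [norm_neg] at this ⊢; linarith [this]
            _ = ‖G x ω₀ - G y ω₀‖ * ‖x - y‖ := by rw [norm_neg]
        have h5 : ε * ‖x - y‖ ^ 2 ≤ ε⁻¹ * ‖x - y‖ ^ 2 := by
          nlinarith [mul_le_mul_of_nonneg_right h2 (le_of_lt h3)]
        have h6 : ε ≤ ε⁻¹ :=
          le_of_mul_le_mul_right (by linarith [h5]) (by positivity : (0:ℝ) < ‖x - y‖ ^ 2)
        nlinarith [mul_le_mul_of_nonneg_left h6 hε.le]
      -- contraction T
      set T : E → E := fun a => a + ε ^ 3 • F a with hT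
      have hε4 : 0 ≤ 1 - ε ^ 4 := by
        have := pow_le_one₀ hε.le hε1 (n := 4); linarith
      have hε4' : 0 < ε ^ 4 := pow_pos hε 4
      have key : ∀ a b : E, ‖T a - T b‖ ^ 2 ≤ (1 - ε ^ 4) * ‖a - b‖ ^ 2 := by
        intro a b
        have hTab : T a - T b = (a - b) + ε ^ 3 • (F a - F b) := by
          simp only [hT, smul_sub]; abel
        rw [hTab]
        have h1 := norm_add_sq_real (a - b) (ε ^ 3 • (F a - F b))
        have h2 : ⟪a - b, ε ^ 3 • (F a - F b)⟫ = ε ^ 3 * ⟪F a - F b, a - b⟫ := by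
          rw [real_inner_smul_right, real_inner_comm]
        have h3 : ‖ε ^ 3 • (F a - F b)‖ = ε ^ 3 * ‖F a - F b‖ := by
          rw [norm_smul, Real.norm_eq_abs, abs_of_pos (pow_pos hε 3)]
        have h4 := hFmono a b
        have h5 := hFlip a b
        have h5' : ε ^ 3 * ‖F a - F b‖ ≤ ε ^ 2 * ‖a - b‖ := by
          have h := mul_le_mul_of_nonneg_left h5 (le_of_lt (pow_pos hε 3))
          have he : ε ^ 3 * (ε⁻¹ * ‖a - b‖) = ε ^ 2 * ‖a - b‖ := by
            field_simp
          linarith [he ▸ h]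
        have h6 : (ε ^ 3 * ‖F a - F b‖) ^ 2 ≤ ε ^ 4 * ‖a - b‖ ^ 2 := by
          have := mul_self_le_mul_self (by positivity) h5'
          nlinarith
        rw [h1, h2, h3]
        nlinarith [mul_le_mul_of_nonneg_left h4 (le_of_lt (pow_pos hε 3)), h6]
      set K : NNReal := ⟨Real.sqrt (1 - ε ^ 4), Real.sqrt_nonneg _⟩ with hK
      have hcontr : ContractingWith K T := by
        constructor
        · have : Real.sqrt (1 - ε ^ 4) < 1 := by
            calc Real.sqrt (1 - ε ^ 4) < Real.sqrt 1 := Real.sqrt_lt_sqrt hε4 (by linarith)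
              _ = 1 := Real.sqrt_one
          exact_mod_cast this
        · refine LipschitzWith.of_dist_le_mul fun a b => ?_
          rw [dist_eq_norm, dist_eq_norm]
          have hkey := key a b
          have h1 : ‖T a - T b‖ = Real.sqrt (‖T a - T b‖ ^ 2) :=
            (Real.sqrt_sq (norm_nonneg _)).symm
          rw [h1]
          calc Real.sqrt (‖T a - T b‖ ^ 2) ≤ Real.sqrt ((1 - ε ^ 4) * ‖a - b‖ ^ 2) :=
                Real.sqrt_le_sqrt hkey
            _ = Real.sqrt (1 - ε ^ 4) * ‖a - b‖ := by
                rw [Real.sqrt_mul hε4, Real.sqrt_sq (norm_nonneg _)]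
      have : Nonempty E := ⟨0⟩
      refine ⟨ContractingWith.fixedPoint T hcontr, ?_⟩
      have h : T (ContractingWith.fixedPoint T hcontr) = ContractingWith.fixedPoint T hcontr :=
        hcontr.fixedPoint_isFixedPt
      simp only [hT] at h
      have h2 : ε ^ 3 • F (ContractingWith.fixedPoint T hcontr) = 0 := by
        have := add_eq_left.mp h
        exact this
      rcases smul_eq_zero.mp h2 with h3 | h3
      · exact absurd h3 (by positivity)
      · exact h3
  -- the norm bound
  have hbound : ∀ a : E, F a = 0 → ‖a‖ ≤ (1 + ε⁻¹ ^ 2) * (∫ ω, ‖astar ω‖ ^ 2 ∂μ) ^ (1/2 : ℝ) := by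
    intro a ha
    set m : ℝ := ∫ ω, ‖astar ω‖ ∂μ with hm
    set I2 : ℝ := ∫ ω, ‖astar ω‖ ^ 2 ∂μ with hI2
    have hmn : 0 ≤ m := integral_nonneg fun ω => norm_nonneg _
    have hI2n : 0 ≤ I2 := integral_nonneg fun ω => sq_nonneg _
    -- Cauchy–Schwarz: m ≤ √I2
    have hCS : m ≤ Real.sqrt I2 := by
      have hvar : 0 ≤ ∫ ω, (‖astar ω‖ - m) ^ 2 ∂μ := integral_nonneg fun ω => sq_nonneg _
      have hexp : ∫ ω, (‖astar ω‖ - m) ^ 2 ∂μ = I2 - m ^ 2 := by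
        have heq : (fun ω => (‖astar ω‖ - m) ^ 2)
            = fun ω => (‖astar ω‖ ^ 2 - 2 * m * ‖astar ω‖) + m ^ 2 := by
          funext ω; ring
        have hi2 : Integrable (fun ω => 2 * m * ‖astar ω‖) μ := hastar1.const_mul (2 * m)
        have hi1 : Integrable (fun ω => ‖astar ω‖ ^ 2 - 2 * m * ‖astar ω‖) μ := hint.sub hi2
        rw [heq, integral_add hi1 (integrable_const _),
          integral_sub hint hi2, integral_const_mul, integral_const]
        simp only [measure_univ, probReal_univ, ENNReal.toReal_one, smul_eq_mul, one_mul]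
        rw [← hm, ← hI2]; ring
      rw [hexp] at hvar
      exact (Real.le_sqrt hmn hI2n).2 (by linarith)
    -- ‖F 0‖ ≤ ε⁻¹ * m
    have hF0 : ‖F 0‖ ≤ ε⁻¹ * m := by
      have hle : ∀ ω, ‖G 0 ω‖ ≤ ε⁻¹ * ‖astar ω‖ := by
        intro ω
        have h1 : ‖G 0 ω‖ = ‖G 0 ω - G (astar ω) ω‖ := by rw [hzero ω, sub_zero]
        have h2 := hlip ω 0 (astar ω)
        rw [zero_sub, norm_neg] at h2
        rw [h1]; exact h2
      calc ‖F 0‖ ≤ ∫ ω, ‖G 0 ω‖ ∂μ := norm_integral_le_integral_norm _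
        _ ≤ ∫ ω, ε⁻¹ * ‖astar ω‖ ∂μ :=
            integral_mono (hGint 0).norm (hastar1.const_mul ε⁻¹) hle
        _ = ε⁻¹ * m := by rw [integral_const_mul, hm]
    -- strong monotonicity at 0
    have hkey : ε * ‖a‖ ^ 2 ≤ ‖F 0‖ * ‖a‖ := by
      have h := hFmono a 0
      rw [ha, sub_zero, zero_sub, inner_neg_left] at h
      have h2 := real_inner_le_norm (F 0) a
      linarith
    have hS : Real.sqrt I2 = I2 ^ (1/2 : ℝ) := Real.sqrt_eq_rpow _
    have hSnn : 0 ≤ Real.sqrt I2 := Real.sqrt_nonneg _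
    rw [← hS]
    rcases eq_or_lt_of_le (norm_nonneg a) with hna | hna
    · rw [← hna]; positivity
    · have h1 : ε * ‖a‖ ≤ ‖F 0‖ :=
        le_of_mul_le_mul_right (by linarith [hkey] :
          (ε * ‖a‖) * ‖a‖ ≤ ‖F 0‖ * ‖a‖) hna
      have h2 : ε * ‖a‖ ≤ ε⁻¹ * Real.sqrt I2 := by
        calc ε * ‖a‖ ≤ ‖F 0‖ := h1
          _ ≤ ε⁻¹ * m := hF0
          _ ≤ ε⁻¹ * Real.sqrt I2 := mul_le_mul_of_nonneg_left hCS (le_of_lt hεinv)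
      have h3 : ‖a‖ ≤ ε⁻¹ * (ε⁻¹ * Real.sqrt I2) := by
        have h4 := mul_le_mul_of_nonneg_left h2 (le_of_lt hεinv)
        calc ‖a‖ = ε⁻¹ * (ε * ‖a‖) := by field_simp
          _ ≤ ε⁻¹ * (ε⁻¹ * Real.sqrt I2) := h4
      calc ‖a‖ ≤ ε⁻¹ * (ε⁻¹ * Real.sqrt I2) := h3
        _ = ε⁻¹ ^ 2 * Real.sqrt I2 := by ring
        _ ≤ (1 + ε⁻¹ ^ 2) * Real.sqrt I2 := by linarith [hSnn]
  refine ⟨hGint, ?_, hbound⟩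
  obtain ⟨a, ha⟩ := hex
  exact ⟨a, ha, fun b hb => huniq b a hb ha⟩
end

section
/- Let Ω be a compact metric space, E a finite-dimensional real inner product space, ε > 0, and G : E × Ω → E jointly continuous such that ⟪G(a,ω) − G(b,ω), a − b⟫ ≤ −ε‖a − b‖² for all a, b ∈ E and all ω ∈ Ω. Let (μₙ) and μ be Borel probability measures on Ω with μₙ converging weakly to μ, and let aₙ, a ∈ E satisfy ∫ G(aₙ, ω) dμₙ(ω) = 0 for each n and ∫ G(a, ω) dμ(ω) = 0. Then aₙ → a. -/
open MeasureTheory Filter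
open scoped RealInnerProductSpace

/-- Let `Ω` be a compact metric space, `E` a finite-dimensional real inner
product space, and `G : E × Ω → E` jointly continuous and uniformly strongly monotone in the
action. If Borel probability measures `μₙ` converge weakly to `μ` (tested against all continuous
real functions) and `aₙ`, `a` solve the respective first-order conditions
`∫ G (aₙ, ω) ∂μₙ = 0`, `∫ G (a, ω) ∂μ = 0`, then `aₙ → a`. -/
theorem stmt2
    {Ω : Type*} [MetricSpace Ω] [CompactSpace Ω] [MeasurableSpace Ω] [BorelSpace Ω]
    {E : Type*} [NormedAddCommGroup E] [InnerProductSpace ℝ E] [FiniteDimensional ℝ E]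
    (ε : ℝ) (hε : 0 < ε)
    (G : E × Ω → E) (hG : Continuous G)
    (hmono : ∀ a b : E, ∀ ω : Ω, ⟪G (a, ω) - G (b, ω), a - b⟫ ≤ -ε * ‖a - b‖ ^ 2)
    (μn : ℕ → Measure Ω) (μ : Measure Ω)
    (hμn : ∀ n, IsProbabilityMeasure (μn n)) (hμ : IsProbabilityMeasure μ)
    (hweak : ∀ f : Ω → ℝ, Continuous f →
      Tendsto (fun n => ∫ ω, f ω ∂(μn n)) atTop (nhds (∫ ω, f ω ∂μ)))
    (an : ℕ → E) (a : E)
    (han : ∀ n, ∫ ω, G (an n, ω) ∂(μn n) = 0)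
    (ha : ∫ ω, G (a, ω) ∂μ = 0) :
    Tendsto an atTop (nhds a) := by
  -- continuity of sections
  have hGc : ∀ c : E, Continuous (fun ω => G (c, ω)) := fun c =>
    hG.comp (continuous_const.prodMk continuous_id)
  -- integrability of continuous functions on compact space wrt finite measures
  have hInt : ∀ (c : E) (ν : Measure Ω), IsProbabilityMeasure ν →
      Integrable (fun ω => G (c, ω)) ν := by
    intro c ν hν
    exact (hGc c).integrable_of_hasCompactSupport
      (HasCompactSupport.of_compactSpace _)
  set In : ℕ → E := fun n => ∫ ω, G (a, ω) ∂(μn n) with hIn_def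
  -- In → 0 via coordinates
  have hIn0 : Tendsto In atTop (nhds 0) := by
    let b := stdOrthonormalBasis ℝ E
    have hrepr : ∀ n, In n = ∑ i, (∫ ω, ⟪b i, G (a, ω)⟫ ∂(μn n)) • b i := by
      intro n
      have : ∀ i, ∫ ω, ⟪b i, G (a, ω)⟫ ∂(μn n) = ⟪b i, In n⟫ := fun i =>
        integral_inner (hInt a (μn n) (hμn n)) (b i)
      simp_rw [this]
      exact (b.sum_repr' (In n)).symm
    have hlim : ∀ i, Tendsto (fun n => ∫ ω, ⟪b i, G (a, ω)⟫ ∂(μn n)) atTop (nhds 0) := by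
      intro i
      have hcont : Continuous fun ω => ⟪b i, G (a, ω)⟫ :=
        continuous_const.inner (hGc a)
      have := hweak _ hcont
      rwa [integral_inner (hInt a μ hμ) (b i), ha, inner_zero_right] at this
    have : Tendsto (fun n => ∑ i, (∫ ω, ⟪b i, G (a, ω)⟫ ∂(μn n)) • b i) atTop
        (nhds (∑ i : Fin (Module.finrank ℝ E), (0:ℝ) • b i)) :=
      tendsto_finset_sum _ fun i _ => (hlim i).smul_const (b i)
    simp only [zero_smul, Finset.sum_const_zero] at this
    exact (tendsto_congr hrepr).mpr this
  -- key bound : ε * ‖an n - a‖ ≤ ‖In n‖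
  have key : ∀ n, ε * ‖an n - a‖ ≤ ‖In n‖ := by
    intro n
    haveI := hμn n
    have hint1 := hInt (an n) (μn n) (hμn n)
    have hint2 := hInt a (μn n) (hμn n)
    have hintinner : Integrable (fun ω => ⟪G (an n, ω) - G (a, ω), an n - a⟫) (μn n) := by
      exact (hint1.sub hint2).inner_const _
    have h1 : ∫ ω, ⟪G (an n, ω) - G (a, ω), an n - a⟫ ∂(μn n)
        ≤ -ε * ‖an n - a‖ ^ 2 := by
      have := integral_mono hintinner (integrable_const _) (fun ω => hmono (an n) a ω)
      simpa [integral_const] using this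
    have h2 : ∫ ω, ⟪G (an n, ω) - G (a, ω), an n - a⟫ ∂(μn n)
        = ⟪-In n, an n - a⟫ := by
      have : ∀ ω, ⟪G (an n, ω) - G (a, ω), an n - a⟫
          = ⟪an n - a, G (an n, ω)⟫ - ⟪an n - a, G (a, ω)⟫ := by
        intro ω
        rw [real_inner_comm, inner_sub_right]
      simp_rw [this]
      rw [integral_sub (hint1.const_inner _) (hint2.const_inner _),
        integral_inner hint1, integral_inner hint2, han n, inner_zero_right,
        real_inner_comm]
      simp
      rfl
    rw [h2] at h1
    have h3 : ε * ‖an n - a‖ ^ 2 ≤ ⟪In n, an n - a⟫ := by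
      rw [inner_neg_left] at h1; linarith
    have h4 : ⟪In n, an n - a⟫ ≤ ‖In n‖ * ‖an n - a‖ := real_inner_le_norm _ _
    rcases eq_or_lt_of_le (norm_nonneg (an n - a)) with h | h
    · simp [← h]
    · have := le_trans h3 h4
      nlinarith
  -- conclude
  rw [tendsto_iff_norm_sub_tendsto_zero]
  have hub : Tendsto (fun n => ‖In n‖ / ε) atTop (nhds 0) := by
    have := (continuous_norm.tendsto (0:E)).comp hIn0
    simpa using this.div_const ε
  refine squeeze_zero (fun n => norm_nonneg _) (fun n => ?_) hub
  rw [le_div_iff₀ hε]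
  linarith [key n]
end

section
/- Let E be a finite-dimensional real inner product space and W : E → ℝ differentiable. Let μ be a Borel probability measure on E such that x ↦ ‖x‖ and x ↦ W(x) are μ-integrable, and let b̄ = ∫ x dμ(x) be the barycenter of μ. Then for every a ∈ E: ∫ c(a,x) dμ(x) − ∫ c(b̄,x) dμ(x) = c(a, b̄), where c(u,x) = W(x) − W(u) + ⟪∇W(u), u − x⟫. -/
open MeasureTheory
open scoped RealInnerProductSpace

/-- Let `W : E → ℝ` be differentiable on a finite-dimensional real inner
product space and let `μ` be a Borel probability measure with integrable norm and integrable
`W`, with barycenter `b̄ = ∫ x ∂μ`. Then for the Bregman cost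
`c(u,x) = W x − W u + ⟪∇W u, u − x⟫` and every `a`,
`∫ c(a,x) ∂μ − ∫ c(b̄,x) ∂μ = c(a, b̄)`. -/
theorem stmt3
    {E : Type*} [NormedAddCommGroup E] [InnerProductSpace ℝ E] [FiniteDimensional ℝ E]
    [MeasurableSpace E] [BorelSpace E]
    (W : E → ℝ) (hW : Differentiable ℝ W)
    (μ : Measure E) [IsProbabilityMeasure μ]
    (hnorm : Integrable (fun x => ‖x‖) μ)
    (hWint : Integrable W μ)
    (bbar : E) (hbbar : bbar = ∫ x, x ∂μ)
    (c : E → E → ℝ)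
    (hc : ∀ u x : E, c u x = W x - W u + ⟪gradient W u, u - x⟫) :
    ∀ a : E, (∫ x, c a x ∂μ) - (∫ x, c bbar x ∂μ) = c a bbar := by
  have hx : Integrable (fun x : E => x) μ :=
    (integrable_norm_iff aestronglyMeasurable_id).mp hnorm
  have key : ∀ u : E, (∫ x, c u x ∂μ) =
      (∫ x, W x ∂μ) - W u + (⟪gradient W u, u⟫ - ⟪gradient W u, bbar⟫) := by
    intro u
    have hlin : Integrable (fun x : E => ⟪gradient W u, x⟫) μ :=
      (innerSL ℝ (gradient W u)).integrable_comp hx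
    have h1 : (∫ x, c u x ∂μ)
        = ∫ x, (W x - W u + ⟪gradient W u, u⟫) - ⟪gradient W u, x⟫ ∂μ := by
      congr 1; funext x; rw [hc, inner_sub_right]; ring
    have hs : Integrable (fun x : E => W x - W u) μ := hWint.sub (integrable_const _)
    have hs2 : Integrable (fun x : E => W x - W u + ⟪gradient W u, u⟫) μ :=
      hs.add (integrable_const _)
    rw [h1, integral_sub hs2 hlin]
    have h3 : ∫ x, (W x - W u + ⟪gradient W u, u⟫) ∂μ
        = (∫ x, W x ∂μ) - W u + ⟪gradient W u, u⟫ := by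
      rw [integral_add hs (integrable_const _), integral_sub hWint (integrable_const _),
        integral_const, integral_const]
      simp
    have h2 : ∫ x, ⟪gradient W u, x⟫ ∂μ = ⟪gradient W u, bbar⟫ := by
      rw [hbbar]
      simpa using (innerSL ℝ (gradient W u)).integral_comp_comm hx
    rw [h3, h2]
    ring
  intro a
  rw [key a, key bbar, hc, inner_sub_right]
  simp only [sub_self, inner_zero_right]
  ring
end

section
/- Let E be a finite-dimensional real inner product space, (Ω, 𝓕, μ₀) a probability space, W : E → ℝ differentiable, and g : Ω → E measurable with ‖g‖ and W∘g μ₀-integrable. Define c(u,x) = W(x) − W(u) + ⟪∇W(u), u − x⟫. Let Ξ ⊆ E satisfy the maximality condition: for every b in the closed convex hull of g(Ω) and every δ > 0 there exists u ∈ Ξ with c(u,b) < δ. Let a : Ω → E be measurable such that: (i) a(ω) ∈ Ξ for μ₀-a.e. ω; (ii) for μ₀-a.e. ω, c(a(ω), g(ω)) ≤ c(u, g(ω)) for all u ∈ Ξ; (iii) a equals μ₀-a.e. the conditional expectation of g given the σ-algebra generated by a; (iv) W∘a and ω ↦ ⟪∇W(a(ω)), a(ω) − g(ω)⟫ are μ₀-integrable.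 Then for every measurable b : Ω → E such that b equals μ₀-a.e. the conditional expectation of g given the σ-algebra generated by b, and such that W∘b and ω ↦ ⟪∇W(b(ω)), b(ω) − g(ω)⟫ are μ₀-integrable, one has ∫ W(a(ω)) dμ₀(ω) ≥ ∫ W(b(ω)) dμ₀(ω). -/
open MeasureTheory
open scoped RealInnerProductSpace Classical

section helpers

private lemma measurable_firstIdx {α : Type*} [MeasurableSpace α] {S : ℕ → Set α}
    (hS : ∀ n, MeasurableSet (S n)) :
    Measurable (fun x => if h : ∃ m, x ∈ S m then Nat.find h + 1 else 0) := by
  apply measurable_to_countable'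
  intro n
  match n with
  | 0 =>
    have heq : (fun x => if h : ∃ m, x ∈ S m then Nat.find h + 1 else 0) ⁻¹' {0}
        = (⋃ m, S m)ᶜ := by
      ext x
      by_cases h : ∃ m, x ∈ S m
      · simp [h]
      · push_neg at h
        simp [h]
    rw [heq]; exact (MeasurableSet.iUnion hS).compl
  | n + 1 =>
    have heq : (fun x => if h : ∃ m, x ∈ S m then Nat.find h + 1 else 0) ⁻¹' {n + 1}
        = S n ∩ ⋂ j ∈ Finset.range n, (S j)ᶜ := by
      ext x
      by_cases h : ∃ m, x ∈ S m
      · simp only [Set.mem_preimage, Set.mem_singleton_iff, dif_pos h,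
          Nat.add_right_cancel_iff, Set.mem_inter_iff, Set.mem_iInter, Set.mem_compl_iff,
          Finset.mem_range]
        rw [Nat.find_eq_iff h]
      · simp only [Set.mem_preimage, Set.mem_singleton_iff, dif_neg h, Set.mem_inter_iff]
        constructor
        · omega
        · rintro ⟨hx, -⟩; exact absurd ⟨n, hx⟩ h
    rw [heq]
    exact (hS n).inter (MeasurableSet.biInter (Set.to_countable _)
      (fun j _ => (hS j).compl))

variable {E : Type*} [NormedAddCommGroup E] [InnerProductSpace ℝ E] [FiniteDimensional ℝ E]
    [MeasurableSpace E] [BorelSpace E]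
    {Ω : Type*} [MeasurableSpace Ω] {μ₀ : Measure Ω} [IsProbabilityMeasure μ₀]

set_option linter.unusedSectionVars false

/-- If `b = E[g | σ(b)]` a.e., `ι : E → ℕ` is measurable, `v : ℕ → E`, `F` is integrable and
`F ω ≤ ⟪v (ι (b ω)), b ω - g ω⟫` a.e., then `∫ F ≤ 0`. -/
private lemma negpart_aux {g b : Ω → E} (hb : Measurable b) (hgi : Integrable g μ₀)
    (hbcond : b =ᵐ[μ₀] μ₀[g | MeasurableSpace.comap b inferInstance])
    {ι : E → ℕ} (hι : Measurable ι) (v : ℕ → E)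
    {F : Ω → ℝ} (hF : Integrable F μ₀)
    (hle : ∀ᵐ ω ∂μ₀, F ω ≤ ⟪v (ι (b ω)), b ω - g ω⟫) :
    ∫ ω, F ω ∂μ₀ ≤ 0 := by
  have hm : MeasurableSpace.comap b inferInstance ≤ _ := hb.comap_le
  have hbi : Integrable b μ₀ := integrable_condExp.congr hbcond.symm
  set A : ℕ → Set Ω := fun n => (fun ω => ι (b ω)) ⁻¹' {n} with hA
  have hAmeas : ∀ n, MeasurableSet (A n) := fun n => (hι.comp hb) (measurableSet_singleton n)
  have hAdisj : Pairwise (Function.onFun Disjoint A) := by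
    intro m n hmn
    rw [Function.onFun, Set.disjoint_left]
    intro ω h1 h2
    exact hmn (by rw [← h1, ← h2])
  have hAunion : (⋃ n, A n) = Set.univ := by
    ext ω; simp [hA]
  have hbg : Integrable (fun ω => b ω - g ω) μ₀ := hbi.sub hgi
  have hkey : ∀ n, ∫ ω in A n, (b ω - g ω) ∂μ₀ = 0 := by
    intro n
    have hAm : MeasurableSet[MeasurableSpace.comap b inferInstance] (A n) :=
      ⟨ι ⁻¹' {n}, hι (measurableSet_singleton n), rfl⟩
    have h1 : ∫ ω in A n, b ω ∂μ₀ = ∫ ω in A n, g ω ∂μ₀ := by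
      calc ∫ ω in A n, b ω ∂μ₀
          = ∫ ω in A n, (μ₀[g | MeasurableSpace.comap b inferInstance]) ω ∂μ₀ :=
            setIntegral_congr_ae (hm _ hAm) (hbcond.mono fun ω h _ => h)
        _ = ∫ ω in A n, g ω ∂μ₀ := setIntegral_condExp hm hgi hAm
    rw [integral_sub hbi.integrableOn hgi.integrableOn, h1, sub_self]
  have hterm : ∀ n, ∫ ω in A n, F ω ∂μ₀ ≤ 0 := by
    intro n
    have h2 : ∫ ω in A n, ⟪v n, b ω - g ω⟫ ∂μ₀ = 0 := by
      rw [integral_inner hbg.integrableOn (v n), hkey n, inner_zero_right]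
    refine le_trans (setIntegral_mono_ae_restrict hF.integrableOn
      (hbg.const_inner (v n)).integrableOn ?_) h2.le
    filter_upwards [ae_restrict_of_ae hle, ae_restrict_mem (hAmeas n)] with ω h1 h2
    have hn : ι (b ω) = n := h2
    rwa [hn] at h1
  calc ∫ ω, F ω ∂μ₀ = ∫ ω in ⋃ n, A n, F ω ∂μ₀ := by rw [hAunion, Measure.restrict_univ]
    _ = ∑' n, ∫ ω in A n, F ω ∂μ₀ := integral_iUnion hAmeas hAdisj (hAunion ▸ hF.integrableOn)
    _ ≤ 0 := tsum_nonpos hterm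

/-- Any measurable map into a (separable) finite-dimensional space can be uniformly
`ε`-approximated by a countably-valued measurable map. -/
private lemma exists_countable_approx {h : E → E} (hh : Measurable h) {ε : ℝ} (hε : 0 < ε) :
    ∃ ι : E → ℕ, Measurable ι ∧ ∃ v : ℕ → E, ∀ x, ‖v (ι x) - h x‖ ≤ ε := by
  have : Nonempty E := ⟨0⟩
  obtain ⟨e, he⟩ := TopologicalSpace.exists_dense_seq E
  have hex : ∀ x : E, ∃ n, h x ∈ Metric.ball (e n) ε := by
    intro x
    obtain ⟨n, hn⟩ := he.exists_dist_lt (h x) hε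
    exact ⟨n, by simpa [Metric.mem_ball] using hn⟩
  refine ⟨fun x => Nat.find (hex x), ?_, e, fun x => ?_⟩
  · exact measurable_find hex fun k => hh Metric.isOpen_ball.measurableSet
  · have hsp := Nat.find_spec (hex x)
    rw [Metric.mem_ball] at hsp
    rw [← dist_eq_norm, dist_comm]
    exact hsp.le

private lemma measurable_gradient' (W : E → ℝ) : Measurable (fun x => gradient W x) := by
  have h1 : Measurable (fderiv ℝ W) := measurable_fderiv ℝ W
  exact ((InnerProductSpace.toDual ℝ E).symm.continuous.measurable).comp h1

/-- If `b = E[g | σ(b)]` a.e. then `∫ ⟪∇W (b ω), b ω - g ω⟫ = 0` provided the integrand is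
integrable. -/
private lemma integral_inner_grad_zero (W : E → ℝ)
    {g b : Ω → E} (hb : Measurable b) (hgi : Integrable g μ₀)
    (hbcond : b =ᵐ[μ₀] μ₀[g | MeasurableSpace.comap b inferInstance])
    (hint : Integrable (fun ω => ⟪gradient W (b ω), b ω - g ω⟫) μ₀) :
    ∫ ω, ⟪gradient W (b ω), b ω - g ω⟫ ∂μ₀ = 0 := by
  have hbi : Integrable b μ₀ := integrable_condExp.congr hbcond.symm
  have hbg : Integrable (fun ω => b ω - g ω) μ₀ := hbi.sub hgi
  have hnormint : Integrable (fun ω => ‖b ω - g ω‖) μ₀ := hbg.norm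
  set C := ∫ ω, ‖b ω - g ω‖ ∂μ₀ with hC
  have hC0 : 0 ≤ C := integral_nonneg fun ω => norm_nonneg _
  set I := ∫ ω, ⟪gradient W (b ω), b ω - g ω⟫ ∂μ₀ with hI
  have key : ∀ ε : ℝ, 0 < ε → |I| ≤ ε * C := by
    intro ε hε
    obtain ⟨ι, hι, v, hv⟩ := exists_countable_approx (measurable_gradient' W) hε
    have hbound : ∀ ω, |⟪gradient W (b ω), b ω - g ω⟫ - ⟪v (ι (b ω)), b ω - g ω⟫|
        ≤ ε * ‖b ω - g ω‖ := by
      intro ω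
      rw [← inner_sub_left]
      calc |⟪gradient W (b ω) - v (ι (b ω)), b ω - g ω⟫|
          ≤ ‖gradient W (b ω) - v (ι (b ω))‖ * ‖b ω - g ω‖ := abs_real_inner_le_norm _ _
        _ ≤ ε * ‖b ω - g ω‖ := by
            apply mul_le_mul_of_nonneg_right _ (norm_nonneg _)
            rw [norm_sub_rev]
            exact hv (b ω)
    have hεn : Integrable (fun ω => ε * ‖b ω - g ω‖) μ₀ := hnormint.const_mul ε
    have hup : I - ε * C ≤ 0 := by
      have h1 : ∫ ω, (⟪gradient W (b ω), b ω - g ω⟫ - ε * ‖b ω - g ω‖) ∂μ₀ ≤ 0 := by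
        refine negpart_aux hb hgi hbcond hι v (hint.sub hεn) ?_
        filter_upwards with ω
        have h2 := abs_le.mp (hbound ω)
        linarith [h2.2]
      rw [integral_sub hint hεn, integral_const_mul] at h1
      simpa [hI, hC] using h1
    have hintneg : Integrable (fun ω => -⟪gradient W (b ω), b ω - g ω⟫) μ₀ := hint.neg
    have hlo : -I - ε * C ≤ 0 := by
      have h1 : ∫ ω, (-⟪gradient W (b ω), b ω - g ω⟫ - ε * ‖b ω - g ω‖) ∂μ₀ ≤ 0 := by
        refine negpart_aux hb hgi hbcond hι (fun n => -(v n)) (hintneg.sub hεn) ?_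
        filter_upwards with ω
        have h2 := abs_le.mp (hbound ω)
        have h3 : ⟪-(v (ι (b ω))), b ω - g ω⟫ = -⟪v (ι (b ω)), b ω - g ω⟫ := by
          rw [inner_neg_left]
        rw [h3]
        linarith [h2.1]
      rw [integral_sub hintneg hεn, integral_neg, integral_const_mul] at h1
      simpa [hI, hC] using h1
    rw [abs_le]
    constructor <;> linarith
  by_contra hne
  have habs : 0 < |I| := abs_pos.mpr hne
  have hk := key (|I| / (2 * (C + 1))) (by positivity)
  have hfrac : |I| / (2 * (C + 1)) * C < |I| := by
    rw [div_mul_eq_mul_div, div_lt_iff₀ (by positivity)]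
    nlinarith
  linarith

/-- Under a continuous linear functional, a feasible policy `b = E[g | σ(b)]` a.e. satisfies
any lower bound satisfied by `g`. -/
private lemma ae_le_clm {g b : Ω → E} (hb : Measurable b) (hgi : Integrable g μ₀)
    (hbcond : b =ᵐ[μ₀] μ₀[g | MeasurableSpace.comap b inferInstance])
    (f : E →L[ℝ] ℝ) (v : ℝ) (hK : ∀ ω, v < f (g ω)) :
    ∀ᵐ ω ∂μ₀, v ≤ f (b ω) := by
  have hm : MeasurableSpace.comap b inferInstance ≤ _ := hb.comap_le
  have hbi : Integrable b μ₀ := integrable_condExp.congr hbcond.symm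
  have hfb : Integrable (fun ω => f (b ω)) μ₀ := f.integrable_comp hbi
  have hfg : Integrable (fun ω => f (g ω)) μ₀ := f.integrable_comp hgi
  set A : ℕ → Set Ω := fun k => {ω | f (b ω) ≤ v - 1/(k+1)} with hA
  have hAm : ∀ k, MeasurableSet[MeasurableSpace.comap b inferInstance] (A k) := by
    intro k
    exact ⟨{x | f x ≤ v - 1/(k+1)},
      measurableSet_le f.continuous.measurable measurable_const, rfl⟩
  have hA0 : ∀ k, μ₀ (A k) = 0 := by
    intro k
    by_contra hne
    have hAms : MeasurableSet (A k) := hm _ (hAm k)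
    have hpos : 0 < (μ₀ (A k)).toReal :=
      ENNReal.toReal_pos hne (measure_ne_top _ _)
    have h1 : ∫ ω in A k, f (b ω) ∂μ₀ = ∫ ω in A k, f (g ω) ∂μ₀ := by
      have hbg : ∫ ω in A k, b ω ∂μ₀ = ∫ ω in A k, g ω ∂μ₀ := by
        calc ∫ ω in A k, b ω ∂μ₀
            = ∫ ω in A k, (μ₀[g | MeasurableSpace.comap b inferInstance]) ω ∂μ₀ :=
              setIntegral_congr_ae hAms (hbcond.mono fun ω h _ => h)
          _ = ∫ ω in A k, g ω ∂μ₀ := setIntegral_condExp hm hgi (hAm k)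
      calc ∫ ω in A k, f (b ω) ∂μ₀ = f (∫ ω in A k, b ω ∂μ₀) :=
            f.integral_comp_comm hbi.integrableOn
        _ = f (∫ ω in A k, g ω ∂μ₀) := by rw [hbg]
        _ = ∫ ω in A k, f (g ω) ∂μ₀ := (f.integral_comp_comm hgi.integrableOn).symm
    have h2 : ∫ ω in A k, f (b ω) ∂μ₀ ≤ (v - 1/(k+1)) * (μ₀ (A k)).toReal := by
      have := setIntegral_mono_on hfb.integrableOn
        (integrableOn_const (measure_ne_top _ _)) hAms
        (fun ω hω => hω)
      simpa [integral_const, smul_eq_mul, mul_comm, Measure.real] using this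
    have h3 : v * (μ₀ (A k)).toReal ≤ ∫ ω in A k, f (g ω) ∂μ₀ :=
      setIntegral_ge_of_const_le_real hAms (measure_ne_top _ _) (fun ω _ => (hK ω).le)
        hfg.integrableOn
    have hd : 0 < 1/((k:ℝ)+1) := by positivity
    nlinarith
  have hsub : {ω | f (b ω) < v} ⊆ ⋃ k, A k := by
    intro ω hω
    obtain ⟨k, hk⟩ := exists_nat_one_div_lt (K := ℝ) (sub_pos.mpr hω)
    refine Set.mem_iUnion.mpr ⟨k, ?_⟩
    simp only [hA, Set.mem_setOf_eq]
    linarith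
  have hnull : μ₀ {ω | f (b ω) < v} = 0 :=
    measure_mono_null hsub (measure_iUnion_null hA0)
  rw [ae_iff]
  convert hnull using 2
  ext ω
  simp [not_le]

/-- A feasible policy takes values a.e. in the closed convex hull of the range of `g`. -/
private lemma condexp_mem_closedHull {g b : Ω → E} (hb : Measurable b)
    (hgi : Integrable g μ₀)
    (hbcond : b =ᵐ[μ₀] μ₀[g | MeasurableSpace.comap b inferInstance]) :
    ∀ᵐ ω ∂μ₀, b ω ∈ closure (convexHull ℝ (Set.range g)) := by
  set K := closure (convexHull ℝ (Set.range g)) with hKdef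
  have hKclosed : IsClosed K := isClosed_closure
  have hKconv : Convex ℝ K := (convex_convexHull ℝ _).closure
  have hgK : ∀ ω, g ω ∈ K := fun ω => subset_closure (subset_convexHull ℝ _ ⟨ω, rfl⟩)
  have : Nonempty E := ⟨0⟩
  obtain ⟨e, he⟩ := TopologicalSpace.exists_dense_seq E
  set P : ℕ × ℕ → Prop := fun p => Disjoint (Metric.closedBall (e p.1) (1/(p.2+1))) K
    with hP
  have hsep : ∀ p : ℕ × ℕ, P p → ∃ f : E →L[ℝ] ℝ, ∃ u v : ℝ,
      (∀ x ∈ Metric.closedBall (e p.1) (1/(p.2+1)), f x < u) ∧ u < v ∧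
        ∀ y ∈ K, v < f y := by
    intro p hp
    exact geometric_hahn_banach_compact_closed (convex_closedBall _ _)
      (isCompact_closedBall _ _) hKconv hKclosed hp
  choose! f u v hfu huv hfv using hsep
  have hae : ∀ᵐ ω ∂μ₀, ∀ p : ℕ × ℕ, P p → v p ≤ f p (b ω) := by
    rw [ae_all_iff]
    intro p
    by_cases hp : P p
    · have hlt : ∀ ω, v p < f p (g ω) := fun ω => hfv p hp _ (hgK ω)
      filter_upwards [ae_le_clm hb hgi hbcond (f p) (v p) hlt] with ω h _
      exact h
    · filter_upwards with ω h
      exact absurd h hp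
  filter_upwards [hae] with ω hω
  by_contra hmem
  obtain ⟨ρ, hρ, hball⟩ := Metric.isOpen_iff.mp hKclosed.isOpen_compl _ hmem
  obtain ⟨k, hk⟩ := exists_nat_one_div_lt (K := ℝ) (half_pos hρ)
  obtain ⟨n, hn⟩ := he.exists_dist_lt (b ω) (show (0:ℝ) < 1/(k+1) by positivity)
  have hPnk : P (n, k) := by
    simp only [hP]
    rw [Set.disjoint_left]
    intro y hy hyK
    have hd1 : dist y (e n) ≤ 1/(k+1) := Metric.mem_closedBall.mp hy
    have hd2 : dist (e n) (b ω) < 1/(k+1) := by rw [dist_comm]; exact hn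
    have : dist y (b ω) < ρ := by
      calc dist y (b ω) ≤ dist y (e n) + dist (e n) (b ω) := dist_triangle _ _ _
        _ < ρ := by linarith
    exact hball (Metric.mem_ball.mpr this) hyK
  have hmemball : b ω ∈ Metric.closedBall (e n) (1/(k+1)) :=
    Metric.mem_closedBall.mpr hn.le
  have h1 := hfu (n, k) hPnk _ hmemball
  have h2 := huv (n, k) hPnk
  have h3 := hω (n, k) hPnk
  linarith

/-- Measurable countably-valued `δ`-optimal selection of points of `Ξ` over `K`. -/
private lemma exists_selection (W : E → ℝ) (hW : Differentiable ℝ W) (c : E → E → ℝ)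
    (hc : ∀ u x : E, c u x = W x - W u + ⟪gradient W u, u - x⟫)
    (Ξ : Set E) (K : Set E)
    (hmax : ∀ x ∈ K, ∀ δ : ℝ, 0 < δ → ∃ u ∈ Ξ, c u x < δ)
    (u₀ : E) (hu₀ : u₀ ∈ Ξ) {δ : ℝ} (hδ : 0 < δ) :
    ∃ ι : E → ℕ, Measurable ι ∧ ∃ w : ℕ → E,
      ∀ x ∈ K, w (ι x) ∈ Ξ ∧ c (w (ι x)) x < δ := by
  have : Nonempty E := ⟨0⟩
  obtain ⟨e, he⟩ := TopologicalSpace.exists_dense_seq E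
  have hcont : ∀ u, Continuous (c u) := by
    intro u
    have hcu : c u = fun x => W x - W u + ⟪gradient W u, u - x⟫ := funext (hc u)
    rw [hcu]
    exact (hW.continuous.sub continuous_const).add
      (continuous_const.inner (continuous_const.sub continuous_id))
  set q : ℕ → ℕ × ℕ := fun m => (Denumerable.eqv (ℕ × ℕ)).symm m with hq
  set Good : ℕ × ℕ → Prop :=
    fun p => ∃ u ∈ Ξ, ∀ y ∈ Metric.ball (e p.1) (1/(p.2+1)), c u y < δ with hGoodDef
  choose! sel hselΞ hselc using fun p (hp : Good p) => hp
  set S : ℕ → Set E := fun m =>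
    if Good (q m) then Metric.ball (e (q m).1) (1/((q m).2+1)) else ∅ with hS
  have hSmeas : ∀ m, MeasurableSet (S m) := by
    intro m
    by_cases h : Good (q m) <;> simp [hS, h, Metric.isOpen_ball.measurableSet]
  refine ⟨fun x => if h : ∃ m, x ∈ S m then Nat.find h + 1 else 0,
    measurable_firstIdx hSmeas, fun m => Nat.casesOn m u₀ (fun m' => sel (q m')), ?_⟩
  intro x hx
  have hcov : ∃ m, x ∈ S m := by
    obtain ⟨u, huΞ, huc⟩ := hmax x hx δ hδ
    obtain ⟨ρ, hρ, hball⟩ := Metric.isOpen_iff.mp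
      (isOpen_lt (hcont u) continuous_const) x huc
    obtain ⟨k, hk⟩ := exists_nat_one_div_lt (K := ℝ) (half_pos hρ)
    obtain ⟨n, hn⟩ := he.exists_dist_lt x (show (0:ℝ) < 1/(k+1) by positivity)
    have hGoodnk : Good (n, k) := by
      refine ⟨u, huΞ, fun y hy => hball ?_⟩
      rw [Metric.mem_ball] at hy ⊢
      have : dist (e n) x < 1/(k+1) := by rw [dist_comm]; exact hn
      calc dist y x ≤ dist y (e n) + dist (e n) x := dist_triangle _ _ _
        _ < ρ := by linarith
    refine ⟨Denumerable.eqv (ℕ × ℕ) (n, k), ?_⟩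
    have hqm : q (Denumerable.eqv (ℕ × ℕ) (n, k)) = (n, k) := by
      simp [hq]
    rw [hS]
    simp only [hqm, hGoodnk, if_true]
    exact Metric.mem_ball.mpr hn
  simp only [dif_pos hcov]
  have hxS : x ∈ S (Nat.find hcov) := Nat.find_spec hcov
  have hxS' : x ∈ (if Good (q (Nat.find hcov)) then
      Metric.ball (e (q (Nat.find hcov)).1) (1/((q (Nat.find hcov)).2+1)) else ∅) := hxS
  have hGoodm : Good (q (Nat.find hcov)) := by
    by_contra h
    simp only [h, if_false] at hxS'
    exact hxS'
  have hxball : x ∈ Metric.ball (e (q (Nat.find hcov)).1) (1/((q (Nat.find hcov)).2+1)) := by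
    simpa only [hGoodm, if_true] using hxS'
  exact ⟨hselΞ _ hGoodm, hselc _ hGoodm x hxball⟩

end helpers

/-- **Maximality is sufficient for optimality in moment persuasion.**
Let `W : E → ℝ` be differentiable, `g : Ω → E` measurable with integrable norm and
integrable `W ∘ g`, and let `c(u,x) = W x − W u + ⟪∇W u, u − x⟫` be the Bregman cost.
Suppose `Ξ ⊆ E` is maximal over the closed convex hull of `g(Ω)` (the infimum of `c(·,b)`
over `Ξ` is `≤ 0` there), and `a : Ω → E` is a measurable policy taking values in `Ξ` a.e.,
Bregman-projecting `g(ω)` onto `Ξ` a.e., equal a.e. to the conditional expectation of `g`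
given σ(a), with the relevant integrability. Then `a` is optimal: it attains at least the
expected value of `W` of any feasible policy `b` (one with `b = E[g | σ(b)]` a.e. and the
analogous integrability). -/
theorem stmt4
    {E : Type*} [NormedAddCommGroup E] [InnerProductSpace ℝ E] [FiniteDimensional ℝ E]
    [MeasurableSpace E] [BorelSpace E]
    {Ω : Type*} [MeasurableSpace Ω] (μ₀ : Measure Ω) [IsProbabilityMeasure μ₀]
    (W : E → ℝ) (hW : Differentiable ℝ W)
    (g : Ω → E) (hg : Measurable g)
    (hgnorm : Integrable (fun ω => ‖g ω‖) μ₀)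
    (hWg : Integrable (fun ω => W (g ω)) μ₀)
    (c : E → E → ℝ)
    (hc : ∀ u x : E, c u x = W x - W u + ⟪gradient W u, u - x⟫)
    (Ξ : Set E)
    (hmax : ∀ b ∈ closure (convexHull ℝ (Set.range g)), ∀ δ : ℝ, 0 < δ →
      ∃ u ∈ Ξ, c u b < δ)
    (a : Ω → E) (hameas : Measurable a)
    (haΞ : ∀ᵐ ω ∂μ₀, a ω ∈ Ξ)
    (haproj : ∀ᵐ ω ∂μ₀, ∀ u ∈ Ξ, c (a ω) (g ω) ≤ c u (g ω))
    (hacond : a =ᵐ[μ₀] μ₀[g | MeasurableSpace.comap a inferInstance])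
    (haint₁ : Integrable (fun ω => W (a ω)) μ₀)
    (haint₂ : Integrable (fun ω => ⟪gradient W (a ω), a ω - g ω⟫) μ₀) :
    ∀ b : Ω → E, Measurable b →
      b =ᵐ[μ₀] μ₀[g | MeasurableSpace.comap b inferInstance] →
      Integrable (fun ω => W (b ω)) μ₀ →
      Integrable (fun ω => ⟪gradient W (b ω), b ω - g ω⟫) μ₀ →
      ∫ ω, W (b ω) ∂μ₀ ≤ ∫ ω, W (a ω) ∂μ₀ := by
  intro b hbmeas hbcond hbint₁ hbint₂
  have hgi : Integrable g μ₀ := (integrable_norm_iff hg.aestronglyMeasurable).mp hgnorm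
  have hZa : ∫ ω, ⟪gradient W (a ω), a ω - g ω⟫ ∂μ₀ = 0 :=
    integral_inner_grad_zero W hameas hgi hacond haint₂
  have hbK : ∀ᵐ ω ∂μ₀, b ω ∈ closure (convexHull ℝ (Set.range g)) :=
    condexp_mem_closedHull hbmeas hgi hbcond
  have hΩne : Nonempty Ω := by
    by_contra h
    rw [not_nonempty_iff] at h
    have h0 : μ₀ Set.univ = 0 := by
      rw [Set.univ_eq_empty_iff.mpr h]
      exact measure_empty
    rw [measure_univ] at h0
    exact one_ne_zero h0
  obtain ⟨u₀, hu₀, -⟩ := hmax (g (Classical.arbitrary Ω))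
    (subset_closure (subset_convexHull ℝ _ ⟨_, rfl⟩)) 1 one_pos
  have main : ∀ δ : ℝ, 0 < δ → ∫ ω, W (b ω) ∂μ₀ ≤ ∫ ω, W (a ω) ∂μ₀ + δ := by
    intro δ hδ
    obtain ⟨ι, hι, w, hw⟩ := exists_selection W hW c hc Ξ
      (closure (convexHull ℝ (Set.range g))) hmax u₀ hu₀ hδ
    have hFint : Integrable
        (fun ω => W (b ω) - W (a ω) + ⟪gradient W (a ω), a ω - g ω⟫ - δ) μ₀ :=
      ((hbint₁.sub haint₁).add haint₂).sub (integrable_const δ)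
    have hFle : ∀ᵐ ω ∂μ₀,
        (W (b ω) - W (a ω) + ⟪gradient W (a ω), a ω - g ω⟫ - δ)
          ≤ ⟪(fun n => gradient W (w n)) (ι (b ω)), b ω - g ω⟫ := by
      filter_upwards [hbK, haproj] with ω hωK hωproj
      obtain ⟨huΞ, huc⟩ := hw (b ω) hωK
      have h1 := hωproj (w (ι (b ω))) huΞ
      rw [hc, hc] at h1
      rw [hc] at huc
      have hid : ⟪gradient W (w (ι (b ω))), w (ι (b ω)) - g ω⟫
          - ⟪gradient W (w (ι (b ω))), w (ι (b ω)) - b ω⟫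
          = ⟪gradient W (w (ι (b ω))), b ω - g ω⟫ := by
        rw [← inner_sub_right]
        congr 1
        abel
      show W (b ω) - W (a ω) + ⟪gradient W (a ω), a ω - g ω⟫ - δ
          ≤ ⟪gradient W (w (ι (b ω))), b ω - g ω⟫
      linarith
    have hneg := negpart_aux hbmeas hgi hbcond hι (fun n => gradient W (w n)) hFint hFle
    have hcalc : ∫ ω, (W (b ω) - W (a ω) + ⟪gradient W (a ω), a ω - g ω⟫ - δ) ∂μ₀
        = ∫ ω, W (b ω) ∂μ₀ - ∫ ω, W (a ω) ∂μ₀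
          + ∫ ω, ⟪gradient W (a ω), a ω - g ω⟫ ∂μ₀ - δ := by
      have haux2 : Integrable (fun ω => W (b ω) - W (a ω)) μ₀ := hbint₁.sub haint₁
      have haux : Integrable
          (fun ω => W (b ω) - W (a ω) + ⟪gradient W (a ω), a ω - g ω⟫) μ₀ :=
        haux2.add haint₂
      rw [integral_sub haux (integrable_const δ),
        integral_add haux2 haint₂, integral_sub hbint₁ haint₁,
        integral_const]
      simp [measure_univ]
    rw [hcalc, hZa] at hneg
    linarith
  by_contra hcon
  push_neg at hcon
  have := main ((∫ ω, W (b ω) ∂μ₀ - ∫ ω, W (a ω) ∂μ₀) / 2) (by linarith)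
  linarith
end

section
/- Let X and Ω be measurable spaces, μ a probability measure on Ω, T : Ω → X measurable, and c : X × Ω → ℝ measurable. Suppose there exist measurable functions ψ : X → ℝ and φ : Ω → ℝ with ψ(Tω) integrable with respect to μ and φ integrable with respect to μ, such that ψ(x) + φ(ω) ≤ c(x, ω) for all (x, ω) ∈ X × Ω, and ψ(T(ω)) + φ(ω) = c(T(ω), ω) for μ-a.e. ω. Then for every probability measure π on X × Ω whose second marginal is μ and whose first marginal is the pushforward of μ under T, and for which c is π-integrable, one has ∫ c dπ ≥ ∫ c(T(ω), ω) dμ(ω). In particular, the coupling induced by the map T (the pushforward of μ under ω ↦ (T(ω), ω)) minimizes the total cost among all couplings with these marginals. -/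
open MeasureTheory

/-- **The policy map solves the Monge/Kantorovich problem.**
Suppose dual potentials `ψ : X → ℝ`, `φ : Ω → ℝ` satisfy `ψ x + φ ω ≤ c (x, ω)` everywhere
with equality `μ`-a.e. along the graph of `T`. Then every coupling `π` on `X × Ω` with
second marginal `μ` and first marginal the pushforward of `μ` under `T`, for which `c` is
`π`-integrable, has total cost at least `∫ c (T ω, ω) ∂μ`; and the coupling induced by `T`
attains exactly this cost. -/
theorem stmt6
    {X Ω : Type*} [MeasurableSpace X] [MeasurableSpace Ω]
    (μ : Measure Ω) [IsProbabilityMeasure μ]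
    (T : Ω → X) (hT : Measurable T)
    (c : X × Ω → ℝ) (hc : Measurable c)
    (ψ : X → ℝ) (φ : Ω → ℝ) (hψ : Measurable ψ) (hφ : Measurable φ)
    (hψint : Integrable (fun ω => ψ (T ω)) μ)
    (hφint : Integrable φ μ)
    (hle : ∀ (x : X) (ω : Ω), ψ x + φ ω ≤ c (x, ω))
    (heq : ∀ᵐ ω ∂μ, ψ (T ω) + φ ω = c (T ω, ω)) :
    (∀ π : Measure (X × Ω), IsProbabilityMeasure π →
      π.map Prod.snd = μ → π.map Prod.fst = μ.map T →
      Integrable c π →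
      ∫ ω, c (T ω, ω) ∂μ ≤ ∫ p, c p ∂π) ∧
    ((μ.map (fun ω => (T ω, ω))).map Prod.snd = μ ∧
     (μ.map (fun ω => (T ω, ω))).map Prod.fst = μ.map T ∧
     ∫ p, c p ∂(μ.map (fun ω => (T ω, ω))) = ∫ ω, c (T ω, ω) ∂μ) := by

  have hTpair : Measurable (fun ω => (T ω, ω)) := hT.prodMk measurable_id
  constructor
  · intro π hπ hsnd hfst hcint
    -- ∫ c(Tω,ω) dμ = ∫ ψ∘T + φ dμ
    have h1 : ∫ ω, c (T ω, ω) ∂μ = ∫ ω, (ψ (T ω) + φ ω) ∂μ :=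
      (integral_congr_ae (heq.mono fun ω h => h.symm)).symm ▸ rfl
    have hψπ : Integrable (fun p : X × Ω => ψ p.1) π := by
      have : Integrable ψ (π.map Prod.fst) := by
        rw [hfst]
        exact (integrable_map_measure hψ.aestronglyMeasurable hT.aemeasurable).2 hψint
      exact (integrable_map_measure hψ.aestronglyMeasurable measurable_fst.aemeasurable).1 this
    have hφπ : Integrable (fun p : X × Ω => φ p.2) π := by
      have : Integrable φ (π.map Prod.snd) := by rw [hsnd]; exact hφint
      exact (integrable_map_measure hφ.aestronglyMeasurable measurable_snd.aemeasurable).1 this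
    have h2 : ∫ ω, (ψ (T ω) + φ ω) ∂μ = ∫ p, (ψ p.1 + φ p.2) ∂π := by
      rw [integral_add hψπ hφπ, integral_add hψint hφint]
      congr 1
      · rw [← integral_map hT.aemeasurable hψ.aestronglyMeasurable, ← hfst,
          integral_map measurable_fst.aemeasurable hψ.aestronglyMeasurable]
      · rw [← hsnd, integral_map measurable_snd.aemeasurable hφ.aestronglyMeasurable]
    calc ∫ ω, c (T ω, ω) ∂μ = ∫ p, (ψ p.1 + φ p.2) ∂π := by rw [h1, h2]
      _ ≤ ∫ p, c p ∂π := integral_mono (hψπ.add hφπ) hcint (fun p => hle p.1 p.2)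
  · refine ⟨?_, ?_, ?_⟩
    · rw [Measure.map_map measurable_snd hTpair]; exact Measure.map_id
    · rw [Measure.map_map measurable_fst hTpair]; rfl
    · rw [integral_map hTpair.aemeasurable hc.aestronglyMeasurable]
end

section
/- Let E be a finite-dimensional real inner product space of dimension M, and let T : E → E be an invertible self-adjoint linear operator. Let V ⊆ E be the sum of the eigenspaces of T corresponding to positive eigenvalues, let ν = dim V, let P be the orthogonal projection onto V, and Q the orthogonal projection onto V^⊥. Suppose Ξ ⊆ E satisfies ⟪a − b, T(a − b)⟫ ≥ 0 for all a, b ∈ Ξ. Then there exists L ≥ 0 (depending only on T) such that ‖Q(a) − Q(b)‖ ≤ L‖P(a) − P(b)‖ for all a, b ∈ Ξ; consequently there exists a function f : P(Ξ) → V^⊥, Lipschitz with constant L, such that a = P(a) + f(P(a)) for every a ∈ Ξ, i.e. Ξ is contained in the graph of an L-Lipschitz function over the ν-dimensional subspace V. -/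
open scoped RealInnerProductSpace

/-- **W-monotone sets are graphs of Lipschitz functions.**
Let `T` be an invertible self-adjoint operator on a finite-dimensional real inner product
space `E`, `V` the sum of eigenspaces of `T` for positive eigenvalues, `P` the orthogonal
projection onto `V` and `Q` the one onto `V^⊥`. Then there is a constant `L` (depending only
on `T`) such that every set `Ξ` with `⟪a − b, T(a − b)⟫ ≥ 0` on `Ξ × Ξ` satisfies
`‖Q a − Q b‖ ≤ L ‖P a − P b‖` on `Ξ × Ξ`; consequently there is an `L`-Lipschitz function
`f` on `P(Ξ)` with values in `V^⊥` such that `a = P a + f (P a)` for all `a ∈ Ξ`. -/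
theorem stmt7
    {E : Type*} [NormedAddCommGroup E] [InnerProductSpace ℝ E] [FiniteDimensional ℝ E]
    (T : E →ₗ[ℝ] E) (hsym : T.IsSymmetric) (hinv : Function.Bijective T)
    (V : Submodule ℝ E)
    (hV : V = ⨆ (μ : ℝ) (_ : 0 < μ), Module.End.eigenspace (T : Module.End ℝ E) μ)
    (P Q : E → E)
    (hP : ∀ x : E, P x = (Submodule.orthogonalProjectionOnto V x : E))
    (hQ : ∀ x : E, Q x = (Submodule.orthogonalProjectionOnto Vᗮ x : E)) :
    ∃ L : NNReal, ∀ Ξ : Set E,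
      (∀ a ∈ Ξ, ∀ b ∈ Ξ, 0 ≤ ⟪a - b, T (a - b)⟫) →
      (∀ a ∈ Ξ, ∀ b ∈ Ξ, ‖Q a - Q b‖ ≤ (L : ℝ) * ‖P a - P b‖) ∧
      ∃ f : E → E, LipschitzOnWith L f (P '' Ξ) ∧
        (∀ x ∈ P '' Ξ, f x ∈ Vᗮ) ∧
        (∀ a ∈ Ξ, a = P a + f (P a)) := by
  classical
  have hfr : Module.finrank ℝ E = Module.finrank ℝ E := rfl
  set n := Module.finrank ℝ E with hn
  let b := hsym.eigenvectorBasis hfr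
  let μ : Fin n → ℝ := hsym.eigenvalues hfr
  -- eigenvalues are nonzero
  have hμne : ∀ i, μ i ≠ 0 := by
    intro i h0
    have h1 := hsym.apply_eigenvectorBasis hfr i
    have h2 : T (b i) = T 0 := by
      rw [map_zero, h1]
      show (μ i : ℝ) • _ = (0 : E)
      rw [h0, zero_smul]
    have h3 : b i = 0 := hinv.injective h2
    have h4 : ‖b i‖ = 1 := b.orthonormal.1 i
    rw [h3, norm_zero] at h4
    norm_num at h4
  -- eigenvectors with positive eigenvalue lie in V
  have hbV : ∀ i, 0 < μ i → b i ∈ V := by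
    intro i hi
    rw [hV]
    exact Submodule.mem_iSup_of_mem (μ i) (Submodule.mem_iSup_of_mem hi
      (hsym.hasEigenvector_eigenvectorBasis hfr i).1)
  -- eigenvectors with non-positive eigenvalue lie in Vᗮ
  have hbV' : ∀ i, ¬ 0 < μ i → b i ∈ Vᗮ := by
    intro i hi
    have hle : V ≤ (ℝ ∙ (b i))ᗮ := by
      rw [hV]
      refine iSup₂_le fun ν hν => ?_
      intro x hx
      rw [Submodule.mem_orthogonal_singleton_iff_inner_right]
      have hne : μ i ≠ ν := fun h => hi (h ▸ hν)
      exact hsym.orthogonalFamily_eigenspaces hne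
        ⟨b i, (hsym.hasEigenvector_eigenvectorBasis hfr i).1⟩ ⟨x, hx⟩
    rw [Submodule.mem_orthogonal]
    intro u hu
    have := hle hu
    rw [Submodule.mem_orthogonal_singleton_iff_inner_right] at this
    rw [real_inner_comm]
    exact this
  -- constants
  set C : ℝ := (∑ j, |μ j|) + 1 with hCdef
  have hC1 : (1 : ℝ) ≤ C := by
    have : (0:ℝ) ≤ ∑ j, |μ j| := Finset.sum_nonneg fun j _ => abs_nonneg _
    linarith
  have hCi : ∀ i, μ i ≤ C := by
    intro i
    have h1 : |μ i| ≤ ∑ j, |μ j| :=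
      Finset.single_le_sum (f := fun j => |μ j|) (fun j _ => abs_nonneg (μ j)) (Finset.mem_univ i)
    have := le_abs_self (μ i)
    linarith
  set t : Finset ℝ :=
    insert (1 : ℝ) ((Finset.univ.filter fun i => ¬ 0 < μ i).image fun i => -μ i) with htdef
  have ht : t.Nonempty := ⟨1, Finset.mem_insert_self _ _⟩
  set β : ℝ := t.min' ht with hβdef
  have hβpos : 0 < β := by
    rw [hβdef, Finset.lt_min'_iff]
    intro x hx
    rw [htdef, Finset.mem_insert, Finset.mem_image] at hx
    rcases hx with h1 | ⟨i, hi, rfl⟩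
    · rw [h1]; norm_num
    · rw [Finset.mem_filter] at hi
      have := hμne i
      have : μ i < 0 := lt_of_le_of_ne (not_lt.mp hi.2) (hμne i)
      linarith
  have hβ : ∀ i, ¬ 0 < μ i → μ i ≤ -β := by
    intro i hi
    have hmem : -μ i ∈ t := by
      rw [htdef, Finset.mem_insert, Finset.mem_image]
      exact Or.inr ⟨i, Finset.mem_filter.mpr ⟨Finset.mem_univ i, hi⟩, rfl⟩
    have := Finset.min'_le t _ hmem
    linarith
  set L0 : ℝ := Real.sqrt (C / β) with hL0def
  have hL0nn : 0 ≤ L0 := Real.sqrt_nonneg _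
  -- inner products in coordinates
  have inner_sum : ∀ x y : E, ⟪x, y⟫ = ∑ i, b.repr x i * b.repr y i := by
    intro x y
    rw [← b.repr.inner_map_map x y]
    simp only [PiLp.inner_apply, RCLike.inner_apply, conj_trivial]
    exact Finset.sum_congr rfl fun i _ => mul_comm _ _
  have repr_T : ∀ (x : E) (i : Fin n), b.repr (T x) i = μ i * b.repr x i := fun x i =>
    hsym.eigenvectorBasis_apply_self_apply hfr x i
  have norm_sq : ∀ x : E, ‖x‖ ^ 2 = ∑ i, (b.repr x i) ^ 2 := by
    intro x
    rw [← real_inner_self_eq_norm_sq, inner_sum]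
    exact Finset.sum_congr rfl fun i _ => (sq (b.repr x i)).symm
  -- the key estimate
  have key : ∀ d : E, 0 ≤ ⟪d, T d⟫ →
      ‖(Submodule.orthogonalProjectionOnto Vᗮ d : E)‖ ≤ L0 * ‖(Submodule.orthogonalProjectionOnto V d : E)‖ := by
    intro d hd
    set p : E := (Submodule.orthogonalProjectionOnto V d : E) with hpdef
    set q : E := (Submodule.orthogonalProjectionOnto Vᗮ d : E) with hqdef
    have hpV : p ∈ V := SetLike.coe_mem _
    have hqV : q ∈ Vᗮ := SetLike.coe_mem _
    have hdpq : d = p + q := (Submodule.starProjection_add_starProjection_orthogonal (K := V) d).symm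
    have hcp : ∀ i, ¬ 0 < μ i → b.repr p i = 0 := by
      intro i hi
      rw [b.repr_apply_apply]
      have h := (Submodule.mem_orthogonal V (b i)).mp (hbV' i hi) p hpV
      rw [real_inner_comm] at h
      exact h
    have hcq : ∀ i, 0 < μ i → b.repr q i = 0 := by
      intro i hi
      rw [b.repr_apply_apply]
      exact (Submodule.mem_orthogonal V q).mp hqV (b i) (hbV i hi)
    have hterm : ∀ i : Fin n,
        b.repr d i * (μ i * b.repr d i) ≤ C * (b.repr p i) ^ 2 - β * (b.repr q i) ^ 2 := by
      intro i
      have hdi : b.repr d i = b.repr p i + b.repr q i := by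
        rw [hdpq, map_add]; rfl
      by_cases hi : 0 < μ i
      · rw [hdi, hcq i hi, add_zero]
        have h1 := hCi i
        nlinarith [sq_nonneg (b.repr p i)]
      · rw [hdi, hcp i hi, zero_add]
        have h1 := hβ i hi
        nlinarith [sq_nonneg (b.repr q i)]
    have hquad : ⟪d, T d⟫ ≤ C * ‖p‖ ^ 2 - β * ‖q‖ ^ 2 := by
      have h1 : ⟪d, T d⟫ = ∑ i, b.repr d i * (μ i * b.repr d i) := by
        rw [inner_sum]
        exact Finset.sum_congr rfl fun i _ => by rw [repr_T]
      rw [h1, norm_sq, norm_sq, Finset.mul_sum, Finset.mul_sum, ← Finset.sum_sub_distrib]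
      exact Finset.sum_le_sum fun i _ => hterm i
    have h2 : ‖q‖ ^ 2 ≤ (C / β) * ‖p‖ ^ 2 := by
      rw [div_mul_eq_mul_div, le_div_iff₀ hβpos]
      nlinarith
    calc ‖q‖ = Real.sqrt (‖q‖ ^ 2) := (Real.sqrt_sq (norm_nonneg _)).symm
      _ ≤ Real.sqrt ((C / β) * ‖p‖ ^ 2) := Real.sqrt_le_sqrt h2
      _ = L0 * ‖p‖ := by
          rw [Real.sqrt_mul (by positivity), Real.sqrt_sq (norm_nonneg _)]
  refine ⟨L0.toNNReal, fun Ξ hΞ => ?_⟩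
  have hL0c : (L0.toNNReal : ℝ) = L0 := Real.coe_toNNReal _ hL0nn
  have part1 : ∀ a ∈ Ξ, ∀ b' ∈ Ξ, ‖Q a - Q b'‖ ≤ L0 * ‖P a - P b'‖ := by
    intro a ha b' hb'
    have h1 : Q a - Q b' = (Submodule.orthogonalProjectionOnto Vᗮ (a - b') : E) := by
      rw [hQ, hQ, map_sub]; rfl
    have h2 : P a - P b' = (Submodule.orthogonalProjectionOnto V (a - b') : E) := by
      rw [hP, hP, map_sub]; rfl
    rw [h1, h2]
    exact key _ (hΞ a ha b' hb')
  refine ⟨fun a ha b' hb' => by rw [hL0c]; exact part1 a ha b' hb', ?_⟩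
  set f : E → E := fun x => if h : ∃ a, a ∈ Ξ ∧ P a = x then Q h.choose else 0 with hfdef
  have hf : ∀ a ∈ Ξ, f (P a) = Q a := by
    intro a ha
    have hex : ∃ a', a' ∈ Ξ ∧ P a' = P a := ⟨a, ha, rfl⟩
    rw [hfdef]
    simp only [dif_pos hex]
    obtain ⟨ha', hPa'⟩ := hex.choose_spec
    have h := part1 hex.choose ha' a ha
    rw [hPa', sub_self, norm_zero, mul_zero] at h
    have := norm_le_zero_iff.mp h
    rw [sub_eq_zero] at this
    exact this
  refine ⟨f, ?_, ?_, ?_⟩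
  · rw [lipschitzOnWith_iff_dist_le_mul]
    rintro x ⟨a, ha, rfl⟩ y ⟨a', ha', rfl⟩
    rw [hf a ha, hf a' ha', dist_eq_norm, dist_eq_norm, hL0c]
    exact part1 a ha a' ha'
  · rintro x ⟨a, ha, rfl⟩
    rw [hf a ha, hQ]
    exact SetLike.coe_mem _
  · intro a ha
    rw [hf a ha, hP, hQ]
    exact (Submodule.starProjection_add_starProjection_orthogonal (K := V) a).symm
end

section
/- Let E be a finite-dimensional real inner product space of dimension M, let W : E → ℝ be twice continuously differentiable, let K ⊆ E be a convex set, and let a lie in the intrinsic (relative) interior of K. Suppose W(x) ≤ W(a) + ⟪∇W(a), x − a⟫ for all x ∈ K. Then the Hessian quadratic form of W at a, v ↦ D²W(a)(v, v), is nonpositive on the linear span S of {x − a : x ∈ K}; consequently dim S ≤ M − ν, where ν is the largest dimension of a linear subspace of E on which the quadratic form v ↦ D²W(a)(v, v) is positive definite. -/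
open scoped RealInnerProductSpace

/-- If near `0` the curve `t ↦ a + t • v` stays in a region where `W` lies below its tangent
at `a`, then the Hessian quadratic form at `a` is nonpositive at `v`. -/
lemma hess_nonpos_aux {E : Type*} [NormedAddCommGroup E] [InnerProductSpace ℝ E]
    (W : E → ℝ) (hW : ContDiff ℝ 2 W) (a v : E)
    (hev : ∀ᶠ t in nhds (0:ℝ), W (a + t • v) - W a - t * fderiv ℝ W a v ≤ 0) :
    iteratedFDeriv ℝ 2 W a ![v, v] ≤ 0 := by
  by_contra hQ
  push_neg at hQ
  rw [iteratedFDeriv_two_apply] at hQ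
  simp only [Matrix.cons_val_zero, Matrix.cons_val_one, Matrix.head_cons] at hQ
  set F : E → (E →L[ℝ] ℝ) := fderiv ℝ W with hFdef
  have hF : ContDiff ℝ 1 F := hW.fderiv_right (by norm_num)
  have hWd : Differentiable ℝ W := hW.differentiable (by norm_num)
  set h : ℝ → ℝ := fun t => W (a + t • v) - W a - t * F a v with hhdef
  set h1 : ℝ → ℝ := fun t => F (a + t • v) v - F a v with h1def
  set h2 : ℝ → ℝ := fun t => fderiv ℝ F (a + t • v) v v with h2def
  have hc : ∀ t : ℝ, HasDerivAt (fun s : ℝ => a + s • v) v t := by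
    intro t
    simpa using ((hasDerivAt_id t).smul_const v).const_add a
  have hd1 : ∀ t : ℝ, HasDerivAt h (h1 t) t := by
    intro t
    have h1' : HasDerivAt (fun s : ℝ => W (a + s • v)) (F (a + t • v) v) t :=
      (hWd (a + t • v)).hasFDerivAt.comp_hasDerivAt t (hc t)
    have h2' : HasDerivAt (fun s : ℝ => W a + s * F a v) (F a v) t := by
      simpa using ((hasDerivAt_id t).mul_const (F a v)).const_add (W a)
    have := h1'.sub h2'
    simp only [hhdef]
    refine this.congr_of_eventuallyEq (Filter.Eventually.of_forall fun s => ?_)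
    simp only [Pi.sub_apply]
    ring
  have hd2 : ∀ t : ℝ, HasDerivAt h1 (h2 t) t := by
    intro t
    have hF' : HasDerivAt (fun s : ℝ => F (a + s • v)) (fderiv ℝ F (a + t • v) v) t :=
      ((hF.differentiable one_ne_zero) (a + t • v)).hasFDerivAt.comp_hasDerivAt t (hc t)
    have := (hF'.clm_apply (hasDerivAt_const t v)).sub_const (F a v)
    simpa [h1def, h2def] using this
  have hcont2 : Continuous h2 := by
    have : Continuous (fderiv ℝ F) := hF.continuous_fderiv one_ne_zero
    have hcc : Continuous fun t : ℝ => a + t • v := by continuity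
    exact (ContinuousLinearMap.apply ℝ ℝ v).continuous.comp
      ((ContinuousLinearMap.apply ℝ (E →L[ℝ] ℝ) v).continuous.comp (this.comp hcc))
  have h20 : 0 < h2 0 := by simpa [h2def] using hQ
  have hev2 : ∀ᶠ t in nhds (0:ℝ), 0 < h2 t :=
    (hcont2.continuousAt (x := 0)).eventually (eventually_gt_nhds h20)
  obtain ⟨ε, hε, hball⟩ := Metric.eventually_nhds_iff.mp (hev2.and hev)
  set δ : ℝ := ε / 2 with hδdef
  have hδ : 0 < δ := by positivity
  have hmem : ∀ t ∈ Set.Icc (0:ℝ) δ, dist t (0:ℝ) < ε := by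
    intro t ht
    rw [Real.dist_eq, sub_zero, abs_of_nonneg ht.1]
    calc t ≤ δ := ht.2
    _ < ε := by simpa [hδdef] using half_lt_self hε
  -- h1 is strictly monotone on [0, δ]
  have hm1 : StrictMonoOn h1 (Set.Icc 0 δ) := by
    apply strictMonoOn_of_deriv_pos (convex_Icc 0 δ)
      (fun t _ => ((hd2 t).differentiableAt.continuousAt).continuousWithinAt)
    intro t ht
    rw [interior_Icc] at ht
    rw [(hd2 t).deriv]
    exact (hball (hmem t ⟨le_of_lt ht.1, le_of_lt ht.2⟩)).1
  have h10 : h1 0 = 0 := by simp [h1def]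
  have hm : StrictMonoOn h (Set.Icc 0 δ) := by
    apply strictMonoOn_of_deriv_pos (convex_Icc 0 δ)
      (fun t _ => ((hd1 t).differentiableAt.continuousAt).continuousWithinAt)
    intro t ht
    rw [interior_Icc] at ht
    rw [(hd1 t).deriv]
    have := hm1 (Set.left_mem_Icc.mpr hδ.le) ⟨ht.1.le, ht.2.le⟩ ht.1
    rwa [h10] at this
  have hlt : h 0 < h δ :=
    hm (Set.left_mem_Icc.mpr hδ.le) (Set.right_mem_Icc.mpr hδ.le) hδ
  have h0 : h 0 = 0 := by simp [hhdef]
  have hle : h δ ≤ 0 := (hball (hmem δ (Set.right_mem_Icc.mpr hδ.le))).2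
  rw [h0] at hlt
  exact absurd hle (not_le.mpr hlt)

/-- **Pools are low-dimensional.**
Let `W : E → ℝ` be `C²` on the finite-dimensional real inner product space `E`, `K` a convex
set, and `a` a point of the intrinsic (relative) interior of `K` at which `W` lies below its
tangent hyperplane on all of `K`. Then the Hessian quadratic form of `W` at `a` is nonpositive
on the span `S` of `{x − a : x ∈ K}`; consequently, for every subspace `U` on which this
quadratic form is positive definite (so in particular for one of the maximal dimension `ν`),
`dim S ≤ dim E − dim U`. -/
theorem stmt8
    {E : Type*} [NormedAddCommGroup E] [InnerProductSpace ℝ E] [FiniteDimensional ℝ E]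
    (W : E → ℝ) (hW : ContDiff ℝ 2 W)
    (K : Set E) (hK : Convex ℝ K)
    (a : E) (ha : a ∈ intrinsicInterior ℝ K)
    (htangent : ∀ x ∈ K, W x ≤ W a + ⟪gradient W a, x - a⟫) :
    (∀ v ∈ Submodule.span ℝ ((fun x => x - a) '' K),
        iteratedFDeriv ℝ 2 W a ![v, v] ≤ 0) ∧
    (∀ U : Submodule ℝ E,
        (∀ v ∈ U, v ≠ 0 → 0 < iteratedFDeriv ℝ 2 W a ![v, v]) →
        Module.finrank ℝ (Submodule.span ℝ ((fun x => x - a) '' K))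
          ≤ Module.finrank ℝ E - Module.finrank ℝ U) := by
  have haK : a ∈ K := intrinsicInterior_subset ha
  -- gradient pairing equals the Fréchet derivative
  have hgrad : ∀ u : E, ⟪gradient W a, u⟫ = fderiv ℝ W a u := fun u => by
    simp [gradient, InnerProductSpace.toDual_symm_apply]
  -- the span is contained in the direction of the affine span
  have hspan : Submodule.span ℝ ((fun x => x - a) '' K) ≤ (affineSpan ℝ K).direction := by
    rw [Submodule.span_le]
    rintro _ ⟨x, hx, rfl⟩
    exact AffineSubspace.vsub_mem_direction (subset_affineSpan ℝ K hx) (subset_affineSpan ℝ K haK)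
  have key : ∀ v ∈ Submodule.span ℝ ((fun x => x - a) '' K),
      iteratedFDeriv ℝ 2 W a ![v, v] ≤ 0 := by
    intro v hv
    obtain ⟨b, hb, hba⟩ := mem_intrinsicInterior.mp ha
    have hvdir : v ∈ (affineSpan ℝ K).direction := hspan hv
    -- the curve t ↦ a + t • v inside the affine span
    have hmem : ∀ t : ℝ, a + t • v ∈ affineSpan ℝ K := by
      intro t
      have := AffineSubspace.vadd_mem_of_mem_direction
        (Submodule.smul_mem _ t hvdir) (subset_affineSpan ℝ K haK)
      simpa [add_comm] using this
    set γ : ℝ → affineSpan ℝ K := fun t => ⟨a + t • v, hmem t⟩ with hγdef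
    have hγcont : Continuous γ := by
      apply Continuous.subtype_mk
      continuity
    have hγ0 : γ 0 = b := by
      apply Subtype.ext
      simp [hγdef, hba]
    have hevK : ∀ᶠ t in nhds (0:ℝ), a + t • v ∈ K := by
      have : ∀ᶠ t in nhds (0:ℝ), γ t ∈ interior ((↑) ⁻¹' K : Set (affineSpan ℝ K)) := by
        apply hγcont.continuousAt.eventually_mem
        rw [hγ0]
        exact isOpen_interior.mem_nhds hb
      exact this.mono fun t ht => by simpa [hγdef] using (interior_subset ht : γ t ∈ _)
    apply hess_nonpos_aux W hW a v
    apply hevK.mono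
    intro t ht
    have := htangent _ ht
    rw [add_sub_cancel_left, real_inner_smul_right, hgrad] at this
    linarith
  refine ⟨key, fun U hU => ?_⟩
  set S := Submodule.span ℝ ((fun x => x - a) '' K) with hSdef
  have hdisj : S ⊓ U = ⊥ := by
    rw [Submodule.eq_bot_iff]
    intro v hv
    by_contra hv0
    exact absurd (key v hv.1) (not_le.mpr (hU v hv.2 hv0))
  have := Submodule.finrank_sup_add_finrank_inf_eq S U
  rw [hdisj, finrank_bot, add_zero] at this
  have hle : Module.finrank ℝ S + Module.finrank ℝ U ≤ Module.finrank ℝ E := by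
    rw [← this]
    exact Submodule.finrank_le _
  exact Nat.le_sub_of_add_le hle
end

section
/- Let Ω ⊆ ℝ^L be an open connected set and let f : ℝ^L → ℝ be real analytic on Ω (analytic in a neighborhood of each point of Ω). If the zero set {ω ∈ Ω : f(ω) = 0} has positive Lebesgue measure, then f vanishes identically on Ω. -/
open MeasureTheory Set Metric

lemma countable_of_isolated_pts {S : Set ℝ}
    (h : ∀ x ∈ S, ∀ᶠ y in nhdsWithin x {x}ᶜ, y ∉ S) : S.Countable := by
  have : DiscreteTopology S := by
    rw [discreteTopology_subtype_iff]
    intro x hx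
    rw [Filter.inf_principal_eq_bot]
    exact h x hx
  exact Set.countable_coe_iff.mp (TopologicalSpace.separableSpace_iff_countable.mp inferInstance)

lemma null_of_ray_slices {L : ℕ} [NeZero L] (A : Set (EuclideanSpace ℝ (Fin L)))
    (hA : MeasurableSet A)
    (h : ∀ u : EuclideanSpace ℝ (Fin L), ‖u‖ = 1 →
      {r : ℝ | 0 < r ∧ r • u ∈ A}.Countable) :
    volume A = 0 := by
  haveI : Nontrivial (EuclideanSpace ℝ (Fin L)) := by
    refine ⟨0, EuclideanSpace.single ⟨0, Nat.pos_of_ne_zero (NeZero.ne L)⟩ (1:ℝ), fun hcon => ?_⟩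
    have := congrArg (fun v : EuclideanSpace ℝ (Fin L) =>
      v ⟨0, Nat.pos_of_ne_zero (NeZero.ne L)⟩) hcon
    simp [EuclideanSpace.single_apply] at this

  have hc : MeasurableSet ({(0 : EuclideanSpace ℝ (Fin L))}ᶜ) := (measurableSet_singleton 0).compl
  set e := homeomorphUnitSphereProd (EuclideanSpace ℝ (Fin L))
  set n := Module.finrank ℝ (EuclideanSpace ℝ (Fin L)) - 1 with hn
  have mp := (volume : Measure (EuclideanSpace ℝ (Fin L))).measurePreserving_homeomorphUnitSphereProd
  set s : Set (sphere (0: EuclideanSpace ℝ (Fin L)) 1 × Ioi (0:ℝ)) :=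
    e.symm ⁻¹' (Subtype.val ⁻¹' A) with hs_def
  have hs : MeasurableSet s :=
    e.symm.continuous.measurable (measurable_subtype_coe hA)
  have hslice : ∀ u : sphere (0:EuclideanSpace ℝ (Fin L)) 1,
      (Measure.volumeIoiPow n) (Prod.mk u ⁻¹' s) = 0 := by
    intro u
    have hcnt : {r : ℝ | 0 < r ∧ r • (u : EuclideanSpace ℝ (Fin L)) ∈ A}.Countable :=
      h u (mem_sphere_zero_iff_norm.mp u.2)
    have hsub : (Subtype.val '' (Prod.mk u ⁻¹' s)) ⊆
        {r : ℝ | 0 < r ∧ r • (u : EuclideanSpace ℝ (Fin L)) ∈ A} := by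
      rintro r ⟨⟨r', hr'⟩, hmem, rfl⟩
      refine ⟨hr', ?_⟩
      simpa [hs_def, e, homeomorphUnitSphereProd_symm_apply_coe] using hmem
    have hbase : (Measure.comap Subtype.val (volume : Measure ℝ)) (Prod.mk u ⁻¹' s) = 0 := by
      rw [comap_subtype_coe_apply measurableSet_Ioi]
      exact measure_mono_null hsub (hcnt.measure_zero _)
    exact (withDensity_absolutelyContinuous _ _) hbase
  have hνs : ((volume : Measure (EuclideanSpace ℝ (Fin L))).toSphere.prod
      (Measure.volumeIoiPow n)) s = 0 := by
    rw [Measure.prod_apply hs]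
    simp [hslice]
  have hpre : e ⁻¹' s = Subtype.val ⁻¹' A := by
    ext z; simp [hs_def]
  have h1 : (volume : Measure (EuclideanSpace ℝ (Fin L))).comap
      (Subtype.val : ({(0:EuclideanSpace ℝ (Fin L))}ᶜ : Set _) → EuclideanSpace ℝ (Fin L))
      (Subtype.val ⁻¹' A) = 0 := by
    rw [← hpre, mp.measure_preimage hs.nullMeasurableSet]
    exact hνs
  rw [comap_subtype_coe_apply hc] at h1
  have h2 : volume (A ∩ {(0:EuclideanSpace ℝ (Fin L))}ᶜ) = 0 := by
    rw [Set.inter_comm]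
    rwa [Subtype.image_preimage_coe] at h1
  have : volume A ≤ volume (A ∩ {(0:EuclideanSpace ℝ (Fin L))}ᶜ) +
      volume {(0:EuclideanSpace ℝ (Fin L))} := by
    refine (measure_mono ?_).trans (measure_union_le _ _)
    intro z hz
    by_cases hz0 : z = 0 <;> simp [hz, hz0]
  simpa [h2, measure_singleton] using this

lemma local_null {L : ℕ} [NeZero L] {f : EuclideanSpace ℝ (Fin L) → ℝ}
    {x : EuclideanSpace ℝ (Fin L)} {ε : ℝ}
    (hf : ∀ z ∈ ball x ε, AnalyticAt ℝ f z)
    {y : EuclideanSpace ℝ (Fin L)} (hy : y ∈ ball x ε) (hfy : f y ≠ 0) :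
    volume {z ∈ ball x ε | f z = 0} = 0 := by
  set B := ball x ε with hB
  have hcont : ContinuousOn f B := fun z hz => (hf z hz).continuousAt.continuousWithinAt
  have hUopen : IsOpen (B ∩ f ⁻¹' ({0}ᶜ)) :=
    hcont.isOpen_inter_preimage isOpen_ball isOpen_compl_singleton
  have hZeq : {z ∈ B | f z = 0} = B \ (B ∩ f ⁻¹' ({0}ᶜ)) := by
    ext z; by_cases hz : f z = 0 <;> simp [hz]
  have hZm : MeasurableSet {z ∈ B | f z = 0} := by
    rw [hZeq]; exact measurableSet_ball.diff hUopen.measurableSet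
  have htrans : volume ((fun v => y + v) ⁻¹' {z ∈ B | f z = 0}) = volume {z ∈ B | f z = 0} :=
    measure_preimage_add _ _ _
  rw [← htrans]
  apply null_of_ray_slices
  · exact hZm.preimage (measurable_const_add y)
  · intro u hu
    set g : ℝ → ℝ := fun r => f (y + r • u) with hg
    set J : Set ℝ := (fun r : ℝ => y + r • u) ⁻¹' B with hJ
    have hJo : IsOpen J := isOpen_ball.preimage (by fun_prop)
    have hJconv : Convex ℝ J := by
      have huu : J = (AffineMap.lineMap y (y + u) : ℝ →ᵃ[ℝ] _) ⁻¹' B := by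
        ext r
        simp only [hJ, Set.mem_preimage, AffineMap.lineMap_apply, vsub_eq_sub, vadd_eq_add,
          add_sub_cancel_left]
        rw [add_comm]
      rw [huu]; exact (convex_ball x ε).affine_preimage _
    have h0J : (0:ℝ) ∈ J := by simpa [hJ] using hy
    have hgan : ∀ r ∈ J, AnalyticAt ℝ g r := by
      intro r hr
      have hm : AnalyticAt ℝ (fun r : ℝ => y + r • u) r := by
        apply analyticAt_const.add
        exact ((ContinuousLinearMap.id ℝ ℝ).smulRight u).analyticAt r
      exact AnalyticAt.comp (𝕜 := ℝ) (g := f) (f := fun r : ℝ => y + r • u) (x := r)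
        (hf _ hr) hm
    have hne : ∀ r ∈ J, ∀ᶠ w in nhdsWithin r {r}ᶜ, g w ≠ 0 := by
      intro r hr
      rcases (hgan r hr).eventually_eq_zero_or_eventually_ne_zero with h0 | h1
      · exfalso
        have := AnalyticOnNhd.eqOn_zero_of_preconnected_of_eventuallyEq_zero
            (fun z hz => hgan z hz) hJconv.isPreconnected hr h0
        exact hfy (by simpa [hg] using this h0J)
      · exact h1
    have hsubset : {r : ℝ | 0 < r ∧ r • u ∈ (fun v => y + v) ⁻¹' {z ∈ B | f z = 0}} ⊆
        {r ∈ J | g r = 0} := by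
      rintro r ⟨hr0, hrA⟩
      exact ⟨hrA.1, hrA.2⟩
    refine Set.Countable.mono hsubset ?_
    apply countable_of_isolated_pts
    rintro r ⟨hrJ, hgr⟩
    filter_upwards [hne r hrJ] with w hw
    exact fun hwS => hw hwS.2

/-- If `f` is real analytic on an open connected set `Ω ⊆ ℝ^L` (analytic at
each point of `Ω`) and its zero set inside `Ω` has positive Lebesgue measure, then `f` vanishes
identically on `Ω`. -/
theorem stmt10
    (L : ℕ) (Ω : Set (EuclideanSpace ℝ (Fin L)))
    (hopen : IsOpen Ω) (hconn : IsConnected Ω)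
    (f : EuclideanSpace ℝ (Fin L) → ℝ)
    (hf : ∀ ω ∈ Ω, AnalyticAt ℝ f ω)
    (hpos : 0 < volume {ω ∈ Ω | f ω = 0}) :
    ∀ ω ∈ Ω, f ω = 0 := by
  rcases Nat.eq_zero_or_pos L with hL | hL
  · subst hL
    haveI : Subsingleton (EuclideanSpace ℝ (Fin 0)) :=
      ⟨fun a b => PiLp.ext fun i => i.elim0⟩
    have hne : {ω ∈ Ω | f ω = 0}.Nonempty := by
      rcases Set.eq_empty_or_nonempty {ω ∈ Ω | f ω = 0} with he | hne
      · rw [he] at hpos; simp at hpos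
      · exact hne
    obtain ⟨z, hzΩ, hz0⟩ := hne
    intro ω hω
    rwa [Subsingleton.elim ω z]
  · haveI : NeZero L := ⟨hL.ne'⟩
    by_cases hS : ∃ x ∈ Ω, f =ᶠ[nhds x] 0
    · obtain ⟨x, hx, hfx⟩ := hS
      intro ω hω
      have := AnalyticOnNhd.eqOn_zero_of_preconnected_of_eventuallyEq_zero
        (fun z hz => hf z hz) hconn.isPreconnected hx hfx hω
      simpa using this
    · push_neg at hS
      exfalso
      have h0 : volume {ω ∈ Ω | f ω = 0} = 0 := by
        apply measure_null_of_locally_null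
        intro x hx
        obtain ⟨ε, hε, hball⟩ := Metric.isOpen_iff.mp hopen x hx.1
        have hnotall : ¬ ∀ z ∈ ball x ε, f z = 0 := by
          intro hall
          exact hS x hx.1 (Filter.eventuallyEq_of_mem (ball_mem_nhds x hε)
            fun z hz => hall z hz)
        push_neg at hnotall
        obtain ⟨y, hy, hfy⟩ := hnotall
        refine ⟨{z ∈ ball x ε | f z = 0}, ?_, ?_⟩
        · refine Filter.mem_of_superset
            (inter_mem_nhdsWithin {ω ∈ Ω | f ω = 0} (ball_mem_nhds x hε)) ?_
          rintro z ⟨⟨hzΩ, hzf⟩, hzb⟩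
          exact ⟨hzb, hzf⟩
        · exact local_null (fun z hz => hf z (hball hz)) hy hfy
      exact absurd h0 hpos.ne'
end

section
/- Let E be a finite-dimensional real inner product space and W : E → ℝ twice continuously differentiable. Suppose W is concave along rays for large arguments: there exist ε ∈ (0,1) and K > 0 such that for every a ∈ E with ‖a‖ > K and every nonzero b ∈ E with ⟪a, b⟫ > (1 − ε)‖a‖·‖b‖, one has D²W(a)(b, b) < 0. Then every set Ξ ⊆ E satisfying c(a,b) ≥ 0 for all a, b ∈ Ξ is bounded, where c(a,b) = W(b) − W(a) + ⟪∇W(a), a − b⟫. -/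
set_option maxHeartbeats 1000000
open scoped RealInnerProductSpace

private lemma perp_inner {E : Type*} [NormedAddCommGroup E] [InnerProductSpace ℝ E]
    (x d w : E) (hw : ‖w‖ = 1) :
    ⟪x - ⟪x, w⟫ • w, d - ⟪d, w⟫ • w⟫ = ⟪x, d⟫ - ⟪x, w⟫ * ⟪d, w⟫ := by
  have hww : ⟪w, w⟫ = (1 : ℝ) := by
    rw [real_inner_self_eq_norm_sq, hw]; norm_num
  simp only [inner_sub_left, inner_sub_right, real_inner_smul_left, real_inner_smul_right, hww]
  rw [real_inner_comm w x, real_inner_comm w d]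
  ring

private lemma perp_norm {E : Type*} [NormedAddCommGroup E] [InnerProductSpace ℝ E]
    (x w : E) (hw : ‖w‖ = 1) :
    ‖x - ⟪x, w⟫ • w‖ ^ 2 = ‖x‖ ^ 2 - ⟪x, w⟫ ^ 2 := by
  rw [norm_sub_sq_real, real_inner_smul_right, norm_smul, hw, mul_one, Real.norm_eq_abs, sq_abs]
  ring


private lemma scalar_final {eps th n m q s X D P I : ℝ} (hth0 : 0 < th)
    (hths : th < 1 / 32) (hthe : 9 * th < eps)
    (hn : 0 < n) (hm : 0 < m)
    (hq : (1 - th) * n ≤ q) (hs : (1 - 4 * th) * m ≤ s)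
    (hq0 : 0 ≤ q) (hs0 : 0 ≤ s)
    (hX0 : 0 ≤ X) (hD0 : 0 ≤ D)
    (hXsq : X ^ 2 = n ^ 2 - q ^ 2) (hDsq : D ^ 2 = m ^ 2 - s ^ 2)
    (hcs : -(X * D) ≤ P) (hkey : P = I - q * s) :
    (1 - eps) * (n * m) < I := by
  have hXb : X ^ 2 ≤ 2 * th * n ^ 2 := by
    rw [hXsq]
    nlinarith [mul_le_mul hq hq (mul_nonneg (by linarith : (0:ℝ) ≤ 1 - th) hn.le) hq0,
      mul_nonneg (sq_nonneg th) (sq_nonneg n)]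
  have hDb : D ^ 2 ≤ 8 * th * m ^ 2 := by
    rw [hDsq]
    nlinarith [mul_le_mul hs hs (mul_nonneg (by linarith : (0:ℝ) ≤ 1 - 4 * th) hm.le) hs0,
      mul_nonneg (sq_nonneg th) (sq_nonneg m)]
  have hXD : X * D ≤ 4 * th * (n * m) := by
    have h1 : X ^ 2 * D ^ 2 ≤ 2 * th * n ^ 2 * (8 * th * m ^ 2) :=
      mul_le_mul hXb hDb (sq_nonneg D) (by nlinarith [sq_nonneg n])
    have h2 : (X * D) ^ 2 ≤ (4 * th * (n * m)) ^ 2 := by nlinarith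
    exact (pow_le_pow_iff_left₀ (mul_nonneg hX0 hD0)
      (by nlinarith [mul_pos hn hm] : (0:ℝ) ≤ 4 * th * (n * m)) two_ne_zero).mp h2
  have hqs : (1 - th) * n * ((1 - 4 * th) * m) ≤ q * s :=
    mul_le_mul hq hs (mul_nonneg (by linarith) hm.le) hq0
  have hI : q * s - 4 * th * (n * m) ≤ I := by linarith
  have hcoef : 0 < eps - 9 * th + 4 * th ^ 2 := by nlinarith [sq_nonneg th]
  nlinarith [mul_pos hn hm, mul_pos hcoef (mul_pos hn hm)]

private lemma geom_aux {E : Type*} [NormedAddCommGroup E] [InnerProductSpace ℝ E]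
    {ε : ℝ} (hε0 : 0 < ε) (hε1 : ε < 1) {u v : E} (hu : u ≠ 0)
    (hratio : ‖u‖ ≤ ε ^ 2 / 32 * ‖v‖)
    (hdir : (1 - ε ^ 2 / 32) * (‖u‖ * ‖v‖) ≤ ⟪u, v⟫)
    {t : ℝ} (ht0 : 0 ≤ t) (ht1 : t ≤ 1) :
    v - u ≠ 0 ∧ ‖u‖ / 2 ≤ ‖u + t • (v - u)‖ ∧
    (1 - ε) * (‖u + t • (v - u)‖ * ‖v - u‖) < ⟪u + t • (v - u), v - u⟫ := by
  set θ : ℝ := ε ^ 2 / 32 with hθdef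
  have hθ0 : 0 < θ := by positivity
  have hθsmall : θ < 1 / 32 := by rw [hθdef]; nlinarith
  have hθε : 9 * θ < ε := by rw [hθdef]; nlinarith
  set a : ℝ := ‖u‖ with hadef
  set b : ℝ := ‖v‖ with hbdef
  have ha : 0 < a := norm_pos_iff.mpr hu
  have hb : 0 < b := lt_of_lt_of_le ha (hratio.trans (by nlinarith [norm_nonneg v]))
  have hab : a < b := lt_of_le_of_lt hratio (by nlinarith)
  set w : E := a⁻¹ • u with hwdef
  have hw1 : ‖w‖ = 1 := by
    rw [hwdef, norm_smul, norm_inv, Real.norm_of_nonneg ha.le, ← hadef,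
      inv_mul_cancel₀ ha.ne']
  set x : E := u + t • (v - u) with hxdef
  set d : E := v - u with hddef
  -- d ≠ 0
  have hdnorm : b - a ≤ ‖d‖ := by
    have := norm_sub_norm_le v u
    simpa [hddef, ← hadef, ← hbdef] using this
  have hd0 : d ≠ 0 := by
    intro h
    rw [h, norm_zero] at hdnorm
    linarith
  have hm0 : 0 < ‖d‖ := norm_pos_iff.mpr hd0
  -- inner products with w
  have hiuw : ⟪u, w⟫ = a := by
    rw [hwdef, real_inner_smul_right, real_inner_self_eq_norm_sq, ← hadef]
    field_simp
  have hp : (1 - θ) * (a * b) ≤ ⟪u, v⟫ := hdir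
  have hivw : (1 - θ) * b ≤ ⟪v, w⟫ := by
    have h2 : ⟪v, w⟫ = a⁻¹ * ⟪u, v⟫ := by
      rw [hwdef, real_inner_smul_right, real_inner_comm]
    rw [h2]
    calc (1 - θ) * b = a⁻¹ * ((1 - θ) * (a * b)) := by field_simp
      _ ≤ a⁻¹ * ⟪u, v⟫ := mul_le_mul_of_nonneg_left hp (by positivity)
  -- x as combination
  have hxcomb : x = (1 - t) • u + t • v := by
    rw [hxdef]; module
  have hnx_le : ‖x‖ ≤ (1 - t) * a + t * b := by
    calc ‖x‖ ≤ ‖(1 - t) • u‖ + ‖t • v‖ := hxcomb ▸ norm_add_le _ _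
      _ = (1 - t) * a + t * b := by
        simp [norm_smul, abs_of_nonneg ht0, abs_of_nonneg (by linarith : (0:ℝ) ≤ 1 - t),
          ← hadef, ← hbdef]
  have hixw : ⟪x, w⟫ = (1 - t) * a + t * ⟪v, w⟫ := by
    rw [hxcomb, inner_add_left, real_inner_smul_left, real_inner_smul_left, hiuw]
    try ring
  have hq_lb : (1 - t) * a + t * ((1 - θ) * b) ≤ ⟪x, w⟫ := by
    rw [hixw]
    have := mul_le_mul_of_nonneg_left hivw ht0
    linarith
  have hq_lb2 : (1 - θ) * ‖x‖ ≤ ⟪x, w⟫ := by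
    refine le_trans ?_ hq_lb
    have h1 : (1 - θ) * ‖x‖ ≤ (1 - θ) * ((1 - t) * a + t * b) :=
      mul_le_mul_of_nonneg_left hnx_le (by linarith)
    nlinarith [mul_nonneg (mul_nonneg hθ0.le (by linarith : (0:ℝ) ≤ 1 - t)) ha.le]
  have hq_lba : (1 - θ) * a ≤ ⟪x, w⟫ := by
    refine le_trans ?_ hq_lb
    nlinarith [mul_le_mul_of_nonneg_left hab.le (mul_nonneg ht0 (by linarith : (0:ℝ) ≤ 1 - θ)),
      mul_nonneg (mul_nonneg hθ0.le ha.le) (sub_nonneg.mpr ht1)]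
  have hnx_ge : ⟪x, w⟫ ≤ ‖x‖ := by
    calc ⟪x, w⟫ ≤ ‖x‖ * ‖w‖ := real_inner_le_norm x w
      _ = ‖x‖ := by rw [hw1, mul_one]
  have hxalb : a / 2 ≤ ‖x‖ := le_trans (by nlinarith) (hq_lba.trans hnx_ge)
  have hxpos : 0 < ‖x‖ := by linarith
  -- inner product of d with w
  have hidw : ⟪d, w⟫ = ⟪v, w⟫ - a := by
    rw [hddef, inner_sub_left, hiuw]
  have hs_lb0 : (1 - 2 * θ) * b ≤ ⟪d, w⟫ := by
    rw [hidw]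
    have : a ≤ θ * b := hratio
    linarith
  have hnd_le : ‖d‖ ≤ (1 + θ) * b := by
    have h1 : ‖d‖ ≤ b + a := by
      calc ‖d‖ ≤ ‖v‖ + ‖u‖ := norm_sub_le v u
        _ = b + a := by rw [← hadef, ← hbdef]
    nlinarith
  have hs_lb : (1 - 4 * θ) * ‖d‖ ≤ ⟪d, w⟫ := by
    refine le_trans ?_ hs_lb0
    have h1 : (1 - 4 * θ) * ‖d‖ ≤ (1 - 4 * θ) * ((1 + θ) * b) :=
      mul_le_mul_of_nonneg_left hnd_le (by linarith)
    nlinarith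
  have hq0 : (0 : ℝ) ≤ ⟪x, w⟫ := le_trans (by nlinarith) hq_lba
  have hs0 : (0 : ℝ) ≤ ⟪d, w⟫ := le_trans (by nlinarith [hm0.le]) hs_lb
  -- orthogonal decomposition
  have hkey := perp_inner x d w hw1
  have hxperp := perp_norm x w hw1
  have hdperp := perp_norm d w hw1
  have hX0 : (0 : ℝ) ≤ ‖x - ⟪x, w⟫ • w‖ := norm_nonneg _
  have hD0 : (0 : ℝ) ≤ ‖d - ⟪d, w⟫ • w‖ := norm_nonneg _
  have hcs : -(‖x - ⟪x, w⟫ • w‖ * ‖d - ⟪d, w⟫ • w‖) ≤ ⟪x - ⟪x, w⟫ • w, d - ⟪d, w⟫ • w⟫ :=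
    neg_le_of_abs_le (abs_real_inner_le_norm _ _)
  refine ⟨hd0, hxalb, ?_⟩
  exact scalar_final hθ0 hθsmall hθε hxpos hm0 hq_lb2 hs_lb hq0 hs0 hX0 hD0 hxperp hdperp hcs hkey

section main
variable {E : Type*} [NormedAddCommGroup E] [InnerProductSpace ℝ E]

private lemma inner_gradient_eq [CompleteSpace E] (W : E → ℝ) (a y : E) :
    ⟪gradient W a, y⟫ = fderiv ℝ W a y :=
  InnerProductSpace.toDual_symm_apply

private lemma deriv_grad_line (W : E → ℝ) (hW : ContDiff ℝ 2 W) (u d : E) (t : ℝ) :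
    HasDerivAt (fun s : ℝ => fderiv ℝ W (u + s • d) d)
      (iteratedFDeriv ℝ 2 W (u + t • d) ![d, d]) t := by
  have hF : ContDiff ℝ 1 (fun y => fderiv ℝ W y) :=
    hW.fderiv_right (by norm_num)
  have hg : HasDerivAt (fun s : ℝ => u + s • d) d t := by
    simpa using ((hasDerivAt_id t).smul_const d).const_add u
  have hFd : HasFDerivAt (fun y => fderiv ℝ W y)
      (fderiv ℝ (fun y => fderiv ℝ W y) (u + t • d)) (u + t • d) :=
    (hF.differentiable one_ne_zero).differentiableAt.hasFDerivAt
  have hcomp : HasDerivAt (fun s : ℝ => fderiv ℝ W (u + s • d))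
      (fderiv ℝ (fun y => fderiv ℝ W y) (u + t • d) d) t :=
    hFd.comp_hasDerivAt t hg
  have := hcomp.clm_apply (hasDerivAt_const t d)
  simp only [map_zero, add_zero] at this
  rw [iteratedFDeriv_two_apply]
  simpa using this

private lemma strict_decrease (W : E → ℝ) (hW : ContDiff ℝ 2 W) (u d : E)
    (hneg : ∀ t ∈ Set.Icc (0:ℝ) 1, iteratedFDeriv ℝ 2 W (u + t • d) ![d, d] < 0) :
    fderiv ℝ W (u + d) d < fderiv ℝ W u d := by
  set φ : ℝ → ℝ := fun s => fderiv ℝ W (u + s • d) d with hφ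
  have hder : ∀ t : ℝ, HasDerivAt φ (iteratedFDeriv ℝ 2 W (u + t • d) ![d, d]) t :=
    fun t => deriv_grad_line W hW u d t
  have hcont : ContinuousOn φ (Set.Icc 0 1) :=
    fun t _ => ((hder t).differentiableAt.continuousAt).continuousWithinAt
  have hanti : StrictAntiOn φ (Set.Icc 0 1) := by
    refine strictAntiOn_of_deriv_neg (convex_Icc 0 1) hcont ?_
    intro t ht
    rw [interior_Icc] at ht
    rw [(hder t).deriv]
    exact hneg t (Set.mem_Icc_of_Ioo ht)
  have h01 := hanti (Set.left_mem_Icc.mpr zero_le_one) (Set.right_mem_Icc.mpr zero_le_one)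
    zero_lt_one
  simpa [hφ] using h01

end main

/-- **Concealing the tails: concavity along rays bounds W-monotone sets.**
Let `W : E → ℝ` be `C²` on a finite-dimensional real inner product space and suppose `W` is
concave along rays for large arguments: there are `ε ∈ (0,1)` and `K > 0` such that for every
`a` with `‖a‖ > K` and every nonzero `b` in the `ε`-cone around `a`
(`⟪a, b⟫ > (1 − ε)‖a‖‖b‖`), the Hessian form `D²W(a)(b,b)` is negative. Then every
`W`-monotone set `Ξ` — one with Bregman cost `c(a,b) = W b − W a + ⟪∇W a, a − b⟫ ≥ 0`
for all `a, b ∈ Ξ` — is bounded. -/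
theorem stmt11
    {E : Type*} [NormedAddCommGroup E] [InnerProductSpace ℝ E] [FiniteDimensional ℝ E]
    (W : E → ℝ) (hW : ContDiff ℝ 2 W)
    (hconc : ∃ ε : ℝ, ε ∈ Set.Ioo (0 : ℝ) 1 ∧ ∃ K : ℝ, 0 < K ∧
      ∀ a : E, K < ‖a‖ → ∀ b : E, b ≠ 0 →
        (1 - ε) * (‖a‖ * ‖b‖) < ⟪a, b⟫ →
        iteratedFDeriv ℝ 2 W a ![b, b] < 0) :
    ∀ Ξ : Set E,
      (∀ a ∈ Ξ, ∀ b ∈ Ξ, 0 ≤ W b - W a + ⟪gradient W a, a - b⟫) →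
      Bornology.IsBounded Ξ := by
  obtain ⟨ε, ⟨hε0, hε1⟩, K, hK, hH⟩ := hconc
  intro Ξ hmono
  by_contra hB
  have hub : ∀ R : ℝ, ∃ x ∈ Ξ, R < ‖x‖ := by
    intro R
    by_contra h
    push_neg at h
    exact hB (isBounded_iff_forall_norm_le.mpr ⟨R, h⟩)
  choose g hgΞ hgnorm using hub
  set θ : ℝ := ε ^ 2 / 32 with hθdef
  have hθ0 : 0 < θ := by positivity
  have hθ1 : θ < 1 := by rw [hθdef]; nlinarith
  -- the escaping sequence
  set c : ℕ → E := fun n => Nat.rec (g (2 * K + 1)) (fun _ p => g (‖p‖ / θ)) n with hcdef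
  have hc0 : c 0 = g (2 * K + 1) := rfl
  have hcsucc : ∀ n, c (n + 1) = g (‖c n‖ / θ) := fun _ => rfl
  have hcΞ : ∀ n, c n ∈ Ξ := by
    intro n
    cases n with
    | zero => exact hgΞ _
    | succ k => exact hgΞ _
  have hstep : ∀ n, ‖c n‖ / θ < ‖c (n + 1)‖ := by
    intro n
    rw [hcsucc n]
    exact hgnorm _
  have hlt : ∀ n, ‖c n‖ < ‖c (n + 1)‖ := by
    intro n
    refine lt_of_le_of_lt ?_ (hstep n)
    rw [le_div_iff₀ hθ0]
    nlinarith [norm_nonneg (c n)]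
  have hsm : StrictMono fun n => ‖c n‖ := strictMono_nat_of_lt_succ hlt
  have hcK : ∀ n, 2 * K + 1 < ‖c n‖ := by
    intro n
    calc 2 * K + 1 < ‖c 0‖ := by rw [hc0]; exact hgnorm _
      _ ≤ ‖c n‖ := hsm.monotone (Nat.zero_le n)
  have hcne : ∀ n, c n ≠ 0 := by
    intro n
    have h := hcK n
    intro h0
    rw [h0, norm_zero] at h
    linarith
  have hrat : ∀ m n : ℕ, m < n → ‖c m‖ ≤ θ * ‖c n‖ := by
    intro m n hmn
    cases n with
    | zero => omega
    | succ k =>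
      have h1 : ‖c m‖ ≤ ‖c k‖ := hsm.monotone (by omega)
      have h2 : ‖c k‖ / θ ≤ ‖c (k + 1)‖ := (hstep k).le
      calc ‖c m‖ ≤ ‖c k‖ := h1
        _ = θ * (‖c k‖ / θ) := by field_simp
        _ ≤ θ * ‖c (k + 1)‖ := mul_le_mul_of_nonneg_left h2 hθ0.le
  -- unit directions
  have hf1 : ∀ n, ‖(‖c n‖⁻¹ • c n : E)‖ = 1 := by
    intro n
    simp only [norm_smul, norm_inv, norm_norm]
    exact inv_mul_cancel₀ (norm_ne_zero_iff.mpr (hcne n))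
  have hfs : ∀ n, (‖c n‖⁻¹ • c n : E) ∈ Metric.sphere (0 : E) 1 := by
    intro n
    simpa [mem_sphere_iff_norm] using hf1 n
  -- finite net on the sphere
  obtain ⟨S, hSfin, hScov⟩ :=
    Metric.totallyBounded_iff.mp (isCompact_sphere (0 : E) 1).totallyBounded (ε / 16)
      (by positivity)
  have hcap : ∀ n : ℕ, ∃ y ∈ S, (‖c n‖⁻¹ • c n : E) ∈ Metric.ball y (ε / 16) := by
    intro n
    simpa using hScov (hfs n)
  choose z hzS hzball using hcap
  -- key: two indices sharing a net point give a contradiction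
  have key : ∀ m n : ℕ, m < n → z m = z n → False := by
    intro m n hmn hzeq
    have hdist : dist (‖c m‖⁻¹ • c m : E) (‖c n‖⁻¹ • c n : E) < ε / 8 := by
      have h1 : dist (‖c m‖⁻¹ • c m : E) (z m) < ε / 16 := Metric.mem_ball.mp (hzball m)
      have h2 : dist (‖c n‖⁻¹ • c n : E) (z n) < ε / 16 := Metric.mem_ball.mp (hzball n)
      have h3 : dist (z m) (‖c n‖⁻¹ • c n : E) < ε / 16 := by
        rw [hzeq, dist_comm]
        exact h2
      calc dist (‖c m‖⁻¹ • c m : E) (‖c n‖⁻¹ • c n : E)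
          ≤ dist (‖c m‖⁻¹ • c m : E) (z m) + dist (z m) (‖c n‖⁻¹ • c n : E) :=
            dist_triangle _ _ _
        _ < ε / 16 + ε / 16 := by linarith
        _ = ε / 8 := by ring
    have hinner_f : (1 : ℝ) - θ ≤ ⟪(‖c m‖⁻¹ • c m : E), (‖c n‖⁻¹ • c n : E)⟫ := by
      have hns : ‖(‖c m‖⁻¹ • c m : E) - (‖c n‖⁻¹ • c n : E)‖ ^ 2
          = 2 - 2 * ⟪(‖c m‖⁻¹ • c m : E), (‖c n‖⁻¹ • c n : E)⟫ := by
        rw [norm_sub_sq_real, hf1 m, hf1 n]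
        ring
      have hd : ‖(‖c m‖⁻¹ • c m : E) - (‖c n‖⁻¹ • c n : E)‖ < ε / 8 := by
        rwa [← dist_eq_norm]
      have h2 : ‖(‖c m‖⁻¹ • c m : E) - (‖c n‖⁻¹ • c n : E)‖ ^ 2 ≤ (ε / 8) ^ 2 := by
        nlinarith [norm_nonneg ((‖c m‖⁻¹ • c m : E) - (‖c n‖⁻¹ • c n : E))]
      rw [hθdef]
      nlinarith
    have ham : (0 : ℝ) < ‖c m‖ := norm_pos_iff.mpr (hcne m)
    have han : (0 : ℝ) < ‖c n‖ := norm_pos_iff.mpr (hcne n)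
    have hinner : (1 - θ) * (‖c m‖ * ‖c n‖) ≤ ⟪c m, c n⟫ := by
      have hfm : ⟪(‖c m‖⁻¹ • c m : E), (‖c n‖⁻¹ • c n : E)⟫
          = ‖c m‖⁻¹ * (‖c n‖⁻¹ * ⟪c m, c n⟫) := by
        rw [real_inner_smul_left, real_inner_smul_right]
      have h3 : ⟪c m, c n⟫ = ‖c m‖ * ‖c n‖ * ⟪(‖c m‖⁻¹ • c m : E), (‖c n‖⁻¹ • c n : E)⟫ := by
        rw [hfm]
        field_simp
      rw [h3]
      calc (1 - θ) * (‖c m‖ * ‖c n‖) = (‖c m‖ * ‖c n‖) * (1 - θ) := by ring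
        _ ≤ (‖c m‖ * ‖c n‖) * ⟪(‖c m‖⁻¹ • c m : E), (‖c n‖⁻¹ • c n : E)⟫ :=
            mul_le_mul_of_nonneg_left hinner_f (by positivity)
        _ = ‖c m‖ * ‖c n‖ * ⟪(‖c m‖⁻¹ • c m : E), (‖c n‖⁻¹ • c n : E)⟫ := by ring
    have hratio' : ‖c m‖ ≤ ε ^ 2 / 32 * ‖c n‖ := by
      rw [← hθdef]
      exact hrat m n hmn
    have hdir' : (1 - ε ^ 2 / 32) * (‖c m‖ * ‖c n‖) ≤ ⟪c m, c n⟫ := by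
      rw [← hθdef]
      exact hinner
    have hneg : ∀ t ∈ Set.Icc (0:ℝ) 1,
        iteratedFDeriv ℝ 2 W (c m + t • (c n - c m)) ![c n - c m, c n - c m] < 0 := by
      intro t ht
      obtain ⟨hd0, hx2, hcone⟩ := geom_aux hε0 hε1 (hcne m) hratio' hdir' ht.1 ht.2
      refine hH _ ?_ _ hd0 hcone
      have := hcK m
      linarith
    have hdec := strict_decrease W hW (c m) (c n - c m) hneg
    have hveq : c m + (c n - c m) = c n := by abel
    rw [hveq] at hdec
    haveI : CompleteSpace E := FiniteDimensional.complete ℝ E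
    have h1 := hmono (c m) (hcΞ m) (c n) (hcΞ n)
    have h2 := hmono (c n) (hcΞ n) (c m) (hcΞ m)
    rw [inner_gradient_eq] at h1 h2
    have hmap : fderiv ℝ W (c m) (c m - c n) = - fderiv ℝ W (c m) (c n - c m) := by
      rw [show c m - c n = -(c n - c m) from by abel, map_neg]
    rw [hmap] at h1
    linarith
  -- pigeonhole
  haveI : Finite ↥S := hSfin.to_subtype
  obtain ⟨i, j, hij, hzeq⟩ :=
    Finite.exists_ne_map_eq_of_infinite (fun n : ℕ => (⟨z n, hzS n⟩ : S))
  have hzeq' : z i = z j := congrArg Subtype.val hzeq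
  rcases hij.lt_or_gt with h | h
  · exact key i j h hzeq'
  · exact key j i h hzeq'.symm
end

section
/- Let E be a finite-dimensional real inner product space, H : E → E a self-adjoint positive-definite linear operator, and φ : ℝ → ℝ twice continuously differentiable. Suppose there exist ε₀ > 0 and x₀ ∈ ℝ such that for all x ≥ x₀: φ'(x) ≠ 0 and −φ''(x)/|φ'(x)| > ε₀. Define W(a) = φ(⟪a, H a⟫), whose gradient is ∇W(a) = 2φ'(⟪a, Ha⟫)·Ha. Then every set Ξ ⊆ E satisfying W(b) − W(a) + ⟪2φ'(⟪a, Ha⟫)·Ha, a − b⟫ ≥ 0 for all a, b ∈ Ξ is bounded. -/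
open scoped RealInnerProductSpace
open Filter Real Set

private lemma stmt12_sq_exp (k : ℝ) (hk : 0 < k) :
    Filter.Tendsto (fun r : ℝ => r ^ 2 * Real.exp (-(k * r ^ 2))) atTop (nhds 0) := by
  have h1 : Tendsto (fun u : ℝ => u * Real.exp (-u)) atTop (nhds 0) := by
    simpa using tendsto_pow_mul_exp_neg_atTop_nhds_zero 1
  have h2 : Tendsto (fun r : ℝ => k * r ^ 2) atTop atTop :=
    (tendsto_pow_atTop two_ne_zero).const_mul_atTop hk
  have h3 := (h1.comp h2).const_mul (1 / k)
  simp only [mul_zero] at h3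
  refine h3.congr fun r => ?_
  field_simp
  simp only [Function.comp_apply]

section Aux
variable (φ : ℝ → ℝ) (ε₀ x₁ : ℝ) (hε₀ : 0 < ε₀)
  (hd1 : Differentiable ℝ φ) (hd2 : Differentiable ℝ (deriv φ))
  (hcc : ∀ x, x₁ ≤ x → deriv (deriv φ) x ≤ -(ε₀ * |deriv φ x|))
  (hnz : ∀ x, x₁ ≤ x → deriv φ x ≠ 0)
  (hanti : AntitoneOn (deriv φ) (Set.Ici x₁))

include hd2 hnz in
private lemma stmt12_sign : ∀ t, x₁ ≤ t → (0 < deriv φ x₁ ↔ 0 < deriv φ t) := by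
  intro t ht
  have key : ∀ s, x₁ ≤ s → ∀ u, x₁ ≤ u → 0 < deriv φ s → 0 < deriv φ u := by
    intro s hs u hu hps
    by_contra hnu
    have hnu' : deriv φ u < 0 := lt_of_le_of_ne (not_lt.mp hnu) (hnz u hu)
    have hcont : ContinuousOn (deriv φ) (uIcc s u) := hd2.continuous.continuousOn
    have h0 : (0:ℝ) ∈ uIcc (deriv φ s) (deriv φ u) := by
      rw [Set.mem_uIcc]
      right; exact ⟨hnu'.le, hps.le⟩
    obtain ⟨c, hc, hc0⟩ := intermediate_value_uIcc hcont h0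
    have hcx : x₁ ≤ c := le_trans (le_min hs hu) hc.1
    exact hnz c hcx hc0
  constructor
  · exact fun h => key x₁ le_rfl t ht h
  · intro h
    by_contra h1
    have h1' : deriv φ x₁ < 0 := lt_of_le_of_ne (not_lt.mp h1) (hnz x₁ le_rfl)
    exact absurd (key t ht x₁ le_rfl h) (not_lt.mpr h1'.le)

include hε₀ hd2 hcc in
private lemma stmt12_anti : AntitoneOn (deriv φ) (Set.Ici x₁) := by
  apply antitoneOn_of_deriv_nonpos (convex_Ici _) hd2.continuous.continuousOn
    (hd2.differentiableOn.mono interior_subset)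
  intro t ht
  rw [interior_Ici] at ht
  have := hcc t (le_of_lt ht)
  nlinarith [abs_nonneg (deriv φ t), hε₀]

include hε₀ hd2 hcc hanti in
private lemma stmt12_lin (hneg : ∀ t, x₁ ≤ t → deriv φ t < 0) :
    ∀ t, x₁ ≤ t → deriv φ t ≤ deriv φ x₁ * (1 + ε₀ * (t - x₁)) := by
  have hg : AntitoneOn (fun t => deriv φ t - ε₀ * deriv φ x₁ * t) (Set.Ici x₁) := by
    have hdall : Differentiable ℝ (fun t => deriv φ t - ε₀ * deriv φ x₁ * t) :=
      hd2.sub ((differentiable_id.const_mul _))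
    apply antitoneOn_of_deriv_nonpos (convex_Ici _)
      hdall.continuous.continuousOn (hdall.differentiableOn.mono interior_subset)
    intro t ht
    rw [interior_Ici] at ht
    have hD : HasDerivAt (fun t => deriv φ t - ε₀ * deriv φ x₁ * t)
        (deriv (deriv φ) t - ε₀ * deriv φ x₁ * 1) t :=
      (hd2 t).hasDerivAt.sub ((hasDerivAt_id t).const_mul (ε₀ * deriv φ x₁))
    rw [hD.deriv]
    have h1 := hcc t ht.le
    have h2 : deriv φ t ≤ deriv φ x₁ := hanti self_mem_Ici (mem_Ici.mpr (le_of_lt ht)) ht.le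
    have h3 : |deriv φ t| = -(deriv φ t) := abs_of_neg (hneg t ht.le)
    nlinarith
  intro t ht
  have := hg self_mem_Ici ht ht
  simp only at this
  nlinarith

include hd1 hanti in
private lemma stmt12_mvt : ∀ t, x₁ < t → φ x₁ + (t - x₁) * deriv φ t ≤ φ t := by
  intro t ht
  obtain ⟨c, hc, hceq⟩ := exists_deriv_eq_slope φ ht hd1.continuous.continuousOn
    hd1.differentiableOn
  have h1 : deriv φ t ≤ deriv φ c :=
    hanti (mem_Ici.mpr hc.1.le) (mem_Ici.mpr ht.le) hc.2.le
  rw [hceq] at h1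
  have h2 : 0 < t - x₁ := by linarith
  rw [le_div_iff₀ h2] at h1
  linarith

include hε₀ hd2 hcc in
private lemma stmt12_exp (hpos : ∀ t, x₁ ≤ t → 0 < deriv φ t) :
    ∀ t, x₁ ≤ t → deriv φ t ≤ deriv φ x₁ * Real.exp (ε₀ * x₁) * Real.exp (-(ε₀ * t)) := by
  have hg : AntitoneOn (fun t => Real.exp (ε₀ * t) * deriv φ t) (Set.Ici x₁) := by
    have hdall : Differentiable ℝ (fun t => Real.exp (ε₀ * t) * deriv φ t) :=
      ((differentiable_id.const_mul ε₀).exp).mul hd2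
    apply antitoneOn_of_deriv_nonpos (convex_Ici _)
      hdall.continuous.continuousOn (hdall.differentiableOn.mono interior_subset)
    intro t ht
    rw [interior_Ici] at ht
    have hD : HasDerivAt (fun t => Real.exp (ε₀ * t) * deriv φ t)
        (Real.exp (ε₀ * t) * (ε₀ * 1) * deriv φ t + Real.exp (ε₀ * t) * deriv (deriv φ) t) t :=
      (((hasDerivAt_id t).const_mul ε₀).exp).mul (hd2 t).hasDerivAt
    rw [hD.deriv]
    have h1 := hcc t ht.le
    have h3 : |deriv φ t| = deriv φ t := abs_of_pos (hpos t ht.le)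
    rw [h3] at h1
    have h4 := mul_le_mul_of_nonneg_left h1 (Real.exp_pos (ε₀ * t)).le
    nlinarith
  intro t ht
  have h := hg self_mem_Ici ht ht
  simp only at h
  have he := Real.exp_pos (ε₀ * t)
  have : deriv φ t ≤ Real.exp (ε₀ * x₁) * deriv φ x₁ / Real.exp (ε₀ * t) := by
    rw [le_div_iff₀ he]; linarith
  calc deriv φ t ≤ Real.exp (ε₀ * x₁) * deriv φ x₁ / Real.exp (ε₀ * t) := this
    _ = deriv φ x₁ * Real.exp (ε₀ * x₁) * Real.exp (-(ε₀ * t)) := by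
        rw [Real.exp_neg]; ring

end Aux

set_option maxHeartbeats 1000000 in
/-- **Concave marginal utility implies concealing the tails.**
Let `H` be a self-adjoint positive-definite operator on a finite-dimensional real inner
product space `E` and `φ : ℝ → ℝ` twice continuously differentiable with `φ'(x) ≠ 0` and
`−φ''(x)/|φ'(x)| > ε₀ > 0` for all `x ≥ x₀`. For `W(a) = φ(⟪a, Ha⟫)`, whose gradient is
`2φ'(⟪a,Ha⟫) • Ha`, every `W`-monotone set `Ξ` (nonnegative Bregman cost on `Ξ × Ξ`) is
bounded. -/
theorem stmt12
    {E : Type*} [NormedAddCommGroup E] [InnerProductSpace ℝ E] [FiniteDimensional ℝ E]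
    (H : E →ₗ[ℝ] E) (hsym : H.IsSymmetric)
    (hpos : ∀ x : E, x ≠ 0 → 0 < ⟪x, H x⟫)
    (φ : ℝ → ℝ) (hφ : ContDiff ℝ 2 φ)
    (ε₀ : ℝ) (hε₀ : 0 < ε₀) (x₀ : ℝ)
    (hconc : ∀ x : ℝ, x₀ ≤ x →
      deriv φ x ≠ 0 ∧ ε₀ < -(deriv (deriv φ) x) / |deriv φ x|) :
    ∀ Ξ : Set E,
      (∀ a ∈ Ξ, ∀ b ∈ Ξ,
        0 ≤ φ ⟪b, H b⟫ - φ ⟪a, H a⟫ + ⟪(2 * deriv φ ⟪a, H a⟫) • H a, a - b⟫) →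
      Bornology.IsBounded Ξ := by
  intro Ξ hmono
  by_contra hbnd
  rw [isBounded_iff_forall_norm_le] at hbnd
  push_neg at hbnd
  -- E is nontrivial
  obtain ⟨w, hwΞ, hw⟩ := hbnd 0
  have : Nontrivial E := ⟨⟨w, 0, by intro h; rw [h] at hw; simp at hw⟩⟩
  -- smallest "eigenvalue"
  have hHcont : Continuous H := H.continuous_of_finiteDimensional
  have hfc : Continuous (fun x : E => ⟪x, H x⟫) := continuous_id.inner hHcont
  have hsc : IsCompact (Metric.sphere (0 : E) 1) := isCompact_sphere 0 1
  have hsne : (Metric.sphere (0 : E) 1).Nonempty := NormedSpace.sphere_nonempty.mpr zero_le_one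
  obtain ⟨u, hu, hmin⟩ := hsc.exists_isMinOn hsne hfc.continuousOn
  have hun : ‖u‖ = 1 := by simpa using hu
  set lam : ℝ := ⟪u, H u⟫ with hlamdef
  have hlam : 0 < lam := hpos u (by intro h; rw [h] at hun; simp at hun)
  have hqlow : ∀ x : E, lam * ‖x‖ ^ 2 ≤ ⟪x, H x⟫ := by
    intro x
    rcases eq_or_ne x 0 with rfl | hx
    · simp
    have hn : 0 < ‖x‖ := norm_pos_iff.mpr hx
    have hmem : (‖x‖⁻¹ • x) ∈ Metric.sphere (0 : E) 1 := by
      simp [norm_smul, abs_of_pos (inv_pos.mpr hn), inv_mul_cancel₀ hn.ne']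
    have h1 : ⟪u, H u⟫ ≤ ⟪‖x‖⁻¹ • x, H (‖x‖⁻¹ • x)⟫ := hmin hmem
    have h2 : ⟪‖x‖⁻¹ • x, H (‖x‖⁻¹ • x)⟫ = ‖x‖⁻¹ * (‖x‖⁻¹ * ⟪x, H x⟫) := by
      rw [map_smul, real_inner_smul_left, real_inner_smul_right]
    rw [h2] at h1
    have h3 : lam * ‖x‖ ^ 2 ≤ (‖x‖⁻¹ * (‖x‖⁻¹ * ⟪x, H x⟫)) * ‖x‖ ^ 2 := by
      nlinarith [sq_nonneg ‖x‖]
    have h4 : ‖x‖⁻¹ * (‖x‖⁻¹ * ⟪x, H x⟫) * ‖x‖ ^ 2 = ⟪x, H x⟫ := by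
      rw [pow_two]
      field_simp
    linarith
  -- operator norm bound
  set C : ℝ := ‖LinearMap.toContinuousLinearMap H‖ with hCdef
  have hC0 : 0 ≤ C := norm_nonneg _
  have hib : ∀ a b : E, |⟪H a, b⟫| ≤ C * ‖a‖ * ‖b‖ := by
    intro a b
    calc |⟪H a, b⟫| ≤ ‖H a‖ * ‖b‖ := abs_real_inner_le_norm _ _
      _ ≤ C * ‖a‖ * ‖b‖ := by
          gcongr
          exact (LinearMap.toContinuousLinearMap H).le_opNorm a
  -- rewrite Bregman inequality
  have hB : ∀ a ∈ Ξ, ∀ b ∈ Ξ,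
      0 ≤ φ ⟪b, H b⟫ - φ ⟪a, H a⟫ + 2 * deriv φ ⟪a, H a⟫ * (⟪a, H a⟫ - ⟪H a, b⟫) := by
    intro a ha b hbmem
    have := hmono a ha b hbmem
    rw [real_inner_smul_left, inner_sub_right, hsym a a, mul_sub] at this
    linarith
  -- calculus facts
  have h2φ : ContDiff ℝ (1 + 1) φ := by norm_num; exact hφ
  have hφ1 : ContDiff ℝ 1 (deriv φ) := (contDiff_succ_iff_deriv.mp h2φ).2.2
  obtain ⟨hd2, hc2⟩ := contDiff_one_iff_deriv.mp hφ1
  have hd1 : Differentiable ℝ φ := hφ.differentiable (by norm_num)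
  set x₁ : ℝ := max x₀ 1 with hx₁def
  have hx₁0 : x₀ ≤ x₁ := le_max_left _ _
  have hx₁1 : (1:ℝ) ≤ x₁ := le_max_right _ _
  have hcc : ∀ x, x₁ ≤ x → deriv (deriv φ) x ≤ -(ε₀ * |deriv φ x|) := by
    intro x hx
    obtain ⟨hne, hlt⟩ := hconc x (hx₁0.trans hx)
    have habs : 0 < |deriv φ x| := abs_pos.mpr hne
    rw [lt_div_iff₀ habs] at hlt
    linarith
  have hnz : ∀ x, x₁ ≤ x → deriv φ x ≠ 0 := fun x hx => (hconc x (hx₁0.trans hx)).1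
  have hanti : AntitoneOn (deriv φ) (Set.Ici x₁) := stmt12_anti φ ε₀ x₁ hε₀ hd2 hcc
  have hsame := stmt12_sign φ x₁ hd2 hnz
  rcases lt_or_gt_of_ne (hnz x₁ le_rfl) with hneg | hposs
  · -- φ' < 0 at infinity
    have hnegall : ∀ t, x₁ ≤ t → deriv φ t < 0 := by
      intro t ht
      rcases (hnz t ht).lt_or_gt with h | h
      · exact h
      · exact absurd ((hsame t ht).mpr h) (not_lt.mpr hneg.le)
    have hlin := stmt12_lin φ ε₀ x₁ hε₀ hd2 hcc hanti hnegall
    have hmvt := stmt12_mvt φ x₁ hd1 hanti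
    obtain ⟨b, hbΞ, _⟩ := hbnd 0
    set qb : ℝ := ⟪b, H b⟫ with hqbdef
    -- eventual negativity threshold
    have htb : Tendsto (fun r : ℝ =>
        φ qb - φ x₁ + x₁ * deriv φ x₁ * ε₀ * lam * r ^ 2) atTop atBot := by
      have hx₁pos : (0:ℝ) < x₁ := lt_of_lt_of_le one_pos hx₁1
      have hc₁ : x₁ * deriv φ x₁ * ε₀ * lam < 0 := by
        have h0 : 0 < x₁ * ε₀ * lam := by positivity
        nlinarith [mul_pos h0 (neg_pos.mpr hneg)]
      have h := ((tendsto_pow_atTop two_ne_zero).const_mul_atTop_of_neg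
        (r := x₁ * deriv φ x₁ * ε₀ * lam) hc₁)
      simpa using tendsto_atBot_add_const_left atTop (φ qb - φ x₁) h
    have hev : ∀ᶠ r : ℝ in atTop,
        φ qb - φ x₁ + x₁ * deriv φ x₁ * ε₀ * lam * r ^ 2
          < -(x₁ * deriv φ x₁ * (1 - ε₀ * x₁)) := htb.eventually (eventually_lt_atBot _)
    obtain ⟨R₁, hR₁⟩ := eventually_atTop.mp hev
    set R : ℝ := max R₁ (max (2 * C * ‖b‖ / lam + 1) (Real.sqrt ((x₁ + 1) / lam) + 1)) with hRdef
    obtain ⟨a, haΞ, har⟩ := hbnd R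
    set r : ℝ := ‖a‖ with hrdef
    have hr0 : 0 ≤ r := norm_nonneg _
    have hrR₁ : R₁ ≤ r := le_trans (le_max_left _ _) har.le
    have hr2 : 2 * C * ‖b‖ / lam + 1 ≤ r :=
      le_trans ((le_max_left _ _).trans (le_max_right _ _)) har.le
    have hr3 : Real.sqrt ((x₁ + 1) / lam) + 1 ≤ r :=
      le_trans ((le_max_right _ _).trans (le_max_right _ _)) har.le
    set q : ℝ := ⟪a, H a⟫ with hqdef
    have hqa : lam * r ^ 2 ≤ q := hqlow a
    have hx₁q : x₁ + 1 ≤ lam * r ^ 2 := by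
      have hs : Real.sqrt ((x₁ + 1) / lam) ≤ r := by linarith
      have h1 : (x₁ + 1) / lam ≤ r ^ 2 := by
        rw [← Real.sq_sqrt (by positivity : (0:ℝ) ≤ (x₁ + 1) / lam)]
        exact pow_le_pow_left₀ (Real.sqrt_nonneg _) hs 2
      rw [div_le_iff₀ hlam] at h1
      linarith [mul_comm lam (r ^ 2)]
    have hx₁q' : x₁ < q := by nlinarith
    have hd : deriv φ q < 0 := hnegall q hx₁q'.le
    have hinner : ⟪H a, b⟫ ≤ q / 2 := by
      have h1 : |⟪H a, b⟫| ≤ C * r * ‖b‖ := hib a b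
      have h2 : 2 * C * ‖b‖ ≤ lam * r := by
        rw [div_add' _ _ _ hlam.ne'] at hr2
        rw [div_le_iff₀ hlam] at hr2
        nlinarith
      have h3 : C * r * ‖b‖ ≤ lam * r ^ 2 / 2 := by
        nlinarith [mul_le_mul_of_nonneg_right h2 hr0]
      have h4 := (abs_le.mp h1).2
      linarith [hqa]
    have hBab := hB a haΞ b hbΞ
    rw [← hqdef, ← hqbdef] at hBab
    have h1 : φ x₁ + (q - x₁) * deriv φ q ≤ φ q := hmvt q hx₁q'
    have h3 : 2 * deriv φ q * (q - ⟪H a, b⟫) ≤ deriv φ q * q := by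
      have hnn : 0 ≤ q - 2 * ⟪H a, b⟫ := by linarith
      have key : deriv φ q * (q - 2 * ⟪H a, b⟫) ≤ 0 :=
        mul_nonpos_of_nonpos_of_nonneg hd.le hnn
      linarith [key]
    have hdlin : deriv φ q ≤ deriv φ x₁ * (1 + ε₀ * (q - x₁)) := hlin q hx₁q'.le
    have hdlin2 : deriv φ q ≤ deriv φ x₁ * (1 + ε₀ * (lam * r ^ 2 - x₁)) := by
      have key2 : deriv φ x₁ * (ε₀ * (q - lam * r ^ 2)) ≤ 0 :=
        mul_nonpos_of_nonpos_of_nonneg hneg.le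
          (mul_nonneg hε₀.le (by linarith))
      linarith [hdlin, key2]
    have hfin : x₁ * deriv φ q ≤ x₁ * (deriv φ x₁ * (1 + ε₀ * (lam * r ^ 2 - x₁))) :=
      mul_le_mul_of_nonneg_left hdlin2 (by linarith)
    have hneg2 := hR₁ r hrR₁
    linarith [hBab, h1, h3, hfin, hneg2]
  · -- φ' > 0 at infinity
    have hposall : ∀ t, x₁ ≤ t → 0 < deriv φ t := fun t ht => (hsame t ht).mp hposs
    have hmonoφ : StrictMonoOn φ (Set.Ici x₁) := by
      apply strictMonoOn_of_deriv_pos (convex_Ici _) hd1.continuous.continuousOn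
      intro t ht
      rw [interior_Ici] at ht
      exact hposall t ht.le
    have hexp := stmt12_exp φ ε₀ x₁ hε₀ hd2 hcc hposall
    -- choose b with large quadratic form
    obtain ⟨b, hbΞ, hbr⟩ := hbnd (Real.sqrt (x₁ / lam))
    set qb : ℝ := ⟪b, H b⟫ with hqbdef
    have hqb : x₁ ≤ qb := by
      have h1 : x₁ / lam ≤ ‖b‖ ^ 2 := by
        rw [← Real.sq_sqrt (by positivity : (0:ℝ) ≤ x₁ / lam)]
        exact pow_le_pow_left₀ (Real.sqrt_nonneg _) hbr.le 2
      rw [div_le_iff₀ hlam] at h1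
      linarith [hqlow b]
    set δ : ℝ := φ (qb + 1) - φ qb with hδdef
    have hδ : 0 < δ := sub_pos.mpr
      (hmonoφ (mem_Ici.mpr hqb) (mem_Ici.mpr (by linarith)) (lt_add_one qb))
    set M : ℝ := deriv φ x₁ * Real.exp (ε₀ * x₁) with hMdef
    have hM : 0 < M := mul_pos hposs (Real.exp_pos _)
    set K : ℝ := 2 * M * (C + C * ‖b‖) with hKdef
    have htail : Tendsto (fun r : ℝ => K * (r ^ 2 * Real.exp (-(ε₀ * lam * r ^ 2))))
        atTop (nhds 0) := by
      simpa using (stmt12_sq_exp (ε₀ * lam) (mul_pos hε₀ hlam)).const_mul K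
    have hev : ∀ᶠ r : ℝ in atTop,
        K * (r ^ 2 * Real.exp (-(ε₀ * lam * r ^ 2))) < δ := htail.eventually_lt_const hδ
    obtain ⟨R₂, hR₂⟩ := eventually_atTop.mp hev
    set R : ℝ := max R₂ (max 1 (Real.sqrt ((qb + 1) / lam))) with hRdef
    obtain ⟨a, haΞ, har⟩ := hbnd R
    set r : ℝ := ‖a‖ with hrdef
    have hrR₂ : R₂ ≤ r := le_trans (le_max_left _ _) har.le
    have hr1 : 1 ≤ r := le_trans ((le_max_left _ _).trans (le_max_right _ _)) har.le
    have hr3 : Real.sqrt ((qb + 1) / lam) ≤ r :=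
      le_trans ((le_max_right _ _).trans (le_max_right _ _)) har.le
    set q : ℝ := ⟪a, H a⟫ with hqdef
    have hqa : lam * r ^ 2 ≤ q := hqlow a
    have hqb1 : qb + 1 ≤ lam * r ^ 2 := by
      have h1 : (qb + 1) / lam ≤ r ^ 2 := by
        rw [← Real.sq_sqrt (div_nonneg (by linarith) hlam.le)]
        exact pow_le_pow_left₀ (Real.sqrt_nonneg _) hr3 2
      rw [div_le_iff₀ hlam] at h1
      linarith [mul_comm lam (r ^ 2)]
    have hx₁q : x₁ ≤ q := by linarith
    have hd : 0 < deriv φ q := hposall q hx₁q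
    -- monotone comparison
    have hφq : φ (qb + 1) ≤ φ q := by
      rcases eq_or_lt_of_le (show qb + 1 ≤ q by linarith) with h | h
      · rw [h]
      · exact (hmonoφ (mem_Ici.mpr (by linarith)) (mem_Ici.mpr hx₁q) h).le
    -- bound the inner-product term
    have hI := hib a b
    have hqup : q ≤ C * r ^ 2 := by
      have h1 : ⟪a, H a⟫ ≤ ‖a‖ * ‖H a‖ := real_inner_le_norm a (H a)
      have h2 : ‖H a‖ ≤ C * ‖a‖ := (LinearMap.toContinuousLinearMap H).le_opNorm a
      have h3 : ‖a‖ * ‖H a‖ ≤ ‖a‖ * (C * ‖a‖) :=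
        mul_le_mul_of_nonneg_left h2 (norm_nonneg a)
      rw [hqdef]
      linarith [h1, h3]
    have hP : q - ⟪H a, b⟫ ≤ (C + C * ‖b‖) * r ^ 2 := by
      have h5 := (abs_le.mp hI).1
      have hrr : r ≤ r ^ 2 := by nlinarith
      have h6 := mul_le_mul_of_nonneg_left hrr (mul_nonneg hC0 (norm_nonneg b))
      nlinarith [h5, hqup, h6]
    have hPnn : 0 ≤ (C + C * ‖b‖) * r ^ 2 := by positivity
    have hdexp : deriv φ q ≤ M * Real.exp (-(ε₀ * lam * r ^ 2)) := by
      have h1 := hexp q hx₁q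
      have h2 : Real.exp (-(ε₀ * q)) ≤ Real.exp (-(ε₀ * lam * r ^ 2)) := by
        apply Real.exp_le_exp.mpr
        have := mul_le_mul_of_nonneg_left hqa hε₀.le
        nlinarith [this]
      calc deriv φ q ≤ M * Real.exp (-(ε₀ * q)) := h1
        _ ≤ M * Real.exp (-(ε₀ * lam * r ^ 2)) := mul_le_mul_of_nonneg_left h2 hM.le
    have hT : 2 * deriv φ q * (q - ⟪H a, b⟫) ≤ K * (r ^ 2 * Real.exp (-(ε₀ * lam * r ^ 2))) := by
      have hT1 : 2 * deriv φ q * (q - ⟪H a, b⟫) ≤ 2 * deriv φ q * ((C + C * ‖b‖) * r ^ 2) :=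
        mul_le_mul_of_nonneg_left hP (by linarith)
      have hT2 : 2 * deriv φ q * ((C + C * ‖b‖) * r ^ 2)
          ≤ 2 * (M * Real.exp (-(ε₀ * lam * r ^ 2))) * ((C + C * ‖b‖) * r ^ 2) := by
        apply mul_le_mul_of_nonneg_right _ hPnn
        linarith
      calc 2 * deriv φ q * (q - ⟪H a, b⟫)
          ≤ 2 * (M * Real.exp (-(ε₀ * lam * r ^ 2))) * ((C + C * ‖b‖) * r ^ 2) :=
            le_trans hT1 hT2
        _ = K * (r ^ 2 * Real.exp (-(ε₀ * lam * r ^ 2))) := by rw [hKdef]; ring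
    have hBab := hB a haΞ b hbΞ
    rw [← hqdef, ← hqbdef] at hBab
    have hsmall := hR₂ r hrR₂
    linarith [hBab, hφq, hT, hsmall, hδdef.ge, hδdef.le]
end

section
/- Let E be a finite-dimensional real inner product space with dim E ≥ 1, φ : ℝ → ℝ differentiable, and β > 0 with φ'(β²) > 0. Define W(a) = φ(‖a‖²) and the Bregman cost c(a,b) = φ(‖b‖²) − φ(‖a‖²) + 2φ'(‖a‖²)(‖a‖² − ⟪a, b⟫). Then for every b ∈ E and every a ∈ E with ‖a‖ = β: c(a,b) ≥ φ(‖b‖²) − φ(β²) + 2φ'(β²)·β·(β − ‖b‖). Moreover, if b ≠ 0 then equality holds at a = (β/‖b‖)·b, and if b = 0 then c(a,b) equals the right-hand side for every a with ‖a‖ = β. In particular, the Bregman projection of b ≠ 0 onto the sphere {a : ‖a‖ = β} is the radial projection (β/‖b‖)·b. -/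
open scoped RealInnerProductSpace

/-- **Bregman projection onto a sphere is radial.**
For `W(a) = φ(‖a‖²)` with `φ` differentiable, `β > 0`, `φ'(β²) > 0`, and the Bregman cost
`c(a,b) = φ(‖b‖²) − φ(‖a‖²) + 2φ'(‖a‖²)(‖a‖² − ⟪a,b⟫)`, every point `a` of the sphere of
radius `β` satisfies `c(a,b) ≥ φ(‖b‖²) − φ(β²) + 2φ'(β²)β(β − ‖b‖)`; for `b ≠ 0` equality
holds at the radial projection `a = (β/‖b‖) • b`, and for `b = 0` equality holds at every
point of the sphere. -/
theorem stmt13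
    {E : Type*} [NormedAddCommGroup E] [InnerProductSpace ℝ E] [FiniteDimensional ℝ E]
    (hdim : 1 ≤ Module.finrank ℝ E)
    (φ : ℝ → ℝ) (hφ : Differentiable ℝ φ)
    (β : ℝ) (hβ : 0 < β) (hφ' : 0 < deriv φ (β ^ 2))
    (c : E → E → ℝ)
    (hc : ∀ a b : E,
      c a b = φ (‖b‖ ^ 2) - φ (‖a‖ ^ 2) + 2 * deriv φ (‖a‖ ^ 2) * (‖a‖ ^ 2 - ⟪a, b⟫)) :
    ∀ b : E,
      (∀ a : E, ‖a‖ = β →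
        φ (‖b‖ ^ 2) - φ (β ^ 2) + 2 * deriv φ (β ^ 2) * β * (β - ‖b‖) ≤ c a b) ∧
      (b ≠ 0 →
        c ((β / ‖b‖) • b) b
          = φ (‖b‖ ^ 2) - φ (β ^ 2) + 2 * deriv φ (β ^ 2) * β * (β - ‖b‖)) ∧
      (b = 0 → ∀ a : E, ‖a‖ = β →
        c a b = φ (‖b‖ ^ 2) - φ (β ^ 2) + 2 * deriv φ (β ^ 2) * β * (β - ‖b‖)) := by
  intro b
  refine ⟨fun a ha => ?_, fun hb => ?_, fun hb a ha => ?_⟩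
  · rw [hc, ha]
    have h1 : ⟪a, b⟫ ≤ β * ‖b‖ := by
      calc ⟪a, b⟫ ≤ ‖a‖ * ‖b‖ := real_inner_le_norm a b
        _ = β * ‖b‖ := by rw [ha]
    nlinarith [hφ']
  · have hb' : (0:ℝ) < ‖b‖ := norm_pos_iff.mpr hb
    set a := (β / ‖b‖) • b with hadef
    have ha : ‖a‖ = β := by
      rw [hadef, norm_smul, Real.norm_eq_abs, abs_of_pos (by positivity), div_mul_cancel₀]
      exact hb'.ne'
    have hi : ⟪a, b⟫ = β * ‖b‖ := by
      rw [hadef, real_inner_smul_left, real_inner_self_eq_norm_sq]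
      field_simp
    rw [hc, ha, hi]; ring
  · rw [hc, ha, hb]
    simp [real_inner_self_eq_norm_sq]
    ring
end

section
/- Let E be a finite-dimensional real inner product space with dim E ≥ 1, and let μ₀ be a Borel probability measure on E with μ₀({0}) = 0 that is invariant under every linear isometry of E. Let ψ : ℝ → ℝ be measurable with ψ ≥ 0, define g(ω) = ψ(‖ω‖²)·ω, assume ω ↦ ‖g(ω)‖ is μ₀-integrable, and set β = ∫ ‖g(ω)‖ dμ₀(ω) > 0. Let φ : ℝ → ℝ be differentiable with φ'(β²) > 0, set W(a) = φ(‖a‖²), assume ω ↦ φ(‖g(ω)‖²) is μ₀-integrable, and assume that for every b ∈ E with ‖b‖ ≤ sup_{x ≥ 0} x·ψ(x²): φ(‖b‖²) − φ(β²) + 2φ'(β²)·β·(β − ‖b‖) ≤ 0. Define a(ω) = (β/‖ω‖)·ω for ω ≠ 0 (and a(0) = 0). Then for every measurable b : E → E that equals μ₀-a.e. the conditional expectation of g given the σ-algebra generated by b, and such that ω ↦ φ(‖b(ω)‖²) and ω ↦ ⟪2φ'(‖b(ω)‖²)·b(ω), b(ω) − g(ω)⟫ are μ₀-integrable, one has ∫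 W(a(ω)) dμ₀(ω) ≥ ∫ W(b(ω)) dμ₀(ω). -/
open MeasureTheory
open scoped RealInnerProductSpace

/-- **Revealing only the direction is optimal: the sphere policy.**
Let `μ₀` be a rotation-invariant Borel probability measure on a finite-dimensional real inner
product space `E` (`dim E ≥ 1`) with `μ₀ {0} = 0`. Let `g(ω) = ψ(‖ω‖²) • ω` with `ψ ≥ 0` and
`‖g‖` integrable, `β = ∫ ‖g ω‖ ∂μ₀ > 0`, and let `φ` be differentiable with `φ'(β²) > 0`,
`φ(‖g(·)‖²)` integrable, and the tangent-line condition
`φ(‖b‖²) − φ(β²) + 2φ'(β²)β(β − ‖b‖) ≤ 0` for every `b` with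
`‖b‖ ≤ sup_{x ≥ 0} x ψ(x²)`. Then the radial policy `a(ω) = (β/‖ω‖) • ω` (with `a 0 = 0`)
yields an expected value of `W = φ(‖·‖²)` at least that of any feasible policy `b`
(measurable, equal a.e. to the conditional expectation of `g` given `σ(b)`, with the stated
integrability). -/
theorem stmt14
    {E : Type*} [NormedAddCommGroup E] [InnerProductSpace ℝ E] [FiniteDimensional ℝ E]
    [MeasurableSpace E] [BorelSpace E]
    (hdim : 1 ≤ Module.finrank ℝ E)
    (μ₀ : Measure E) [IsProbabilityMeasure μ₀]
    (hzero : μ₀ {0} = 0)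
    (hrot : ∀ f : E ≃ₗᵢ[ℝ] E, μ₀.map f = μ₀)
    (ψ : ℝ → ℝ) (hψmeas : Measurable ψ) (hψnonneg : ∀ x : ℝ, 0 ≤ ψ x)
    (g : E → E) (hg : ∀ ω : E, g ω = ψ (‖ω‖ ^ 2) • ω)
    (hgint : Integrable (fun ω => ‖g ω‖) μ₀)
    (β : ℝ) (hβdef : β = ∫ ω, ‖g ω‖ ∂μ₀) (hβpos : 0 < β)
    (φ : ℝ → ℝ) (hφ : Differentiable ℝ φ) (hφ' : 0 < deriv φ (β ^ 2))
    (hφgint : Integrable (fun ω => φ (‖g ω‖ ^ 2)) μ₀)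
    (htangent : ∀ b : E,
      (‖b‖ : EReal) ≤ ⨆ (x : ℝ) (_ : 0 ≤ x), ((x * ψ (x ^ 2) : ℝ) : EReal) →
      φ (‖b‖ ^ 2) - φ (β ^ 2) + 2 * deriv φ (β ^ 2) * β * (β - ‖b‖) ≤ 0)
    (a : E → E) (ha0 : a 0 = 0)
    (ha : ∀ ω : E, ω ≠ 0 → a ω = (β / ‖ω‖) • ω) :
    ∀ b : E → E, Measurable b →
      b =ᵐ[μ₀] μ₀[g | MeasurableSpace.comap b inferInstance] →
      Integrable (fun ω => φ (‖b ω‖ ^ 2)) μ₀ →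
      Integrable (fun ω => ⟪(2 * deriv φ (‖b ω‖ ^ 2)) • b ω, b ω - g ω⟫) μ₀ →
      ∫ ω, φ (‖b ω‖ ^ 2) ∂μ₀ ≤ ∫ ω, φ (‖a ω‖ ^ 2) ∂μ₀ := by
  intro b hbmeas hbae hbint1 _hbint2
  have hm : MeasurableSpace.comap b inferInstance ≤ (inferInstance : MeasurableSpace E) :=
    hbmeas.comap_le
  -- g is integrable
  have hgmeas : Measurable g := by
    have : Measurable fun ω : E => ψ (‖ω‖ ^ 2) :=
      hψmeas.comp ((measurable_norm).pow_const 2)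
    rw [funext hg]; exact this.smul measurable_id
  have hgInt : Integrable g μ₀ :=
    (integrable_norm_iff hgmeas.aestronglyMeasurable).mp hgint
  -- b is integrable
  have hbInt : Integrable b μ₀ := integrable_condExp.congr hbae.symm
  -- norm of g formula
  have hgnorm : ∀ y : E, ‖g y‖ = ‖y‖ * ψ (‖y‖ ^ 2) := by
    intro y
    rw [hg, norm_smul, Real.norm_eq_abs, abs_of_nonneg (hψnonneg _), mul_comm]
  -- kernel representation
  have hker : b =ᵐ[μ₀] fun ω => ∫ y, g y ∂(ProbabilityTheory.condExpKernel μ₀ (MeasurableSpace.comap b inferInstance)) ω :=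
    hbae.trans (ProbabilityTheory.condExp_ae_eq_integral_condExpKernel hm hgInt)
  have hkerN : (μ₀[(fun ω => ‖g ω‖)|MeasurableSpace.comap b inferInstance]) =ᵐ[μ₀]
      fun ω => ∫ y, ‖g y‖ ∂(ProbabilityTheory.condExpKernel μ₀ (MeasurableSpace.comap b inferInstance)) ω :=
    ProbabilityTheory.condExp_ae_eq_integral_condExpKernel hm hgint
  -- a.e. bound ‖b ω‖ ≤ condexp ‖g‖
  have hkey : ∀ᵐ ω ∂μ₀, ‖b ω‖ ≤ (μ₀[(fun ω => ‖g ω‖)|MeasurableSpace.comap b inferInstance]) ω := by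
    filter_upwards [hker, hkerN] with ω h1 h2
    rw [h1, h2]
    exact norm_integral_le_integral_norm _
  -- integral of ‖b‖ is at most β
  have hbnormint : ∫ ω, ‖b ω‖ ∂μ₀ ≤ β := by
    calc ∫ ω, ‖b ω‖ ∂μ₀ ≤ ∫ ω, (μ₀[(fun ω => ‖g ω‖)|MeasurableSpace.comap b inferInstance]) ω ∂μ₀ :=
          integral_mono_ae hbInt.norm integrable_condExp hkey
      _ = ∫ ω, ‖g ω‖ ∂μ₀ := integral_condExp hm
      _ = β := hβdef.symm
  -- the tangent inequality holds a.e. at b ω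
  have htang_ae : ∀ᵐ ω ∂μ₀,
      φ (‖b ω‖ ^ 2) - φ (β ^ 2) + 2 * deriv φ (β ^ 2) * β * (β - ‖b ω‖) ≤ 0 := by
    set S : EReal := ⨆ (x : ℝ) (_ : 0 ≤ x), ((x * ψ (x ^ 2) : ℝ) : EReal) with hS_def
    by_cases hS : S = ⊤
    · filter_upwards with ω
      exact htangent (b ω) (by rw [hS]; exact le_top)
    · have hle : ∀ y : E, ((‖g y‖ : ℝ) : EReal) ≤ S := by
        intro y
        rw [hgnorm y]
        exact le_iSup₂ (f := fun (x : ℝ) (_ : 0 ≤ x) => ((x * ψ (x ^ 2) : ℝ) : EReal))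
          ‖y‖ (norm_nonneg y)
      have hSbot : S ≠ ⊥ := by
        intro h
        have := hle 0
        rw [h] at this
        exact (EReal.bot_lt_coe _).not_ge this
      set M : ℝ := S.toReal with hM_def
      have hSM : S = (M : EReal) := (EReal.coe_toReal hS hSbot).symm
      have hgM : ∀ y : E, ‖g y‖ ≤ M := by
        intro y
        have := hle y
        rw [hSM] at this
        exact_mod_cast this
      have hbM : ∀ᵐ ω ∂μ₀, ‖b ω‖ ≤ M := by
        filter_upwards [hker] with ω h1
        rw [h1]
        calc ‖∫ y, g y ∂(ProbabilityTheory.condExpKernel μ₀ (MeasurableSpace.comap b inferInstance)) ω‖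
            ≤ M * (((ProbabilityTheory.condExpKernel μ₀ (MeasurableSpace.comap b inferInstance)) ω) Set.univ).toReal :=
              norm_integral_le_of_norm_le_const (Filter.Eventually.of_forall hgM)
          _ = M := by simp
      filter_upwards [hbM] with ω hω
      exact htangent (b ω) (by rw [hSM]; exact_mod_cast hω)
  -- RHS equals φ (β ^ 2)
  have hRHS : ∫ ω, φ (‖a ω‖ ^ 2) ∂μ₀ = φ (β ^ 2) := by
    have hne : ∀ᵐ ω ∂μ₀, ω ≠ 0 := by
      rw [ae_iff]
      simpa using hzero
    have : (fun ω => φ (‖a ω‖ ^ 2)) =ᵐ[μ₀] fun _ => φ (β ^ 2) := by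
      filter_upwards [hne] with ω hω
      have hn : (0:ℝ) < ‖ω‖ := norm_pos_iff.mpr hω
      rw [ha ω hω, norm_smul, Real.norm_eq_abs, abs_of_pos (div_pos hβpos hn),
        div_mul_cancel₀ _ hn.ne']
    rw [integral_congr_ae this]
    simp
  rw [hRHS]
  -- conclude
  set c : ℝ := 2 * deriv φ (β ^ 2) * β with hc_def
  have hc : 0 < c := by positivity
  have hInt2 : Integrable (fun ω => φ (β ^ 2) + c * (‖b ω‖ - β)) μ₀ := by
    apply (integrable_const _).add
    exact ((hbInt.norm.sub (integrable_const _)).const_mul c)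
  calc ∫ ω, φ (‖b ω‖ ^ 2) ∂μ₀ ≤ ∫ ω, (φ (β ^ 2) + c * (‖b ω‖ - β)) ∂μ₀ := by
        apply integral_mono_ae hbint1 hInt2
        filter_upwards [htang_ae] with ω hω
        nlinarith [hω]
    _ = φ (β ^ 2) + c * ((∫ ω, ‖b ω‖ ∂μ₀) - β) := by
        have h1 : Integrable (fun ω => ‖b ω‖ - β) μ₀ := hbInt.norm.sub (integrable_const _)
        have h2 : Integrable (fun ω => c * (‖b ω‖ - β)) μ₀ := h1.const_mul c
        rw [integral_add (integrable_const _) h2, integral_const, integral_const_mul,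
          integral_sub hbInt.norm (integrable_const _), integral_const]
        simp
    _ ≤ φ (β ^ 2) := by nlinarith [hbnormint]
end

section
/- Let E be a finite-dimensional real inner product space, μ a Borel probability measure on E with ∫ ‖x‖ dμ(x) < ∞, and A : E → E a continuous linear map. Suppose that the conditional expectation of the identity map x ↦ x given the σ-algebra generated by x ↦ A(x) equals x ↦ A(x) μ-almost everywhere. Then A(A(x)) = A(x) for μ-almost every x. If in addition the topological support of μ spans E, then A ∘ A = A, i.e. A is a linear projection. -/
open MeasureTheory

/-- **Linear conditional expectations force a projection.**
Let `μ` be a Borel probability measure with integrable norm on a finite-dimensional real inner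
product space `E`, and `A : E → E` a continuous linear map such that the conditional
expectation of the identity given the σ-algebra generated by `x ↦ A x` equals `x ↦ A x`
`μ`-a.e. Then `A (A x) = A x` for `μ`-a.e. `x`; and if the topological support of `μ`
(the set of points all of whose neighborhoods have positive measure) spans `E`, then
`A ∘ A = A`, i.e. `A` is a linear projection. -/
theorem stmt15
    {E : Type*} [NormedAddCommGroup E] [InnerProductSpace ℝ E] [FiniteDimensional ℝ E]
    [MeasurableSpace E] [BorelSpace E]
    (μ : Measure E) [IsProbabilityMeasure μ]
    (hint : Integrable (fun x => ‖x‖) μ)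
    (A : E →L[ℝ] E)
    (hcond : (fun x => A x)
      =ᵐ[μ] μ[(fun x => x) | MeasurableSpace.comap (fun x => A x) inferInstance]) :
    (∀ᵐ x ∂μ, A (A x) = A x) ∧
    (Submodule.span ℝ {x : E | ∀ U ∈ nhds x, μ U ≠ 0} = ⊤ →
      ∀ x : E, A (A x) = A x) := by
  have hm : MeasurableSpace.comap (fun x => A x) inferInstance ≤
      (inferInstance : MeasurableSpace E) := measurable_iff_comap_le.mp A.measurable
  haveI : SigmaFinite (μ.trim hm) := by
    haveI : IsFiniteMeasure (μ.trim hm) := isFiniteMeasure_trim hm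
    infer_instance
  -- integrability of the identity
  have hid : Integrable (fun x : E => x) μ :=
    (integrable_norm_iff aestronglyMeasurable_id).mp hint
  have hAid : Integrable (fun x => A x) μ := A.integrable_comp hid
  -- `fun x => A x` is strongly measurable w.r.t. `m`
  have hAsm : StronglyMeasurable[MeasurableSpace.comap (fun x => A x) inferInstance]
      (fun x => A x) :=
    (Measurable.stronglyMeasurable (measurable_iff_comap_le.mpr le_rfl))
  -- so its conditional expectation is itself
  have hAcond : μ[(fun x => A x) | MeasurableSpace.comap (fun x => A x) inferInstance] = fun x => A x :=
    condExp_of_stronglyMeasurable hm hAsm hAid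
  -- `A ∘ condexp(id)` is the conditional expectation of `A ∘ id`
  have hcomm : (fun x => A (condExp (MeasurableSpace.comap (fun x => A x) inferInstance) μ (fun y : E => y) x)) =ᵐ[μ] μ[(fun x => A x) | MeasurableSpace.comap (fun x => A x) inferInstance] := by
    refine ae_eq_condExp_of_forall_setIntegral_eq hm hAid
      (fun s _ _ => (A.integrable_comp integrable_condExp).integrableOn)
      (fun s hs hμs => ?_) ?_
    · rw [A.integral_comp_comm integrable_condExp.integrableOn,
        setIntegral_condExp hm hid hs, A.integral_comp_comm hid.integrableOn]
    · exact StronglyMeasurable.aestronglyMeasurable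
        (A.continuous.comp_stronglyMeasurable stronglyMeasurable_condExp)
  have hae : ∀ᵐ x ∂μ, A (A x) = A x := by
    have h1 : (fun x => A (A x)) =ᵐ[μ] fun x => A (condExp (MeasurableSpace.comap (fun x => A x) inferInstance) μ (fun y : E => y) x) :=
      hcond.fun_comp A
    have h2 : (fun x => A (A x)) =ᵐ[μ] fun x => A x := by
      calc (fun x => A (A x)) =ᵐ[μ] fun x => A (condExp (MeasurableSpace.comap (fun x => A x) inferInstance) μ (fun y : E => y) x) := h1
        _ =ᵐ[μ] μ[(fun x => A x) | MeasurableSpace.comap (fun x => A x) inferInstance] := hcomm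
        _ = fun x => A x := hAcond
    exact h2
  refine ⟨hae, fun hspan x => ?_⟩
  -- the a.e. identity holds on the support, which spans
  set K : Submodule ℝ E := LinearMap.ker ((A.comp A : E →ₗ[ℝ] E) - (A : E →ₗ[ℝ] E)) with hK
  have hSK : {x : E | ∀ U ∈ nhds x, μ U ≠ 0} ⊆ (K : Set E) := by
    intro y hy
    by_contra hyK
    have hopen : IsOpen {x : E | A (A x) ≠ A x} := by
      have : IsClosed {x : E | A (A x) = A x} :=
        isClosed_eq (A.continuous.comp A.continuous) A.continuous
      exact this.isOpen_compl
    have hymem : y ∈ {x : E | A (A x) ≠ A x} := by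
      intro h
      exact hyK (by simp [hK, LinearMap.mem_ker, sub_eq_zero, h])
    have hnhds : {x : E | A (A x) ≠ A x} ∈ nhds y := hopen.mem_nhds hymem
    have hzero : μ {x : E | A (A x) ≠ A x} = 0 := hae
    exact hy _ hnhds hzero
  have hKtop : K = ⊤ := by
    rw [← top_le_iff, ← hspan]
    exact Submodule.span_le.mpr hSK
  have hxK : x ∈ K := hKtop ▸ Submodule.mem_top
  have := (LinearMap.mem_ker).mp hxK
  simpa [sub_eq_zero] using this
end

section
/- Let N ≥ 1, and let g, d : {1,…,N} → ℝ with g(i) ≠ 0 and d(i) ≠ 0 for all i. Let B be the symmetric (N+1)×(N+1) real matrix with B(0,0) = 0, B(0,i) = B(i,0) = g(i) for 1 ≤ i ≤ N, B(i,i) = d(i) for 1 ≤ i ≤ N, and all other entries zero. Set q = −∑_{i=1}^N g(i)²/d(i) and assume q ≠ 0. Then the number of positive eigenvalues of B (counted with multiplicity) equals #{i : d(i) > 0} + 1 if q > 0, and equals #{i : d(i) > 0} if q < 0. -/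
open Matrix Finset Module

noncomputable section
namespace Stmt16Aux

variable {n : ℕ} {A : Matrix (Fin n) (Fin n) ℝ}

lemma repr_eq (hA : A.IsHermitian) (x : EuclideanSpace ℝ (Fin n)) (i : Fin n) :
    hA.eigenvectorBasis.repr x i = (hA.eigenvectorBasis i : Fin n → ℝ) ⬝ᵥ (x : Fin n → ℝ) := by
  rw [hA.eigenvectorBasis.repr_apply_apply]
  simp [PiLp.inner_apply, dotProduct, mul_comm]

lemma repr_mulVec (hA : A.IsHermitian) (x : EuclideanSpace ℝ (Fin n)) (i : Fin n) :
    hA.eigenvectorBasis.repr (WithLp.toLp 2 (A *ᵥ x)) i = hA.eigenvalues i * hA.eigenvectorBasis.repr x i := by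
  have hAt : Aᵀ = A := by simpa using hA.eq
  have hmv : A *ᵥ (hA.eigenvectorBasis i : Fin n → ℝ)
      = hA.eigenvalues i • (hA.eigenvectorBasis i : Fin n → ℝ) := hA.mulVec_eigenvectorBasis i
  rw [repr_eq, repr_eq, WithLp.ofLp_toLp, dotProduct_mulVec, ← mulVec_transpose, hAt, hmv, smul_dotProduct]
  rfl

lemma quad_eq_sum (hA : A.IsHermitian) (x : EuclideanSpace ℝ (Fin n)) :
    (x : Fin n → ℝ) ⬝ᵥ (A *ᵥ x) = ∑ i, hA.eigenvalues i * (hA.eigenvectorBasis.repr x i)^2 := by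
  have h1 : (x : Fin n → ℝ) ⬝ᵥ (A *ᵥ x)
      = (inner ℝ x (WithLp.toLp 2 (A *ᵥ x : Fin n → ℝ) : EuclideanSpace ℝ (Fin n)) : ℝ) := by
    simp [PiLp.inner_apply, dotProduct, mul_comm]
  rw [h1, ← hA.eigenvectorBasis.repr.inner_map_map x (WithLp.toLp 2 (A *ᵥ x))]
  simp only [PiLp.inner_apply, RCLike.inner_apply, conj_trivial]
  refine Finset.sum_congr rfl fun i _ => ?_
  rw [show (hA.eigenvectorBasis.repr (WithLp.toLp 2 (A *ᵥ x : Fin n → ℝ) : EuclideanSpace ℝ (Fin n))) i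
      = hA.eigenvalues i * hA.eigenvectorBasis.repr x i from repr_mulVec hA x i]
  ring

lemma finrank_span_image {M : Type*} [AddCommGroup M] [Module ℝ M]
    {m : ℕ} {v : Fin m → M} (li : LinearIndependent ℝ v) (S : Finset (Fin m)) :
    finrank ℝ (Submodule.span ℝ (v '' (S : Set (Fin m)))) = S.card := by
  classical
  have h1 : v '' (S : Set (Fin m)) = ((S.image v : Finset M) : Set M) := by
    rw [Finset.coe_image]
  have hsub : ((S.image v : Finset M) : Set M) ⊆ Set.range v := by
    intro x hx
    simp only [Finset.coe_image] at hx
    exact Set.image_subset_range _ _ hx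
  rw [h1, finrank_span_finset_eq_card ((LinearIndependent.linearIndepOn_id li).mono hsub),
    Finset.card_image_of_injective _ (LinearIndependent.injective li)]

lemma exists_ne_zero_mem_inf {E : Type*} [AddCommGroup E] [Module ℝ E] [FiniteDimensional ℝ E]
    (U₁ U₂ : Submodule ℝ E) (h : finrank ℝ E < finrank ℝ U₁ + finrank ℝ U₂) :
    ∃ x, x ∈ U₁ ∧ x ∈ U₂ ∧ x ≠ 0 := by
  by_contra hc
  push_neg at hc
  have hbot : U₁ ⊓ U₂ = ⊥ := by
    rw [Submodule.eq_bot_iff]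
    intro x hx
    by_contra hx0
    exact hx0 (by by_contra h0; exact h0 (hc x hx.1 hx.2))
  have := Submodule.finrank_sup_add_finrank_inf_eq U₁ U₂
  rw [hbot, finrank_bot, add_zero] at this
  have h2 := Submodule.finrank_le (U₁ ⊔ U₂)
  omega

/-- Sylvester-type counting: if the form is positive on `V \ {0}` and nonpositive on `W`,
with complementary dimensions, then `#positive eigenvalues = dim V`. -/
lemma inertia (hA : A.IsHermitian) (V W : Submodule ℝ (EuclideanSpace ℝ (Fin n)))
    (hdim : finrank ℝ V + finrank ℝ W = n)
    (hV : ∀ x : EuclideanSpace ℝ (Fin n), x ∈ V → x ≠ 0 → 0 < (x : Fin n → ℝ) ⬝ᵥ (A *ᵥ x))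
    (hW : ∀ x : EuclideanSpace ℝ (Fin n), x ∈ W → (x : Fin n → ℝ) ⬝ᵥ (A *ᵥ x) ≤ 0) :
    (Finset.univ.filter fun j => 0 < hA.eigenvalues j).card = finrank ℝ V := by
  classical
  set b := hA.eigenvectorBasis with hb
  set P : Finset (Fin n) := Finset.univ.filter fun j => 0 < hA.eigenvalues j with hP
  set Ep : Submodule ℝ (EuclideanSpace ℝ (Fin n)) :=
    Submodule.span ℝ (b.toBasis '' (P : Set (Fin n))) with hEp
  set Em : Submodule ℝ (EuclideanSpace ℝ (Fin n)) :=
    Submodule.span ℝ (b.toBasis '' ((Pᶜ : Finset (Fin n)) : Set (Fin n))) with hEm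
  have hrankEp : finrank ℝ Ep = P.card := finrank_span_image b.toBasis.linearIndependent _
  have hrankEm : finrank ℝ Em = Pᶜ.card := finrank_span_image b.toBasis.linearIndependent _
  have hcards : P.card + Pᶜ.card = n := by
    rw [Finset.card_add_card_compl]; simp
  -- repr vanishing outside span index set
  have hsupp : ∀ (S : Finset (Fin n)) (x : EuclideanSpace ℝ (Fin n)),
      x ∈ Submodule.span ℝ (b.toBasis '' (S : Set (Fin n))) → ∀ i ∉ S, b.repr x i = 0 := by
    intro S x hx i hi
    rw [← b.coe_toBasis_repr_apply]
    have := (b.toBasis.mem_span_image).mp hx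
    by_contra h0
    exact hi (this (Finsupp.mem_support_iff.mpr h0))
  -- form positive on Ep \ 0
  have hEppos : ∀ x : EuclideanSpace ℝ (Fin n), x ∈ Ep → x ≠ 0 →
      0 < (x : Fin n → ℝ) ⬝ᵥ (A *ᵥ x) := by
    intro x hx hx0
    rw [quad_eq_sum hA]
    have hnonneg : ∀ i ∈ Finset.univ, (0:ℝ) ≤ hA.eigenvalues i * (b.repr x i)^2 := by
      intro i _
      by_cases hiP : i ∈ P
      · exact mul_nonneg (le_of_lt (by simpa [hP] using (Finset.mem_filter.mp hiP).2)) (sq_nonneg _)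
      · rw [hsupp P x hx i hiP]; simp
    obtain ⟨i, hi⟩ : ∃ i, b.repr x i ≠ 0 := by
      by_contra h0
      push_neg at h0
      apply hx0
      have : b.repr x = 0 := by ext i; exact h0 i
      simpa using congrArg b.repr.symm this
    have hiP : i ∈ P := by
      by_contra hiP; exact hi (hsupp P x hx i hiP)
    refine Finset.sum_pos' hnonneg ⟨i, Finset.mem_univ i, ?_⟩
    exact mul_pos (by simpa [hP] using (Finset.mem_filter.mp hiP).2) (by positivity)
  -- form nonpositive on Em
  have hEmneg : ∀ x : EuclideanSpace ℝ (Fin n), x ∈ Em →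
      (x : Fin n → ℝ) ⬝ᵥ (A *ᵥ x) ≤ 0 := by
    intro x hx
    rw [quad_eq_sum hA]
    refine Finset.sum_nonpos fun i _ => ?_
    by_cases hiP : i ∈ P
    · rw [hsupp Pᶜ x hx i (by simpa using hiP)]; simp
    · have : hA.eigenvalues i ≤ 0 := by
        by_contra h; exact hiP (Finset.mem_filter.mpr ⟨Finset.mem_univ i, lt_of_not_ge h⟩)
      exact mul_nonpos_of_nonpos_of_nonneg this (sq_nonneg _)
  have hfr : finrank ℝ (EuclideanSpace ℝ (Fin n)) = n := finrank_euclideanSpace_fin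
  -- dim V ≤ P.card
  have h1 : finrank ℝ V ≤ P.card := by
    by_contra hlt
    push_neg at hlt
    obtain ⟨x, hxV, hxE, hx0⟩ := exists_ne_zero_mem_inf V Em (by omega)
    exact absurd (hEmneg x hxE) (not_le.mpr (hV x hxV hx0))
  have h2 : P.card ≤ finrank ℝ V := by
    by_contra hlt
    push_neg at hlt
    obtain ⟨x, hxE, hxW, hx0⟩ := exists_ne_zero_mem_inf Ep W (by omega)
    exact absurd (hW x hxW) (not_le.mpr (hEppos x hxE hx0))
  omega



variable {N : ℕ} (g d : Fin N → ℝ)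

def u : EuclideanSpace ℝ (Fin (N+1)) := WithLp.toLp 2 (Fin.cons 1 (fun i => -(g i / d i)))

def w : Fin (N+1) → EuclideanSpace ℝ (Fin (N+1)) :=
  Fin.cons (u g d) (fun i => WithLp.toLp 2 (Pi.single i.succ 1))

lemma coord_sum (c : Fin (N+1) → ℝ) :
    ((∑ j, c j • w g d j : EuclideanSpace ℝ (Fin (N+1))) : Fin (N+1) → ℝ)
      = Fin.cons (c 0) (fun i => c i.succ - c 0 * (g i / d i)) := by
  have hr : ((∑ j, c j • w g d j : EuclideanSpace ℝ (Fin (N+1))) : Fin (N+1) → ℝ)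
      = ∑ j, c j • (w g d j : Fin (N+1) → ℝ) := by simp [WithLp.ofLp_sum]
  rw [hr]
  funext k
  rw [Finset.sum_apply]
  induction k using Fin.cases with
  | zero =>
      rw [Fin.sum_univ_succ]
      simp [w, u, Fin.cons_zero, Fin.cons_succ, Pi.single_eq_of_ne (Fin.succ_ne_zero _).symm]
  | succ k =>
      rw [Fin.sum_univ_succ]
      simp only [w, u, Fin.cons_zero, Fin.cons_succ, Pi.smul_apply, smul_eq_mul, WithLp.ofLp_toLp]
      rw [Finset.sum_eq_single k (fun i _ hik => by
          rw [Pi.single_eq_of_ne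
            (show k.succ ≠ i.succ from fun h => hik (Fin.succ_injective _ h).symm), mul_zero])
        (by simp)]
      simp [Fin.cons_succ]
      ring

lemma w_li (hd : ∀ i, d i ≠ 0) : LinearIndependent ℝ (w g d) := by
  rw [Fintype.linearIndependent_iff]
  intro c hc
  have h := coord_sum g d c
  rw [hc] at h
  have h0 : c 0 = 0 := by
    have := congrFun h.symm 0
    simpa using this
  intro j
  induction j using Fin.cases with
  | zero => exact h0
  | succ j =>
      have := congrFun h.symm j.succ
      simp only [Fin.cons_succ, h0, zero_mul, sub_zero] at this
      simpa using this

lemma quad_arrow (B : Matrix (Fin (N + 1)) (Fin (N + 1)) ℝ)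
    (hB00 : B 0 0 = 0)
    (hB0i : ∀ i : Fin N, B 0 i.succ = g i)
    (hBi0 : ∀ i : Fin N, B i.succ 0 = g i)
    (hBii : ∀ i : Fin N, B i.succ i.succ = d i)
    (hBoff : ∀ i j : Fin N, i ≠ j → B i.succ j.succ = 0)
    (x : Fin (N+1) → ℝ) :
    x ⬝ᵥ (B *ᵥ x) = 2 * x 0 * (∑ i, g i * x i.succ) + ∑ i, d i * (x i.succ)^2 := by
  have hmv0 : (B *ᵥ x) 0 = ∑ i, g i * x i.succ := by
    show (fun k => B 0 k) ⬝ᵥ x = _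
    rw [dotProduct, Fin.sum_univ_succ, hB00]
    simp only [hB0i]
    ring
  have hmvs : ∀ j : Fin N, (B *ᵥ x) j.succ = g j * x 0 + d j * x j.succ := by
    intro j
    show (fun k => B j.succ k) ⬝ᵥ x = _
    rw [dotProduct, Fin.sum_univ_succ, hBi0]
    rw [Finset.sum_eq_single j (fun i _ hij => by rw [hBoff j i (Ne.symm hij), zero_mul])
      (by simp), hBii]
  rw [dotProduct, Fin.sum_univ_succ, hmv0]
  simp only [hmvs]
  rw [show ∑ i : Fin N, x i.succ * (g i * x 0 + d i * x i.succ)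
      = x 0 * (∑ i, g i * x i.succ) + ∑ i, d i * (x i.succ)^2 by
    rw [Finset.mul_sum, ← Finset.sum_add_distrib]
    exact Finset.sum_congr rfl fun i _ => by ring]
  ring

lemma quad_combo (hd : ∀ i, d i ≠ 0)
    (B : Matrix (Fin (N + 1)) (Fin (N + 1)) ℝ)
    (hB00 : B 0 0 = 0)
    (hB0i : ∀ i : Fin N, B 0 i.succ = g i)
    (hBi0 : ∀ i : Fin N, B i.succ 0 = g i)
    (hBii : ∀ i : Fin N, B i.succ i.succ = d i)
    (hBoff : ∀ i j : Fin N, i ≠ j → B i.succ j.succ = 0)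
    (c : Fin (N+1) → ℝ) :
    ((∑ j, c j • w g d j : EuclideanSpace ℝ (Fin (N+1))) : Fin (N+1) → ℝ) ⬝ᵥ
      (B *ᵥ ((∑ j, c j • w g d j : EuclideanSpace ℝ (Fin (N+1))) : Fin (N+1) → ℝ))
      = (-∑ i, g i ^ 2 / d i) * (c 0)^2 + ∑ i, d i * (c i.succ)^2 := by
  rw [quad_arrow g d B hB00 hB0i hBi0 hBii hBoff, coord_sum]
  simp only [Fin.cons_zero, Fin.cons_succ]
  rw [show ∑ i : Fin N, g i * (c i.succ - c 0 * (g i / d i))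
      = (∑ i, g i * c i.succ) - c 0 * ∑ i, g i ^2 / d i by
    rw [Finset.mul_sum, ← Finset.sum_sub_distrib]
    refine Finset.sum_congr rfl fun i _ => ?_
    field_simp]
  rw [show ∑ i : Fin N, d i * (c i.succ - c 0 * (g i / d i))^2
      = ∑ i, (d i * (c i.succ)^2 - 2 * (g i * c i.succ) * c 0 + g i ^2 / d i * (c 0)^2) by
    refine Finset.sum_congr rfl fun i _ => ?_
    have := hd i
    field_simp
    ring]
  rw [Finset.sum_add_distrib, Finset.sum_sub_distrib,
    show ∑ x : Fin N, 2 * (g x * c x.succ) * c 0 = 2 * (∑ i, g i * c i.succ) * c 0 by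
      rw [← Finset.sum_mul, ← Finset.mul_sum],
    show ∑ x : Fin N, g x ^ 2 / d x * c 0 ^ 2 = (∑ x, g x ^ 2 / d x) * c 0 ^ 2 by
      rw [← Finset.sum_mul]]
  ring

end Stmt16Aux

open Finset Module Stmt16Aux in
/-- **Signature of the arrowhead Hessian.**
Let `B` be the real symmetric `(N+1) × (N+1)` arrowhead matrix with zero `(0,0)`-entry, first
row/column `g(i) ≠ 0`, diagonal `d(i) ≠ 0` and all other entries zero, and set
`q = −∑ g(i)²/d(i) ≠ 0`. Then the number of positive eigenvalues of `B` (with multiplicity)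
equals `#{i : d(i) > 0} + 1` if `q > 0`, and `#{i : d(i) > 0}` if `q < 0`. -/
theorem stmt16
    (N : ℕ) (hN : 1 ≤ N)
    (g d : Fin N → ℝ)
    (hg : ∀ i, g i ≠ 0) (hd : ∀ i, d i ≠ 0)
    (B : Matrix (Fin (N + 1)) (Fin (N + 1)) ℝ)
    (hB00 : B 0 0 = 0)
    (hB0i : ∀ i : Fin N, B 0 i.succ = g i)
    (hBi0 : ∀ i : Fin N, B i.succ 0 = g i)
    (hBii : ∀ i : Fin N, B i.succ i.succ = d i)
    (hBoff : ∀ i j : Fin N, i ≠ j → B i.succ j.succ = 0)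
    (hHerm : B.IsHermitian)
    (q : ℝ) (hq : q = -∑ i : Fin N, g i ^ 2 / d i) (hq0 : q ≠ 0) :
    (0 < q →
      (Finset.univ.filter fun j : Fin (N + 1) => 0 < hHerm.eigenvalues j).card
        = (Finset.univ.filter fun i : Fin N => 0 < d i).card + 1) ∧
    (q < 0 →
      (Finset.univ.filter fun j : Fin (N + 1) => 0 < hHerm.eigenvalues j).card
        = (Finset.univ.filter fun i : Fin N => 0 < d i).card) := by
  classical
  have li := w_li g d hd
  let bw : Basis (Fin (N+1)) ℝ (EuclideanSpace ℝ (Fin (N+1))) :=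
    basisOfLinearIndependentOfCardEqFinrank li (by simp)
  have hbw : ⇑bw = w g d := coe_basisOfLinearIndependentOfCardEqFinrank _ _
  set T : Finset (Fin (N+1)) :=
    (Finset.univ.filter fun i : Fin N => 0 < d i).image Fin.succ with hT
  set SV : Finset (Fin (N+1)) := if 0 < q then insert 0 T else T with hSV
  have h0T : (0 : Fin (N+1)) ∉ T := by
    simp only [hT, Finset.mem_image]
    rintro ⟨i, -, hi⟩
    exact Fin.succ_ne_zero i hi
  have hsuccT : ∀ i : Fin N, (i.succ ∈ T ↔ 0 < d i) := by
    intro i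
    simp only [hT, Finset.mem_image, Finset.mem_filter, Finset.mem_univ, true_and]
    constructor
    · rintro ⟨a, ha, haeq⟩
      rwa [Fin.succ_injective _ haeq] at ha
    · exact fun h => ⟨i, h, rfl⟩
  have h0SV : ((0 : Fin (N+1)) ∈ SV ↔ 0 < q) := by
    rw [hSV]
    by_cases hqs : 0 < q
    · simp [hqs]
    · simp [hqs, h0T]
  have hsuccSV : ∀ i : Fin N, (i.succ ∈ SV ↔ 0 < d i) := by
    intro i
    rw [hSV]
    by_cases hqs : 0 < q
    · rw [if_pos hqs, Finset.mem_insert]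
      simp [Fin.succ_ne_zero i, hsuccT i]
    · rw [if_neg hqs]; exact hsuccT i
  set V : Submodule ℝ (EuclideanSpace ℝ (Fin (N+1))) :=
    Submodule.span ℝ (w g d '' (SV : Set (Fin (N+1)))) with hV
  set W : Submodule ℝ (EuclideanSpace ℝ (Fin (N+1))) :=
    Submodule.span ℝ (w g d '' ((SVᶜ : Finset (Fin (N+1))) : Set (Fin (N+1)))) with hW
  have hrankV : finrank ℝ V = SV.card := finrank_span_image li _
  have hdim : finrank ℝ V + finrank ℝ W = N + 1 := by
    rw [hrankV, hW, finrank_span_image li, Finset.card_add_card_compl]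
    simp
  have hsupp : ∀ (S : Finset (Fin (N+1))) (x : EuclideanSpace ℝ (Fin (N+1))),
      x ∈ Submodule.span ℝ (w g d '' (S : Set (Fin (N+1)))) →
      ∀ j ∉ S, bw.repr x j = 0 := by
    intro S x hx j hj
    rw [← hbw] at hx
    have hsub := bw.mem_span_image.mp hx
    by_contra h0
    exact hj (hsub (Finsupp.mem_support_iff.mpr h0))
  have hquad : ∀ x : EuclideanSpace ℝ (Fin (N+1)),
      (x : Fin (N+1) → ℝ) ⬝ᵥ (B *ᵥ x)
        = q * (bw.repr x 0)^2 + ∑ i : Fin N, d i * (bw.repr x i.succ)^2 := by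
    intro x
    have hx : (∑ j, bw.repr x j • w g d j : EuclideanSpace ℝ (Fin (N+1))) = x := by
      rw [← hbw]; exact bw.sum_repr x
    have hc := quad_combo g d hd B hB00 hB0i hBi0 hBii hBoff (fun j => bw.repr x j)
    rw [hx] at hc
    rw [hc, hq]
  have hex : ∀ x : EuclideanSpace ℝ (Fin (N+1)), x ≠ 0 → ∃ j, bw.repr x j ≠ 0 := by
    intro x hx0
    by_contra h0
    push_neg at h0
    apply hx0
    have : bw.repr x = 0 := Finsupp.ext h0
    simpa using congrArg bw.repr.symm this
  have hVpos : ∀ x : EuclideanSpace ℝ (Fin (N+1)), x ∈ V → x ≠ 0 →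
      0 < (x : Fin (N+1) → ℝ) ⬝ᵥ (B *ᵥ x) := by
    intro x hxV hx0
    rw [hquad x]
    have hc0 : 0 ≤ q * (bw.repr x 0)^2 := by
      by_cases h0 : (0 : Fin (N+1)) ∈ SV
      · exact mul_nonneg (h0SV.mp h0).le (sq_nonneg _)
      · rw [hsupp SV x hxV 0 h0]; simp
    have hci : ∀ i : Fin N, 0 ≤ d i * (bw.repr x i.succ)^2 := by
      intro i
      by_cases h0 : i.succ ∈ SV
      · exact mul_nonneg ((hsuccSV i).mp h0).le (sq_nonneg _)
      · rw [hsupp SV x hxV i.succ h0]; simp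
    obtain ⟨j, hj⟩ := hex x hx0
    have hjSV : j ∈ SV := by
      by_contra hjn; exact hj (hsupp SV x hxV j hjn)
    induction j using Fin.cases with
    | zero =>
        refine add_pos_of_pos_of_nonneg ?_ (Finset.sum_nonneg fun i _ => hci i)
        exact mul_pos (h0SV.mp hjSV) (by positivity)
    | succ j =>
        refine add_pos_of_nonneg_of_pos hc0 ?_
        refine Finset.sum_pos' (fun i _ => hci i) ⟨j, Finset.mem_univ j, ?_⟩
        exact mul_pos ((hsuccSV j).mp hjSV) (by positivity)
  have hWneg : ∀ x : EuclideanSpace ℝ (Fin (N+1)), x ∈ W →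
      (x : Fin (N+1) → ℝ) ⬝ᵥ (B *ᵥ x) ≤ 0 := by
    intro x hxW
    rw [hquad x]
    have hsx : ∀ j ∈ SV, bw.repr x j = 0 := by
      intro j hj
      exact hsupp SVᶜ x hxW j (by simpa using hj)
    have hc0 : q * (bw.repr x 0)^2 ≤ 0 := by
      by_cases h0 : (0 : Fin (N+1)) ∈ SV
      · rw [hsx 0 h0]; simp
      · have : ¬ 0 < q := fun h => h0 (h0SV.mpr h)
        exact mul_nonpos_of_nonpos_of_nonneg (le_of_not_gt this) (sq_nonneg _)
    have hci : ∀ i ∈ Finset.univ, d i * (bw.repr x i.succ)^2 ≤ 0 := by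
      intro i _
      by_cases h0 : i.succ ∈ SV
      · rw [hsx i.succ h0]; simp
      · have : ¬ 0 < d i := fun h => h0 ((hsuccSV i).mpr h)
        exact mul_nonpos_of_nonpos_of_nonneg (le_of_not_gt this) (sq_nonneg _)
    exact add_nonpos hc0 (Finset.sum_nonpos hci)
  have key := inertia hHerm V W hdim hVpos hWneg
  have hTcard : T.card = (Finset.univ.filter fun i : Fin N => 0 < d i).card := by
    rw [hT]; exact Finset.card_image_of_injective _ (Fin.succ_injective N)
  constructor
  · intro hqpos
    rw [key, hrankV, hSV, if_pos hqpos, Finset.card_insert_of_notMem h0T, hTcard]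
  · intro hqneg
    rw [key, hrankV, hSV, if_neg (asymm hqneg), hTcard]
end
end

section
/- Let E be a finite-dimensional real inner product space and H : E → E a self-adjoint linear operator. Let V be the sum of the eigenspaces of H corresponding to strictly positive eigenvalues and let P be the orthogonal projection onto V. Then for every b ∈ E, the function a ↦ ⟪a − b, H(a − b)⟫ on V attains its minimum over V at a = P(b), and the minimum value equals ⟪(I − P)b, H((I − P)b)⟫, which is ≤ 0. In particular, the subspace V is E-maximal for the quadratic Bregman cost c(a,b) = ⟪a − b, H(a − b)⟫ (i.e., inf_{a ∈ V} c(a,b) ≤ 0 for every b ∈ E), and the Bregman projection onto V coincides with the orthogonal projection P. -/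
open scoped RealInnerProductSpace

/-- **The positive eigenspace is maximal and the Bregman projection is the
orthogonal projection.** Let `H` be a self-adjoint operator on a finite-dimensional real inner
product space `E`, `V` the sum of the eigenspaces of `H` for strictly positive eigenvalues,
and `P` the orthogonal projection onto `V`. Then for every `b`, the quadratic Bregman cost
`a ↦ ⟪a − b, H(a − b)⟫` attains its minimum over `V` at `a = P b` (which lies in `V`), and
the minimum value equals `⟪(I − P) b, H ((I − P) b)⟫ ≤ 0`; in particular
`inf_{a ∈ V} ⟪a − b, H (a − b)⟫ ≤ 0` for every `b ∈ E` (E-maximality of `V`). -/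
theorem stmt17
    {E : Type*} [NormedAddCommGroup E] [InnerProductSpace ℝ E] [FiniteDimensional ℝ E]
    (H : E →ₗ[ℝ] E) (hsym : H.IsSymmetric)
    (V : Submodule ℝ E)
    (hV : V = ⨆ (μ : ℝ) (_ : 0 < μ), Module.End.eigenspace (H : Module.End ℝ E) μ)
    (P : E → E)
    (hP : ∀ x : E, P x = (Submodule.orthogonalProjection V x : E)) :
    ∀ b : E,
      P b ∈ V ∧
      (∀ a ∈ V, ⟪P b - b, H (P b - b)⟫ ≤ ⟪a - b, H (a - b)⟫) ∧
      ⟪P b - b, H (P b - b)⟫ = ⟪b - P b, H (b - P b)⟫ ∧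
      ⟪b - P b, H (b - P b)⟫ ≤ 0 := by
  classical
  obtain ⟨n, hn⟩ : ∃ n, Module.finrank ℝ E = n := ⟨_, rfl⟩
  set e := hsym.eigenvectorBasis hn with he
  set μ := hsym.eigenvalues hn with hμ
  have happly : ∀ i, H (e i) = μ i • e i := fun i => hsym.apply_eigenvectorBasis hn i
  have hmem : ∀ i, e i ∈ Module.End.eigenspace (H : Module.End ℝ E) (μ i) :=
    fun i => (hsym.hasEigenvector_eigenvectorBasis hn i).1
  -- positive eigenvectors lie in V
  have heV : ∀ i, 0 < μ i → e i ∈ V := by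
    intro i hi
    rw [hV]
    exact le_iSup₂ (f := fun (ν : ℝ) (_ : 0 < ν) =>
      Module.End.eigenspace (H : Module.End ℝ E) ν) (μ i) hi (hmem i)
  -- nonpositive eigenvectors lie in Vᗮ
  have heVp : ∀ i, μ i ≤ 0 → e i ∈ Vᗮ := by
    intro i hi
    have hle : V ≤ (ℝ ∙ e i)ᗮ := by
      rw [hV]
      refine iSup₂_le fun ν hν x hx => ?_
      rw [Submodule.mem_orthogonal]
      intro u hu
      obtain ⟨c, rfl⟩ := Submodule.mem_span_singleton.mp hu
      have : ⟪e i, x⟫ = 0 := by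
        have := hsym.orthogonalFamily_eigenspaces (v := ⟨e i, hmem i⟩) (w := ⟨x, hx⟩)
          (fun h : μ i = ν => absurd (h ▸ hν) (not_lt.mpr hi))
        simpa using this
      simp [inner_smul_left, this]
    have := Submodule.orthogonal_le hle
    exact this (Submodule.le_orthogonal_orthogonal _ (Submodule.mem_span_singleton_self _))
  -- quadratic form expansion
  have hquad : ∀ x : E, ⟪x, H x⟫ = ∑ i, μ i * ⟪e i, x⟫ ^ 2 := by
    intro x
    rw [← e.sum_inner_mul_inner x (H x)]
    refine Finset.sum_congr rfl fun i _ => ?_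
    have : ⟪e i, H x⟫ = μ i * ⟪e i, x⟫ := by
      rw [← hsym (e i) x, happly, inner_smul_left]
      simp
    rw [this, real_inner_comm x (e i)]
    ring
  -- H is nonneg on V
  have hpos : ∀ v ∈ V, 0 ≤ ⟪v, H v⟫ := by
    intro v hv
    rw [hquad]
    refine Finset.sum_nonneg fun i _ => ?_
    rcases le_or_gt (μ i) 0 with h | h
    · have : ⟪e i, v⟫ = 0 := by
        rw [real_inner_comm]; exact (Submodule.mem_orthogonal _ _).mp (heVp i h) v hv
      simp [this]
    · positivity
  -- H is nonpos on Vᗮ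
  have hneg : ∀ w ∈ Vᗮ, ⟪w, H w⟫ ≤ 0 := by
    intro w hw
    rw [hquad]
    refine Finset.sum_nonpos fun i _ => ?_
    rcases le_or_gt (μ i) 0 with h | h
    · have : ⟪e i, w⟫ ^ 2 ≥ 0 := sq_nonneg _
      nlinarith
    · have : ⟪e i, w⟫ = 0 := by
        exact (Submodule.mem_orthogonal _ _).mp hw (e i) (heV i h)
      simp [this]
  -- invariance of V
  have hmapV : ∀ x ∈ V, H x ∈ V := by
    intro x hx
    have : V ≤ V.comap H := by
      conv_lhs => rw [hV]
      refine iSup₂_le fun ν hν y hy => ?_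
      have hy' : (H : Module.End ℝ E) y = ν • y := Module.End.mem_eigenspace_iff.mp hy
      have hyV : y ∈ V := by
        rw [hV]
        exact le_iSup₂ (f := fun (ν : ℝ) (_ : 0 < ν) =>
          Module.End.eigenspace (H : Module.End ℝ E) ν) ν hν hy
      simp only [Submodule.mem_comap]
      rw [show H y = ν • y from hy']
      exact V.smul_mem ν hyV
    exact this hx
  -- invariance of Vᗮ
  have hmapVp : ∀ w ∈ Vᗮ, H w ∈ Vᗮ := by
    intro w hw
    rw [Submodule.mem_orthogonal]
    intro u hu
    rw [← hsym u w]
    exact (Submodule.mem_orthogonal _ _).mp hw (H u) (hmapV u hu)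
  intro b
  have hPbV : P b ∈ V := by rw [hP]; exact (Submodule.orthogonalProjection V b).2
  have hwmem : b - P b ∈ Vᗮ := by
    rw [hP]; exact V.sub_starProjection_mem_orthogonal b
  have hsymm_eq : ⟪P b - b, H (P b - b)⟫ = ⟪b - P b, H (b - P b)⟫ := by
    have : P b - b = -(b - P b) := by abel
    rw [this, map_neg, inner_neg_neg]
  refine ⟨hPbV, ?_, hsymm_eq, hneg _ hwmem⟩
  intro a ha
  have hvV : a - P b ∈ V := V.sub_mem ha hPbV
  have hdecomp : a - b = (a - P b) + (P b - b) := by abel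
  have hcross1 : ⟪a - P b, H (P b - b)⟫ = 0 := by
    have hHw : H (P b - b) ∈ Vᗮ := by
      have : P b - b = -(b - P b) := by abel
      rw [this, map_neg]
      exact Vᗮ.neg_mem (hmapVp _ hwmem)
    exact ((Submodule.mem_orthogonal _ _).mp hHw _ hvV)
  have hcross2 : ⟪P b - b, H (a - P b)⟫ = 0 := by
    have hw' : P b - b ∈ Vᗮ := by
      have : P b - b = -(b - P b) := by abel
      rw [this]; exact Vᗮ.neg_mem hwmem
    rw [real_inner_comm]
    exact ((Submodule.mem_orthogonal _ _).mp hw' _ (hmapV _ hvV))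
  have hexp : ⟪a - b, H (a - b)⟫
      = ⟪a - P b, H (a - P b)⟫ + ⟪P b - b, H (P b - b)⟫ := by
    rw [hdecomp, map_add, inner_add_left, inner_add_right, inner_add_right,
      hcross1, hcross2]
    ring
  have := hpos _ hvV
  linarith [hexp]
end

section
/- Let (Ω, 𝓕, μ) be a probability space, E a finite-dimensional real inner product space, W : E × Ω → ℝ and G : E × Ω → E measurable, a⋆ : Ω → E measurable with G(a⋆(ω), ω) = 0 for all ω, a : Ω → E measurable, and x : E → E Borel measurable with x ∘ a bounded. Assume ω ↦ G(a(ω), ω) is μ-integrable and ω ↦ W(a(ω), ω) − W(a⋆(ω), ω) is μ-integrable, and that the conditional expectation of ω ↦ G(a(ω), ω) given the σ-algebra generated by a vanishes μ-a.e. Then ∫ ⟪x(a(ω)), G(a(ω), ω)⟫ dμ(ω) = 0, and consequently ∫ (W(a(ω), ω) − W(a⋆(ω), ω)) dμ(ω) = −∫ c(a(ω), ω) dμ(ω), where c(a, ω) = W(a⋆(ω), ω) − W(a, ω) + ⟪x(a), G(a, ω)⟫. -/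
open MeasureTheory
open scoped RealInnerProductSpace


open scoped RealInnerProductSpace in
lemma aux_inner_integral_zero {Ω : Type*} {m m0 : MeasurableSpace Ω} (hm : m ≤ m0)
    (μ : @MeasureTheory.Measure Ω m0) [IsFiniteMeasure μ]
    {E : Type*} [NormedAddCommGroup E] [InnerProductSpace ℝ E] [FiniteDimensional ℝ E]
    (f g : Ω → E) (hf : StronglyMeasurable[m] f) (C : ℝ) (hfC : ∀ ω, ‖f ω‖ ≤ C)
    (hgint : Integrable g μ)
    (hset : ∀ s : Set Ω, MeasurableSet[m] s → ∫ ω in s, g ω ∂μ = 0) :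
    Integrable (fun ω => ⟪f ω, g ω⟫) μ ∧ ∫ ω, ⟪f ω, g ω⟫ ∂μ = 0 := by
  haveI : IsFiniteMeasure (μ.trim hm) := isFiniteMeasure_trim hm
  let b := stdOrthonormalBasis ℝ E
  have hfmeas : ∀ i, StronglyMeasurable[m] (fun ω => ⟪f ω, b i⟫) :=
    fun i => hf.inner stronglyMeasurable_const
  have hgint' : ∀ i, Integrable (fun ω => ⟪(b i : E), g ω⟫) μ :=
    fun i => hgint.const_inner _
  have hfbd : ∀ i, ∀ ω, ‖⟪f ω, b i⟫‖ ≤ C * ‖(b i : E)‖ := fun i ω =>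
    (norm_inner_le_norm _ _).trans (mul_le_mul_of_nonneg_right (hfC ω) (norm_nonneg _))
  have hgcond : ∀ i, (μ[(fun ω => ⟪(b i : E), g ω⟫) | m]) =ᵐ[μ] 0 := by
    intro i
    refine (ae_eq_condExp_of_forall_setIntegral_eq hm (hgint' i) ?_ ?_ ?_).symm
    · intro s _ _; exact integrableOn_zero
    · intro s hs _
      rw [integral_inner (hgint.integrableOn) (b i), hset s hs]
      simp
    · exact StronglyMeasurable.aestronglyMeasurable stronglyMeasurable_zero
  have hprodint : ∀ i, Integrable (fun ω => ⟪f ω, b i⟫ * ⟪(b i : E), g ω⟫) μ := by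
    intro i
    exact Integrable.bdd_mul (hgint' i) ((hfmeas i).mono hm).aestronglyMeasurable
      (Filter.Eventually.of_forall (hfbd i))
  have hcoord : ∀ i, ∫ ω, ⟪f ω, b i⟫ * ⟪(b i : E), g ω⟫ ∂μ = 0 := by
    intro i
    rw [← integral_condExp (μ := μ) (f := fun ω => ⟪f ω, b i⟫ * ⟪(b i : E), g ω⟫) hm]
    have hpull := condExp_stronglyMeasurable_mul_of_bound hm (hfmeas i) (hgint' i)
      (C * ‖(b i : E)‖) (Filter.Eventually.of_forall (hfbd i))
    have hz : (μ[(fun ω => ⟪f ω, b i⟫ * ⟪(b i : E), g ω⟫) | m]) =ᵐ[μ] (0 : Ω → ℝ) := by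
      refine hpull.trans ?_
      filter_upwards [hgcond i] with ω hω
      simp only [Pi.mul_apply, hω, Pi.zero_apply, mul_zero]
    rw [integral_congr_ae hz]
    simp
  have hinner_eq : (fun ω => ⟪f ω, g ω⟫) =
      fun ω => ∑ i, ⟪f ω, b i⟫ * ⟪(b i : E), g ω⟫ :=
    funext fun ω => (b.sum_inner_mul_inner _ _).symm
  constructor
  · rw [hinner_eq]
    exact integrable_finset_sum _ fun i _ => hprodint i
  · rw [hinner_eq, integral_finset_sum _ fun i _ => hprodint i]
    simp [hcoord]

/-- **Gain from concealing information equals minus the expected transport cost.**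
Let `a : Ω → E` be a policy whose induced actions satisfy the receivers' optimality conditions,
i.e. the conditional expectation of `ω ↦ G (a ω, ω)` given `σ(a)` vanishes a.e., let `astar` be
the full-revelation action (`G (astar ω, ω) = 0`), and let `x : E → E` be Borel shadow prices
with `x ∘ a` bounded. Then `∫ ⟪x (a ω), G (a ω, ω)⟫ ∂μ = 0`, and hence
`∫ (W (a ω, ω) − W (astar ω, ω)) ∂μ = −∫ c (a ω, ω) ∂μ` for the information-transport cost
`c (a, ω) = W (astar ω, ω) − W (a, ω) + ⟪x a, G (a, ω)⟫`. -/
theorem stmt18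
    {Ω : Type*} [MeasurableSpace Ω] (μ : Measure Ω) [IsProbabilityMeasure μ]
    {E : Type*} [NormedAddCommGroup E] [InnerProductSpace ℝ E] [FiniteDimensional ℝ E]
    [MeasurableSpace E] [BorelSpace E]
    (W : E × Ω → ℝ) (hW : Measurable W)
    (G : E × Ω → E) (hG : Measurable G)
    (astar : Ω → E) (hastar : Measurable astar)
    (hzero : ∀ ω : Ω, G (astar ω, ω) = 0)
    (a : Ω → E) (ha : Measurable a)
    (x : E → E) (hx : Measurable x)
    (hxbdd : ∃ C : ℝ, ∀ ω : Ω, ‖x (a ω)‖ ≤ C)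
    (hGint : Integrable (fun ω => G (a ω, ω)) μ)
    (hWint : Integrable (fun ω => W (a ω, ω) - W (astar ω, ω)) μ)
    (hcond : μ[(fun ω => G (a ω, ω)) | MeasurableSpace.comap a inferInstance]
      =ᵐ[μ] 0) :
    (∫ ω, ⟪x (a ω), G (a ω, ω)⟫ ∂μ = 0) ∧
    ∫ ω, (W (a ω, ω) - W (astar ω, ω)) ∂μ
      = -∫ ω, (W (astar ω, ω) - W (a ω, ω) + ⟪x (a ω), G (a ω, ω)⟫) ∂μ := by
  obtain ⟨C, hC⟩ := hxbdd
  have hm : MeasurableSpace.comap a inferInstance ≤ ‹MeasurableSpace Ω› :=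
    measurable_iff_comap_le.mp ha
  haveI : IsFiniteMeasure (μ.trim hm) := isFiniteMeasure_trim hm
  have ham : Measurable[MeasurableSpace.comap a inferInstance] a :=
    measurable_iff_comap_le.mpr le_rfl
  have hfm : StronglyMeasurable[MeasurableSpace.comap a inferInstance]
      (fun ω => x (a ω)) := (hx.comp ham).stronglyMeasurable
  have hset : ∀ s : Set Ω, MeasurableSet[MeasurableSpace.comap a inferInstance] s →
      ∫ ω in s, G (a ω, ω) ∂μ = 0 := by
    intro s hs
    rw [← setIntegral_condExp hm hGint hs]
    calc ∫ ω in s, (μ[(fun ω => G (a ω, ω)) | MeasurableSpace.comap a inferInstance]) ω ∂μ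
        = ∫ ω in s, (0 : Ω → E) ω ∂μ :=
          setIntegral_congr_ae (hm s hs) (hcond.mono fun ω h _ => h)
      _ = 0 := by simp
  obtain ⟨hinnerint, h1⟩ := aux_inner_integral_zero hm μ (fun ω => x (a ω))
    (fun ω => G (a ω, ω)) hfm C hC hGint hset
  refine ⟨h1, ?_⟩
  have hadd : ∫ ω, (W (astar ω, ω) - W (a ω, ω) + ⟪x (a ω), G (a ω, ω)⟫) ∂μ
      = ∫ ω, (W (astar ω, ω) - W (a ω, ω)) ∂μ + ∫ ω, ⟪x (a ω), G (a ω, ω)⟫ ∂μ := by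
    have hneg : Integrable (fun ω => W (astar ω, ω) - W (a ω, ω)) μ := by
      exact hWint.neg.congr (Filter.Eventually.of_forall fun ω => neg_sub _ _)
    exact integral_add hneg hinnerint
  rw [hadd, h1, add_zero]
  have h2 : ∫ ω, (W (astar ω, ω) - W (a ω, ω)) ∂μ
      = -∫ ω, (W (a ω, ω) - W (astar ω, ω)) ∂μ := by
    rw [← integral_neg]
    congr 1
    funext ω
    ring
  rw [h2, neg_neg]
end
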